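/- arXiv:1807.09727 — 5 statements merged into one kernel-verified Lean document; each statement's English description precedes it below -/
import Mathlib

section
/- Let Ω ⊆ ℝ^N (N ≥ 3) be an open set, let b, c : Ω → ℝ be continuous with c ≥ 0, and suppose u ∈ C²(Ω) is a positive classical supersolution of −Δu + b(x)|∇u| = c(x)u on Ω, i.e. u > 0 and −Δu(x) + b(x)|∇u(x)| ≥ c(x)u(x) for all x ∈ Ω. Then for every t > 1/2 and every test function φ ∈ C_c^∞(Ω) we have ∫_Ω c φ² dx ≤ 2t ∫_Ω |∇φ|² dx + (t/(2(2t−1))) ∫_Ω b² φ² dx. -/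
open MeasureTheory

open Set


theorem div_int_zero_pi {n : ℕ} (f : Fin (n+1) → (Fin (n+1) → ℝ) → ℝ)
    (hd : ∀ i x, DifferentiableAt ℝ (f i) x)
    (hsupp : ∀ i, HasCompactSupport (f i))
    (hcont : Continuous (fun x => ∑ i, fderiv ℝ (f i) x (Pi.single i 1))) :
    ∫ x, ∑ i, fderiv ℝ (f i) x (Pi.single i 1) = 0 := by
  set D : (Fin (n+1) → ℝ) → ℝ := fun x => ∑ i, fderiv ℝ (f i) x (Pi.single i 1) with hD
  set K : Set (Fin (n+1) → ℝ) := ⋃ i, tsupport (f i) with hK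
  have hfK : ∀ i, ∀ x ∉ K, f i x = 0 := by
    intro i x hx
    apply image_eq_zero_of_notMem_tsupport
    exact fun h => hx (mem_iUnion.2 ⟨i, h⟩)
  have hDx : ∀ x ∉ K, D x = 0 := by
    intro x hxK
    simp only [hK, mem_iUnion, not_exists] at hxK
    exact Finset.sum_eq_zero fun i _ => by
      rw [fderiv_of_notMem_tsupport ℝ (hxK i)]; rfl
  have hKc : IsCompact K := isCompact_iUnion fun i => hsupp i
  obtain ⟨R, hR⟩ := hKc.isBounded.subset_closedBall 0
  set S : ℝ := max R 0 with hS
  have hRsub : ∀ x ∈ K, ∀ i, |x i| ≤ S := by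
    intro x hx i
    have := hR hx
    simp only [Metric.mem_closedBall, dist_zero_right] at this
    exact ((norm_le_pi_norm x i).trans this).trans (le_max_left _ _)
  set a : Fin (n+1) → ℝ := fun _ => -(S+1) with ha
  set b : Fin (n+1) → ℝ := fun _ => (S+1) with hb
  have hS0 : 0 ≤ S := le_max_right _ _
  have hab : a ≤ b := fun i => by simp [ha, hb]; linarith
  have key2 := integral_divergence_of_hasFDerivAt_off_countable' a b hab f
      (fun i x => fderiv ℝ (f i) x) ∅ countable_empty
      (fun i => (Differentiable.continuous (fun x => hd i x)).continuousOn)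
      (fun x _ i => (hd i x).hasFDerivAt)
      ((hcont.continuousOn).integrableOn_compact isCompact_Icc)
  -- boundary terms vanish
  have hfaces : ∀ (i : Fin (n+1)) (r : ℝ), |r| = S + 1 →
      ∀ (y : Fin n → ℝ), f i (Fin.insertNth i r y) = 0 := by
    intro i r hr y
    apply hfK
    intro hmem
    have := hRsub _ hmem i
    rw [Fin.insertNth_apply_same] at this
    rw [hr] at this; linarith
  rw [Finset.sum_eq_zero] at key2
  swap
  · intro i _
    have h1 : (fun x : Fin n → ℝ => f i (i.insertNth (b i) x)) = fun _ => 0 :=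
      funext fun y => hfaces i _ (by simp [hb]; linarith) y
    have h2 : (fun x : Fin n → ℝ => f i (i.insertNth (a i) x)) = fun _ => 0 :=
      funext fun y => hfaces i _ (by simp [ha]; rw [abs_of_nonpos (by linarith)]; ring) y
    simp only [h1, h2, integral_zero, sub_zero]
  rw [← key2]
  symm
  apply setIntegral_eq_integral_of_forall_compl_eq_zero
  intro x hx
  apply hDx
  intro hxK
  apply hx
  constructor <;> intro i
  · have := abs_le.1 (hRsub x hxK i); simp only [ha]; linarith [this.1]
  · have := abs_le.1 (hRsub x hxK i); simp only [hb]; linarith [this.2]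

theorem div_int_zero {N : ℕ} (hN : N ≠ 0) (f : Fin N → EuclideanSpace ℝ (Fin N) → ℝ)
    (hd : ∀ i x, DifferentiableAt ℝ (f i) x)
    (hsupp : ∀ i, HasCompactSupport (f i))
    (hcont : Continuous (fun x => ∑ i, fderiv ℝ (f i) x (EuclideanSpace.single i 1))) :
    ∫ x, ∑ i, fderiv ℝ (f i) x (EuclideanSpace.single i 1) = 0 := by
  obtain ⟨n, rfl⟩ := Nat.exists_eq_succ_of_ne_zero hN
  set e := EuclideanSpace.equiv (Fin (n+1)) ℝ with he
  set F : Fin (n+1) → (Fin (n+1) → ℝ) → ℝ := fun i y => f i (e.symm y) with hF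
  have hde : ∀ (y : Fin (n+1) → ℝ), HasFDerivAt (⇑e.symm) (e.symm : (Fin (n+1) → ℝ) →L[ℝ] _) y :=
    fun y => e.symm.hasFDerivAt
  have hdF : ∀ i y, HasFDerivAt (F i)
      ((fderiv ℝ (f i) (e.symm y)).comp (e.symm : (Fin (n+1) → ℝ) →L[ℝ] _)) y :=
    fun i y => ((hd i _).hasFDerivAt).comp y (hde y)
  have hsingle : ∀ i : Fin (n+1), e.symm (Pi.single i 1) = EuclideanSpace.single i 1 := fun i => rfl
  have hfdF : ∀ i y, fderiv ℝ (F i) y (Pi.single i 1)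
      = fderiv ℝ (f i) (e.symm y) (EuclideanSpace.single i 1) := by
    intro i y
    rw [(hdF i y).fderiv]
    simp [hsingle i]
  have := div_int_zero_pi F (fun i y => (hdF i y).differentiableAt)
    (fun i => (hsupp i).comp_homeomorph e.symm.toHomeomorph)
    (by simp only [hfdF]; exact hcont.comp e.symm.continuous)
  simp only [hfdF] at this
  have h2 := MeasurePreserving.integral_comp (μ := volume) (ν := volume)
    (PiLp.volume_preserving_toLp (Fin (n+1)))
    (MeasurableEquiv.toLp 2 (Fin (n+1) → ℝ)).measurableEmbedding
    (fun x => ∑ i, fderiv ℝ (f i) x (EuclideanSpace.single i 1))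
  rw [← h2]
  exact this
lemma quad_bound (t B q Np w : ℝ) (ht : 1/2 < t) (hB : 0 ≤ B) (hq : 0 ≤ q)
    (hNp : 0 ≤ Np) (hw : 0 ≤ w) :
    B * q^2 * w + 2*q*Np*w - q^2*w^2 ≤ 2*t*Np^2 + t/(2*(2*t-1)) * (B^2*q^2) := by
  have ht' : 0 < 2*t - 1 := by linarith
  have hc : (t/(2*(2*t-1))) * (2*(2*t-1)) = t := by rw [div_mul_cancel₀ _ (mul_pos two_pos ht').ne']
  nlinarith [sq_nonneg (q*w - Np - B*q/2), sq_nonneg ((2*t-1)*Np - B*q/2), sq_nonneg (B*q),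
    mul_pos ht' ht', mul_nonneg (mul_nonneg hB hq) hNp]

/-- The Laplacian of a function on Euclidean space. -/
noncomputable def lap {N : ℕ} (f : EuclideanSpace ℝ (Fin N) → ℝ)
    (x : EuclideanSpace ℝ (Fin N)) : ℝ :=
  ∑ i, fderiv ℝ (fun y => fderiv ℝ f y (EuclideanSpace.single i 1)) x (EuclideanSpace.single i 1)

lemma integrableOn_helper {N : ℕ} {Ω K : Set (EuclideanSpace ℝ (Fin N))}
    (hK : IsCompact K) (hKΩ : K ⊆ Ω) (f : EuclideanSpace ℝ (Fin N) → ℝ)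
    (hf : ContinuousOn f Ω) (h0 : ∀ x ∉ K, f x = 0) : IntegrableOn f Ω := by
  have h1 : IntegrableOn f K := (hf.mono hKΩ).integrableOn_compact hK
  have h2 : f = K.indicator f := by
    funext x
    by_cases hx : x ∈ K
    · rw [indicator_of_mem hx]
    · rw [indicator_of_notMem hx, h0 x hx]
  rw [h2]
  exact (h1.integrable_indicator hK.measurableSet).integrableOn

-- gradient basics
lemma fderiv_apply_eq_inner_gradient {N : ℕ} (f : EuclideanSpace ℝ (Fin N) → ℝ)
    (x v : EuclideanSpace ℝ (Fin N)) :
    fderiv ℝ f x v = inner ℝ (gradient f x) v := by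
  rw [gradient, InnerProductSpace.toDual_symm_apply]

lemma gradient_decomp {N : ℕ} (f : EuclideanSpace ℝ (Fin N) → ℝ) (x : EuclideanSpace ℝ (Fin N)) :
    gradient f x = ∑ i, fderiv ℝ f x (EuclideanSpace.single i 1) • EuclideanSpace.single i 1 := by
  have := (EuclideanSpace.basisFun (Fin N) ℝ).sum_repr' (gradient f x)
  rw [← this]
  refine Finset.sum_congr rfl fun i _ => ?_
  rw [fderiv_apply_eq_inner_gradient, EuclideanSpace.basisFun_apply, real_inner_comm]

set_option maxHeartbeats 1000000 in
theorem stmt_3 {N : ℕ} (hN : 3 ≤ N) (Ω : Set (EuclideanSpace ℝ (Fin N))) (hΩ : IsOpen Ω)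
    (b c : EuclideanSpace ℝ (Fin N) → ℝ)
    (hb : ContinuousOn b Ω) (hc : ContinuousOn c Ω) (hc0 : ∀ x ∈ Ω, 0 ≤ c x)
    (u : EuclideanSpace ℝ (Fin N) → ℝ) (hu : ContDiffOn ℝ 2 u Ω)
    (hupos : ∀ x ∈ Ω, 0 < u x)
    (hsuper : ∀ x ∈ Ω, c x * u x ≤ -(lap u x) + b x * ‖gradient u x‖)
    (t : ℝ) (ht : 1 / 2 < t)
    (φ : EuclideanSpace ℝ (Fin N) → ℝ)
    (hφ : ContDiff ℝ (⊤ : ℕ∞) φ) (hφc : HasCompactSupport φ) (hφΩ : tsupport φ ⊆ Ω) :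
    (∫ x in Ω, c x * (φ x) ^ 2) ≤
      2 * t * (∫ x in Ω, ‖gradient φ x‖ ^ 2) +
        t / (2 * (2 * t - 1)) * (∫ x in Ω, (b x) ^ 2 * (φ x) ^ 2) := by
  have hNne : N ≠ 0 := by omega
  have hKΩ : tsupport φ ⊆ Ω := hφΩ
  have hKc : IsCompact (tsupport φ) := hφc
  have hmeasΩ : MeasurableSet Ω := hΩ.measurableSet
  have hφ1 : ContDiff ℝ 1 φ := hφ.of_le (by exact_mod_cast le_top)
  have hune : ∀ x ∈ Ω, u x ≠ 0 := fun x hx => (hupos x hx).ne'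
  set ψ : EuclideanSpace ℝ (Fin N) → ℝ := fun x => (φ x)^2 * (u x)⁻¹ with hψdef
  set g : Fin N → EuclideanSpace ℝ (Fin N) → ℝ :=
    fun i x => fderiv ℝ u x (EuclideanSpace.single i 1) with hgdef
  set f : Fin N → EuclideanSpace ℝ (Fin N) → ℝ := fun i x => ψ x * g i x with hfdef
  have hψ0 : ∀ x ∉ tsupport φ, ψ x = 0 := fun x hx => by
    simp [hψdef, image_eq_zero_of_notMem_tsupport hx]
  have hψev : ∀ x ∉ tsupport φ, ψ =ᶠ[nhds x] (fun _ => 0) := by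
    intro x hx
    filter_upwards [(isClosed_tsupport φ).isOpen_compl.mem_nhds hx] with y hy
    exact hψ0 y hy
  -- smoothness on Ω
  have hu1 : ContDiffOn ℝ 1 u Ω := hu.of_le one_le_two
  have hfdu : ContDiffOn ℝ 1 (fderiv ℝ u) Ω := hu.fderiv_of_isOpen hΩ (by norm_num)
  have hg1 : ∀ i, ContDiffOn ℝ 1 (g i) Ω := fun i => by
    have := ((ContinuousLinearMap.apply ℝ ℝ
      (EuclideanSpace.single (𝕜 := ℝ) i 1)).contDiff (n := 1)).comp_contDiffOn hfdu
    exact this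
  have hψ1 : ContDiffOn ℝ 1 ψ Ω := ((hφ1.pow 2).contDiffOn).mul (hu1.inv hune)
  have hf1 : ∀ i, ContDiffOn ℝ 1 (f i) Ω := fun i => hψ1.mul (hg1 i)
  have hdiffOn : ∀ (h : EuclideanSpace ℝ (Fin N) → ℝ), ContDiffOn ℝ 1 h Ω →
      ∀ x ∈ Ω, DifferentiableAt ℝ h x :=
    fun h hh x hx => (hh.differentiableOn one_ne_zero).differentiableAt (hΩ.mem_nhds hx)
  -- global differentiability of f i
  have hfev : ∀ i x, x ∉ tsupport φ → f i =ᶠ[nhds x] (fun _ => 0) := by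
    intro i x hx
    filter_upwards [(isClosed_tsupport φ).isOpen_compl.mem_nhds hx] with y hy
    simp [hfdef, hψ0 y hy]
  have hfd : ∀ i x, DifferentiableAt ℝ (f i) x := by
    intro i x
    by_cases hx : x ∈ Ω
    · exact (hdiffOn ψ hψ1 x hx).mul (hdiffOn (g i) (hg1 i) x hx)
    · exact (differentiableAt_const (0:ℝ)).congr_of_eventuallyEq (hfev i x (fun h => hx (hKΩ h)))
  have hfderiv0 : ∀ i x, x ∉ tsupport φ → fderiv ℝ (f i) x = 0 := by
    intro i x hx
    rw [(hfev i x hx).fderiv_eq]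
    exact fderiv_const_apply 0
  have hfsupp : ∀ i, HasCompactSupport (f i) := fun i =>
    HasCompactSupport.intro hKc (fun x hx => by simp [hfdef, hψ0 x hx])
  -- continuity pieces
  have hgradu_cont : ContinuousOn (gradient u) Ω :=
    (InnerProductSpace.toDual ℝ _).symm.continuous.comp_continuousOn hfdu.continuousOn
  have hgradφ_cont : Continuous (gradient φ) :=
    (InnerProductSpace.toDual ℝ _).symm.continuous.comp (hφ.continuous_fderiv (by simp))
  have hDg : ∀ i, ContinuousOn (fun x => fderiv ℝ (g i) x) Ω := fun i =>
    (hg1 i).continuousOn_fderiv_of_isOpen hΩ le_rfl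
  have hlap_cont : ContinuousOn (lap u) Ω := by
    have : ∀ i : Fin N, ContinuousOn
        (fun x => fderiv ℝ (g i) x (EuclideanSpace.single i 1)) Ω :=
      fun i => (hDg i).clm_apply continuousOn_const
    exact continuousOn_finset_sum _ (fun i _ => this i)
  set D : EuclideanSpace ℝ (Fin N) → ℝ :=
    fun x => ∑ i, fderiv ℝ (f i) x (EuclideanSpace.single i 1) with hDdef
  have hDcontOn : ContinuousOn D Ω := continuousOn_finset_sum _ fun i _ =>
    ((hf1 i).continuousOn_fderiv_of_isOpen hΩ le_rfl).clm_apply continuousOn_const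
  have hD0 : ∀ x ∉ tsupport φ, D x = 0 := fun x hx =>
    Finset.sum_eq_zero fun i _ => by rw [hfderiv0 i x hx]; rfl
  have hDcont : Continuous D := by
    rw [continuous_iff_continuousAt]
    intro x
    by_cases hx : x ∈ Ω
    · exact hDcontOn.continuousAt (hΩ.mem_nhds hx)
    · have hxK : x ∉ tsupport φ := fun h => hx (hKΩ h)
      have hev : D =ᶠ[nhds x] (fun _ => 0) := by
        filter_upwards [(isClosed_tsupport φ).isOpen_compl.mem_nhds hxK] with y hy
        exact hD0 y hy
      exact ContinuousAt.congr continuousAt_const hev.symm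
  have hdivzero : ∫ x, D x = 0 := div_int_zero hNne f hfd hfsupp hDcont
  have hDΩzero : ∫ x in Ω, D x = 0 := by
    rw [setIntegral_eq_integral_of_forall_compl_eq_zero
      (fun x hx => hD0 x (fun h => hx (hKΩ h)))]
    exact hdivzero
  -- value of fderiv ψ applied to gradient u, on Ω
  have hψval : ∀ x ∈ Ω, fderiv ℝ ψ x (gradient u x) =
      -(φ x ^ 2 * (u x ^ 2)⁻¹ * ‖gradient u x‖^2) +
        (u x)⁻¹ * (2 * φ x * (inner ℝ (gradient φ x) (gradient u x) : ℝ)) := by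
    intro x hx
    have hφd : DifferentiableAt ℝ φ x := hφ1.differentiable one_ne_zero x
    have hud : DifferentiableAt ℝ u x := hdiffOn u hu1 x hx
    have hsqeq : (fun y => φ y ^ 2) = fun y => φ y * φ y := funext fun y => sq (φ y)
    have hφsqd : DifferentiableAt ℝ (fun y => φ y ^ 2) x := by
      rw [hsqeq]; exact hφd.mul hφd
    have hinvd : DifferentiableAt ℝ (fun y => (u y)⁻¹) x := hud.inv (hune x hx)
    have hφsq : fderiv ℝ (fun y => φ y ^ 2) x = (2 * φ x) • fderiv ℝ φ x := by
      rw [hsqeq, fderiv_fun_mul hφd hφd, two_mul, add_smul]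
    have hinv : fderiv ℝ (fun y => (u y)⁻¹) x = (-(u x ^ 2)⁻¹) • fderiv ℝ u x := by
      have h2 := (hasFDerivAt_inv (hune x hx)).comp x hud.hasFDerivAt
      have h2' : HasFDerivAt (fun y => (u y)⁻¹)
          ((ContinuousLinearMap.smulRight (1 : ℝ →L[ℝ] ℝ) (-(u x ^ 2)⁻¹)).comp
            (fderiv ℝ u x)) x := h2
      rw [h2'.fderiv]
      ext v
      simp [mul_comm]
    have h4 : fderiv ℝ ψ x = (φ x ^ 2) • ((-(u x ^ 2)⁻¹) • fderiv ℝ u x) +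
        (u x)⁻¹ • ((2 * φ x) • fderiv ℝ φ x) := by
      rw [hψdef, fderiv_fun_mul hφsqd hinvd, hφsq, hinv]
    rw [h4]
    simp only [ContinuousLinearMap.add_apply, ContinuousLinearMap.smul_apply,
      smul_eq_mul, fderiv_apply_eq_inner_gradient, real_inner_self_eq_norm_sq]
    ring
  -- divergence identity on Ω
  have hDeq : ∀ x ∈ Ω, D x = ψ x * lap u x + fderiv ℝ ψ x (gradient u x) := by
    intro x hx
    have hψa : DifferentiableAt ℝ ψ x := hdiffOn ψ hψ1 x hx
    have hga : ∀ i, DifferentiableAt ℝ (g i) x := fun i => hdiffOn (g i) (hg1 i) x hx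
    have hterm : ∀ i : Fin N, fderiv ℝ (f i) x (EuclideanSpace.single i 1)
        = ψ x * fderiv ℝ (g i) x (EuclideanSpace.single i 1)
          + g i x * fderiv ℝ ψ x (EuclideanSpace.single i 1) := by
      intro i
      have : fderiv ℝ (f i) x = ψ x • fderiv ℝ (g i) x + g i x • fderiv ℝ ψ x := by
        rw [hfdef]
        exact fderiv_mul hψa (hga i)
      rw [this]
      simp [ContinuousLinearMap.add_apply, ContinuousLinearMap.smul_apply, smul_eq_mul]
    have hsum2 : ∑ i, g i x * fderiv ℝ ψ x (EuclideanSpace.single i 1)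
        = fderiv ℝ ψ x (gradient u x) := by
      rw [gradient_decomp u x, map_sum]
      exact Finset.sum_congr rfl fun i _ => by
        rw [ContinuousLinearMap.map_smul, smul_eq_mul]
    have hlapeq : ψ x * lap u x
        = ∑ i, ψ x * fderiv ℝ (g i) x (EuclideanSpace.single i 1) := by
      rw [lap, Finset.mul_sum]
    rw [hDdef]
    simp only [hterm]
    rw [Finset.sum_add_distrib, hsum2, hlapeq]
  set W : EuclideanSpace ℝ (Fin N) → ℝ := fun x => fderiv ℝ ψ x (gradient u x) with hWdef
  have hW0 : ∀ x ∉ tsupport φ, W x = 0 := by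
    intro x hx
    have h0 : fderiv ℝ ψ x = 0 := by
      rw [(hψev x hx).fderiv_eq]; exact fderiv_const_apply 0
    simp only [hWdef, h0]
    rfl
  have hWcont : ContinuousOn W Ω :=
    (hψ1.continuousOn_fderiv_of_isOpen hΩ le_rfl).clm_apply hgradu_cont
  have hψcont : ContinuousOn ψ Ω := hψ1.continuousOn
  have hnormgradu : ContinuousOn (fun x => ‖gradient u x‖) Ω := hgradu_cont.norm
  have hIA1 : IntegrableOn (fun x => c x * φ x ^ 2) Ω :=
    integrableOn_helper hKc hKΩ _ (hc.mul ((hφ1.continuous.pow 2).continuousOn))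
      (fun x hx => by simp [image_eq_zero_of_notMem_tsupport hx])
  have hIA2 : IntegrableOn (fun x => (-(lap u x) + b x * ‖gradient u x‖) * ψ x) Ω :=
    integrableOn_helper hKc hKΩ _
      ((hlap_cont.neg.add (hb.mul hnormgradu)).mul hψcont)
      (fun x hx => by simp [hψ0 x hx])
  have hIA3 : IntegrableOn (fun x => b x * ‖gradient u x‖ * ψ x + W x) Ω :=
    integrableOn_helper hKc hKΩ _
      (((hb.mul hnormgradu).mul hψcont).add hWcont)
      (fun x hx => by simp [hψ0 x hx, hW0 x hx])
  have hID : IntegrableOn D Ω := integrableOn_helper hKc hKΩ _ hDcontOn hD0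
  have hIh1 : IntegrableOn (fun x => ‖gradient φ x‖ ^ 2) Ω := by
    apply integrableOn_helper hKc hKΩ _ ((hgradφ_cont.norm.pow 2).continuousOn)
    intro x hx
    have h0 : fderiv ℝ φ x = 0 := fderiv_of_notMem_tsupport ℝ hx
    simp [gradient, h0]
  have hIh2 : IntegrableOn (fun x => b x ^ 2 * φ x ^ 2) Ω :=
    integrableOn_helper hKc hKΩ _ ((hb.pow 2).mul ((hφ1.continuous.pow 2).continuousOn))
      (fun x hx => by simp [image_eq_zero_of_notMem_tsupport hx])
  have hIA4 : IntegrableOn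
      (fun x => 2*t*‖gradient φ x‖^2 + t/(2*(2*t-1)) * (b x^2 * φ x^2)) Ω :=
    (hIh1.const_mul _).add (hIh2.const_mul _)
  -- step 1
  have step1 : (∫ x in Ω, c x * φ x ^ 2)
      ≤ ∫ x in Ω, (-(lap u x) + b x * ‖gradient u x‖) * ψ x := by
    apply setIntegral_mono_on hIA1 hIA2 hmeasΩ
    intro x hx
    have hψx : 0 ≤ ψ x :=
      mul_nonneg (sq_nonneg _) (inv_nonneg.2 (hupos x hx).le)
    have h1 := mul_le_mul_of_nonneg_right (hsuper x hx) hψx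
    calc c x * φ x ^ 2 = c x * u x * ψ x := by
          show c x * φ x ^ 2 = c x * u x * (φ x ^ 2 * (u x)⁻¹)
          have h := hune x hx
          field_simp
      _ ≤ _ := h1
  -- step 2
  have step2 : (∫ x in Ω, (-(lap u x) + b x * ‖gradient u x‖) * ψ x)
      = ∫ x in Ω, (b x * ‖gradient u x‖ * ψ x + W x) := by
    have heq : (∫ x in Ω, (-(lap u x) + b x * ‖gradient u x‖) * ψ x)
        = ∫ x in Ω, ((b x * ‖gradient u x‖ * ψ x + W x) - D x) := by
      apply setIntegral_congr_fun hmeasΩ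
      intro x hx
      have hDx : D x = ψ x * lap u x + W x := hDeq x hx
      show (-(lap u x) + b x * ‖gradient u x‖) * ψ x
          = (b x * ‖gradient u x‖ * ψ x + W x) - D x
      rw [hDx]
      ring
    rw [heq, integral_sub hIA3 hID, hDΩzero, sub_zero]
  -- step 3
  have step3 : (∫ x in Ω, (b x * ‖gradient u x‖ * ψ x + W x))
      ≤ ∫ x in Ω, (2*t*‖gradient φ x‖^2 + t/(2*(2*t-1)) * (b x^2 * φ x^2)) := by
    apply setIntegral_mono_on hIA3 hIA4 hmeasΩ
    intro x hx
    have hUpos := hupos x hx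
    have hUinv : (0:ℝ) < (u x)⁻¹ := by positivity
    have hA : (0:ℝ) ≤ ‖gradient u x‖ := norm_nonneg _
    have hNp : (0:ℝ) ≤ ‖gradient φ x‖ := norm_nonneg _
    have hCS := abs_real_inner_le_norm (gradient φ x) (gradient u x)
    have hWx : W x = -(φ x ^ 2 * (u x ^ 2)⁻¹ * ‖gradient u x‖^2) +
        (u x)⁻¹ * (2 * φ x * (inner ℝ (gradient φ x) (gradient u x) : ℝ)) := hψval x hx
    have hq := quad_bound t |b x| |φ x| ‖gradient φ x‖ (‖gradient u x‖ * (u x)⁻¹) ht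
      (abs_nonneg _) (abs_nonneg _) hNp (by positivity)
    rw [sq_abs, sq_abs] at hq
    have h1 : b x * ‖gradient u x‖ * (φ x ^ 2 * (u x)⁻¹)
        ≤ |b x| * φ x ^ 2 * (‖gradient u x‖ * (u x)⁻¹) := by
      nlinarith [mul_le_mul_of_nonneg_right (le_abs_self (b x))
        (show (0:ℝ) ≤ ‖gradient u x‖ * (u x)⁻¹ * φ x ^ 2 by positivity)]
    have h2 : (u x)⁻¹ * (2 * φ x * (inner ℝ (gradient φ x) (gradient u x) : ℝ))
        ≤ 2 * |φ x| * ‖gradient φ x‖ * (‖gradient u x‖ * (u x)⁻¹) := by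
      have habs : φ x * (inner ℝ (gradient φ x) (gradient u x) : ℝ)
          ≤ |φ x| * (‖gradient φ x‖ * ‖gradient u x‖) := by
        calc φ x * (inner ℝ (gradient φ x) (gradient u x) : ℝ)
            ≤ |φ x * (inner ℝ (gradient φ x) (gradient u x) : ℝ)| := le_abs_self _
          _ = |φ x| * |(inner ℝ (gradient φ x) (gradient u x) : ℝ)| := abs_mul _ _
          _ ≤ |φ x| * (‖gradient φ x‖ * ‖gradient u x‖) :=
              mul_le_mul_of_nonneg_left hCS (abs_nonneg _)
      nlinarith [mul_le_mul_of_nonneg_left habs (le_of_lt hUinv)]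
    have h3 : -(φ x ^ 2 * (u x ^ 2)⁻¹ * ‖gradient u x‖^2)
        = -(φ x ^ 2 * (‖gradient u x‖ * (u x)⁻¹)^2) := by
      rw [← inv_pow]
      ring
    simp only [hψdef]
    rw [hWx, h3]
    linarith [hq, h1, h2]
  -- step 4
  have step4 : (∫ x in Ω, (2*t*‖gradient φ x‖^2 + t/(2*(2*t-1)) * (b x^2 * φ x^2)))
      = 2*t*(∫ x in Ω, ‖gradient φ x‖^2)
        + t/(2*(2*t-1)) * (∫ x in Ω, b x^2 * φ x^2) := by
    rw [integral_add (hIh1.const_mul _) (hIh2.const_mul _),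
      integral_const_mul, integral_const_mul]
  linarith [step1, step2, step3, step4]
end

section
/- Let Ω ⊆ ℝ^N (N ≥ 3) be an open set, let b, c : Ω → ℝ be continuous with c ≥ 0, and suppose u ∈ C²(Ω) is a positive classical supersolution of −Δu + b(x)|∇u| = c(x)u on Ω, i.e. u > 0 and −Δu(x) + b(x)|∇u(x)| ≥ c(x)u(x) for all x ∈ Ω. Then for every test function φ ∈ C_c^∞(Ω) we have √(∫_Ω c φ² dx) ≤ √(∫_Ω |∇φ|² dx) + √(∫_Ω (b²/4) φ² dx). -/
open MeasureTheory Set Manifold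

section helpers
variable {N : ℕ}
local notation "E" => EuclideanSpace ℝ (Fin N)

lemma glue_contDiff {f : E → ℝ} {Ω C : Set E} (hΩ : IsOpen Ω) (hC : IsClosed C)
    (hCΩ : C ⊆ Ω) (n : ℕ∞) (h1 : ContDiffOn ℝ n f Ω) (h0 : ∀ x ∉ C, f x = 0) :
    ContDiff ℝ n f := by
  rw [contDiff_iff_contDiffAt]
  intro x
  by_cases hx : x ∈ Ω
  · exact h1.contDiffAt (hΩ.mem_nhds hx)
  · have hxC : x ∉ C := fun h => hx (hCΩ h)
    have hev : f =ᶠ[nhds x] (fun _ => (0:ℝ)) := by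
      filter_upwards [hC.isOpen_compl.mem_nhds hxC] with y hy using h0 y hy
    exact (contDiffAt_const (c := (0:ℝ))).congr_of_eventuallyEq hev

lemma glue_continuous {f : E → ℝ} {Ω C : Set E} (hΩ : IsOpen Ω) (hC : IsClosed C)
    (hCΩ : C ⊆ Ω) (h1 : ContinuousOn f Ω) (h0 : ∀ x ∉ C, f x = 0) :
    Continuous f := by
  rw [continuous_iff_continuousAt]
  intro x
  by_cases hx : x ∈ Ω
  · exact h1.continuousAt (hΩ.mem_nhds hx)
  · have hxC : x ∉ C := fun h => hx (hCΩ h)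
    have hev : f =ᶠ[nhds x] (fun _ => (0:ℝ)) := by
      filter_upwards [hC.isOpen_compl.mem_nhds hxC] with y hy using h0 y hy
    exact ContinuousAt.congr (continuousAt_const (y := (0:ℝ))) hev.symm

lemma grad_inner (f : E → ℝ) (x y : E) :
    inner ℝ (gradient f x) y = fderiv ℝ f x y := by
  rw [gradient]; exact InnerProductSpace.toDual_symm_apply

lemma grad_apply (f : E → ℝ) (x : E) (i : Fin N) :
    gradient f x i = fderiv ℝ f x (EuclideanSpace.single i 1) := by
  rw [← grad_inner, EuclideanSpace.inner_single_right]
  simp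

lemma grad_normsq (f : E → ℝ) (x : E) :
    ‖gradient f x‖ ^ 2 = ∑ i, (fderiv ℝ f x (EuclideanSpace.single i 1)) ^ 2 := by
  rw [← real_inner_self_eq_norm_sq, PiLp.inner_apply]
  refine Finset.sum_congr rfl fun i _ => ?_
  rw [grad_apply]
  simp [sq]

lemma cutoff_exists {Ω K : Set E} (hΩ : IsOpen Ω) (hK : IsCompact K) (hKΩ : K ⊆ Ω) :
    ∃ χ : E → ℝ, ContDiff ℝ (⊤ : ℕ∞) χ ∧
      (∃ U : Set E, IsOpen U ∧ K ⊆ U ∧ U ⊆ Ω ∧ ∀ x ∈ U, χ x = 1) ∧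
      (∃ C : Set E, IsClosed C ∧ C ⊆ Ω ∧ ∀ x ∉ C, χ x = 0) := by
  obtain ⟨L, hLcomp, hLint, hLΩ⟩ := exists_compact_between hK hΩ hKΩ
  obtain ⟨χ, hχ0, hχ1, -⟩ := exists_contMDiffMap_zero_one_nhds_of_isClosed (n := (⊤ : ℕ∞))
    (𝓘(ℝ, EuclideanSpace ℝ (Fin N))) (isOpen_interior (s := L)).isClosed_compl hK.isClosed
    (by simpa [Set.disjoint_compl_left_iff_subset] using hLint)
  obtain ⟨U, hUopen, hKU, hU1⟩ := eventually_nhdsSet_iff_exists.mp hχ1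
  refine ⟨χ, ?_, ⟨U ∩ interior L, hUopen.inter isOpen_interior, subset_inter hKU hLint,
      fun x hx => hLΩ (interior_subset hx.2), fun x hx => hU1 x hx.1⟩,
    ⟨L, hLcomp.isClosed, hLΩ, fun x hx => ?_⟩⟩
  · exact contMDiff_iff_contDiff.mp χ.contMDiff
  · exact hχ0.self_of_nhdsSet x (fun h => hx (interior_subset h))

end helpers

set_option maxHeartbeats 2000000 in
theorem stmt_4 {N : ℕ} (hN : 3 ≤ N) (Ω : Set (EuclideanSpace ℝ (Fin N))) (hΩ : IsOpen Ω)
    (b c : EuclideanSpace ℝ (Fin N) → ℝ)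
    (hb : ContinuousOn b Ω) (hc : ContinuousOn c Ω) (hc0 : ∀ x ∈ Ω, 0 ≤ c x)
    (u : EuclideanSpace ℝ (Fin N) → ℝ) (hu : ContDiffOn ℝ 2 u Ω)
    (hupos : ∀ x ∈ Ω, 0 < u x)
    (hsuper : ∀ x ∈ Ω, c x * u x ≤ -(lap u x) + b x * ‖gradient u x‖)
    (φ : EuclideanSpace ℝ (Fin N) → ℝ)
    (hφ : ContDiff ℝ (⊤ : ℕ∞) φ) (hφc : HasCompactSupport φ) (hφΩ : tsupport φ ⊆ Ω) :
    Real.sqrt (∫ x in Ω, c x * (φ x) ^ 2) ≤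
      Real.sqrt (∫ x in Ω, ‖gradient φ x‖ ^ 2) +
        Real.sqrt (∫ x in Ω, (b x) ^ 2 / 4 * (φ x) ^ 2) := by
  set K := tsupport φ with hKdef
  have hK : IsCompact K := hφc
  have hφ0 : ∀ x ∉ K, φ x = 0 := fun x hx => image_eq_zero_of_notMem_tsupport hx
  obtain ⟨χ, hχsm, ⟨U, hUo, hKU, hUΩ, hχ1⟩, ⟨C, hCcl, hCΩ, hχC⟩⟩ := cutoff_exists hΩ hK hφΩ
  set e : Fin N → EuclideanSpace ℝ (Fin N) := fun i => EuclideanSpace.single i 1 with he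
  -- the function v = log u and its globalization V
  set v : EuclideanSpace ℝ (Fin N) → ℝ := fun y => Real.log (u y) with hvdef
  have hvΩ : ContDiffOn ℝ 2 v Ω := hu.log (fun y hy => (hupos y hy).ne')
  set V : EuclideanSpace ℝ (Fin N) → ℝ := fun y => χ y * v y with hVdef
  have hVsm : ContDiff ℝ 2 V :=
    glue_contDiff hΩ hCcl hCΩ 2 (((hχsm.of_le (by exact_mod_cast le_top)).contDiffOn.mono (subset_univ Ω)).mul hvΩ)
      (fun x hx => by simp [hVdef, hχC x hx])
  have hVv' : ∀ x ∈ U, V =ᶠ[nhds x] v := fun x hx => by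
    filter_upwards [hUo.mem_nhds hx] with y hy
    simp [hVdef, hχ1 y hy]
  have hfVv : ∀ x ∈ U, fderiv ℝ V x = fderiv ℝ v x := fun x hx => (hVv' x hx).fderiv_eq
  -- derivatives of u and v
  have hudiff : ∀ y ∈ Ω, DifferentiableAt ℝ u y := fun y hy =>
    (hu.contDiffAt (hΩ.mem_nhds hy)).differentiableAt (by norm_num)
  have hdv : ∀ y ∈ Ω, HasFDerivAt v ((u y)⁻¹ • fderiv ℝ u y) y := fun y hy =>
    (Real.hasDerivAt_log (hupos y hy).ne').comp_hasFDerivAt y (hudiff y hy).hasFDerivAt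
  have hfv : ∀ y ∈ Ω, fderiv ℝ v y = (u y)⁻¹ • fderiv ℝ u y := fun y hy => (hdv y hy).fderiv
  have hfdC1 : ContDiffOn ℝ 1 (fderiv ℝ u) Ω := hu.fderiv_of_isOpen hΩ le_rfl
  have hA : ∀ x ∈ Ω, DifferentiableAt ℝ (fderiv ℝ u) x := fun x hx =>
    (hfdC1.contDiffAt (hΩ.mem_nhds hx)).differentiableAt one_ne_zero
  -- gradient of V on U
  have hgV : ∀ x ∈ U, gradient V x = (u x)⁻¹ • gradient u x := fun x hx => by
    rw [gradient, gradient, hfVv x hx, hfv x (hUΩ hx)]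
    exact LinearIsometryEquiv.map_smul _ _
  have hgVnorm : ∀ x ∈ U, ‖gradient V x‖ = ‖gradient u x‖ / u x := fun x hx => by
    rw [hgV x hx, norm_smul, Real.norm_eq_abs, abs_inv,
      abs_of_pos (hupos x (hUΩ hx)), inv_mul_eq_div]
  -- laplacian of V on U
  have hlapV : ∀ x ∈ U, lap V x = lap u x / u x - ‖gradient u x‖ ^ 2 / (u x) ^ 2 := by
    intro x hx
    have hxΩ : x ∈ Ω := hUΩ hx
    have hux : 0 < u x := hupos x hxΩ
    have key : ∀ i : Fin N, fderiv ℝ (fun y => fderiv ℝ V y (e i)) x (e i)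
        = (u x)⁻¹ * fderiv ℝ (fderiv ℝ u) x (e i) (e i)
          - ((u x) ^ 2)⁻¹ * (fderiv ℝ u x (e i)) ^ 2 := by
      intro i
      have h1 : (fun y => fderiv ℝ V y (e i))
          =ᶠ[nhds x] (fun y => (u y)⁻¹ * fderiv ℝ u y (e i)) := by
        filter_upwards [hUo.mem_nhds hx, hΩ.mem_nhds hxΩ] with y hyU hyΩ
        rw [hfVv y hyU, hfv y hyΩ]
        rfl
      rw [h1.fderiv_eq]
      have hp : HasFDerivAt (fun y => (u y)⁻¹) ((-((u x) ^ 2)⁻¹) • fderiv ℝ u x) x :=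
        (hasDerivAt_inv hux.ne').comp_hasFDerivAt x (hudiff x hxΩ).hasFDerivAt
      have hq : HasFDerivAt (fun y => fderiv ℝ u y (e i))
          ((ContinuousLinearMap.apply ℝ ℝ (e i)).comp (fderiv ℝ (fderiv ℝ u) x)) x :=
        (ContinuousLinearMap.apply ℝ ℝ (e i)).hasFDerivAt.comp x (hA x hxΩ).hasFDerivAt
      rw [show (fun y => (u y)⁻¹ * fderiv ℝ u y (e i)) = (fun y => (u y)⁻¹) * (fun y => fderiv ℝ u y (e i)) from rfl,
        (hp.mul hq).fderiv]
      simp only [ContinuousLinearMap.add_apply, ContinuousLinearMap.smul_apply,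
        ContinuousLinearMap.comp_apply, ContinuousLinearMap.apply_apply,
        smul_eq_mul]
      ring
    calc lap V x = ∑ i, ((u x)⁻¹ * fderiv ℝ (fderiv ℝ u) x (e i) (e i)
          - ((u x) ^ 2)⁻¹ * (fderiv ℝ u x (e i)) ^ 2) := Finset.sum_congr rfl fun i _ => key i
      _ = (u x)⁻¹ * (∑ i, fderiv ℝ (fderiv ℝ u) x (e i) (e i))
          - ((u x) ^ 2)⁻¹ * ∑ i, (fderiv ℝ u x (e i)) ^ 2 := by
          rw [Finset.sum_sub_distrib, Finset.mul_sum, Finset.mul_sum]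
      _ = lap u x / u x - ‖gradient u x‖ ^ 2 / (u x) ^ 2 := by
          rw [grad_normsq]
          have : lap u x = ∑ i, fderiv ℝ (fderiv ℝ u) x (e i) (e i) := by
            refine Finset.sum_congr rfl fun i _ => ?_
            have hq : HasFDerivAt (fun y => fderiv ℝ u y (e i))
                ((ContinuousLinearMap.apply ℝ ℝ (e i)).comp (fderiv ℝ (fderiv ℝ u) x)) x :=
              (ContinuousLinearMap.apply ℝ ℝ (e i)).hasFDerivAt.comp x (hA x hxΩ).hasFDerivAt
            rw [hq.fderiv]
            rfl
          rw [← this]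
          ring
  -- pointwise supersolution inequality for V
  have hP1 : ∀ x ∈ Ω, c x * φ x ^ 2 ≤
      -(lap V x) * φ x ^ 2 + b x * ‖gradient V x‖ * φ x ^ 2 - ‖gradient V x‖ ^ 2 * φ x ^ 2 := by
    intro x hxΩ
    by_cases hx : x ∈ U
    · have hux : 0 < u x := hupos x hxΩ
      set g := ‖gradient u x‖ with hgdef
      have h1 : c x * u x * φ x ^ 2 ≤ (-(lap u x) + b x * g) * φ x ^ 2 :=
        mul_le_mul_of_nonneg_right (hsuper x hxΩ) (sq_nonneg (φ x))
      have hgoal : c x * φ x ^ 2 ≤ (-(lap u x) + b x * g) * φ x ^ 2 / u x := by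
        rw [le_div_iff₀ hux]
        nlinarith [h1]
      rw [hlapV x hx, hgVnorm x hx]
      have heq : -(lap u x / u x - g ^ 2 / u x ^ 2) * φ x ^ 2
            + b x * (g / u x) * φ x ^ 2 - (g / u x) ^ 2 * φ x ^ 2
          = (-(lap u x) + b x * g) * φ x ^ 2 / u x := by
        field_simp
        ring
      rw [heq]
      exact hgoal
    · have hφx : φ x = 0 := hφ0 x (fun hk => hx (hKU hk))
      simp [hφx]
  -- integrability helper
  have hKint : ∀ f : EuclideanSpace ℝ (Fin N) → ℝ, Continuous f → (∀ x ∉ K, f x = 0) →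
      Integrable f := fun f hf h0 =>
    hf.integrable_of_hasCompactSupport (HasCompactSupport.intro hK h0)
  -- the function h = φ², its derivative
  set h : EuclideanSpace ℝ (Fin N) → ℝ := fun y => (φ y) ^ 2 with hhdef
  have hh : ContDiff ℝ (⊤ : ℕ∞) h := hφ.pow 2
  have hfh : ∀ x, fderiv ℝ h x = (2 * φ x) • fderiv ℝ φ x := by
    intro x
    have hd : DifferentiableAt ℝ φ x := hφ.differentiable (by simp) x
    have heq : h = fun y => φ y * φ y := by
      simp only [hhdef]
      funext y
      ring
    rw [heq, fderiv_fun_mul hd hd, two_mul, add_smul]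
  -- continuity facts
  have hcont_fφ : Continuous (fderiv ℝ φ) := hφ.continuous_fderiv (by simp)
  have hcont_fV : Continuous (fderiv ℝ V) := hVsm.continuous_fderiv two_ne_zero
  have hgC1 : ∀ i, ContDiff ℝ 1 (fun y => fderiv ℝ V y (e i)) := fun i =>
    (ContinuousLinearMap.apply ℝ ℝ (e i)).contDiff.comp
      (hVsm.fderiv_right (by exact_mod_cast le_rfl))
  have hcont_fVi : ∀ i, Continuous (fun x => fderiv ℝ V x (e i)) := fun i =>
    (ContinuousLinearMap.apply ℝ ℝ (e i)).continuous.comp hcont_fV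
  have hcont_gi : ∀ i, Continuous (fun x => fderiv ℝ (fun y => fderiv ℝ V y (e i)) x (e i)) :=
    fun i => (ContinuousLinearMap.apply ℝ ℝ (e i)).continuous.comp
      ((hgC1 i).continuous_fderiv one_ne_zero)
  have hcont_lapV : Continuous (lap V) := by
    unfold lap
    exact continuous_finset_sum _ fun i _ => hcont_gi i
  have hcont_fhi : ∀ i, Continuous (fun x => fderiv ℝ h x (e i)) := by
    intro i
    have heq : (fun x => fderiv ℝ h x (e i)) = fun x => (2 * φ x) * fderiv ℝ φ x (e i) :=
      funext fun x => by rw [hfh x]; rfl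
    rw [heq]
    exact (continuous_const.mul hφ.continuous).mul
      ((ContinuousLinearMap.apply ℝ ℝ (e i)).continuous.comp hcont_fφ)
  -- integration by parts in each direction
  have hibp_i : ∀ i, ∫ x, h x * fderiv ℝ (fun y => fderiv ℝ V y (e i)) x (e i)
      = -∫ x, fderiv ℝ h x (e i) * fderiv ℝ V x (e i) := by
    intro i
    refine integral_mul_fderiv_eq_neg_fderiv_mul_of_integrable ?_ ?_ ?_
      (fun x _ => hh.differentiable (by simp) x) (fun x _ => (hgC1 i).differentiable one_ne_zero x)
    · exact hKint _ ((hcont_fhi i).mul (hcont_fVi i))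
        (fun x hx => by rw [hfh x, hφ0 x hx]; simp)
    · exact hKint _ ((hφ.continuous.pow 2).mul (hcont_gi i))
        (fun x hx => by simp [hhdef, hφ0 x hx])
    · exact hKint _ ((hφ.continuous.pow 2).mul (hcont_fVi i))
        (fun x hx => by simp [hhdef, hφ0 x hx])
  -- the divergence-form integrand
  set D : EuclideanSpace ℝ (Fin N) → ℝ :=
    fun x => ∑ i, fderiv ℝ h x (e i) * fderiv ℝ V x (e i) with hDdef
  have hcont_D : Continuous D :=
    continuous_finset_sum _ fun i _ => (hcont_fhi i).mul (hcont_fVi i)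
  have hD0 : ∀ x ∉ K, D x = 0 := fun x hx => by
    simp only [hDdef]
    refine Finset.sum_eq_zero fun i _ => ?_
    rw [hfh x, hφ0 x hx]
    simp
  have hIBP : ∫ x, h x * lap V x = -∫ x, D x := by
    have step1 : ∫ x, h x * lap V x = ∑ i, ∫ x,
        h x * fderiv ℝ (fun y => fderiv ℝ V y (e i)) x (e i) := by
      rw [← integral_finset_sum]
      · congr 1
        funext x
        rw [lap, Finset.mul_sum]
      · exact fun i _ => hKint _ ((hφ.continuous.pow 2).mul (hcont_gi i))
          (fun x hx => by simp [hhdef, hφ0 x hx])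
    rw [step1]
    have step2 : ∑ i, ∫ x, h x * fderiv ℝ (fun y => fderiv ℝ V y (e i)) x (e i)
        = -∑ i, ∫ x, fderiv ℝ h x (e i) * fderiv ℝ V x (e i) := by
      rw [← Finset.sum_neg_distrib]
      exact Finset.sum_congr rfl fun i _ => hibp_i i
    rw [step2, ← integral_finset_sum]
    exact fun i _ => hKint _ ((hcont_fhi i).mul (hcont_fVi i))
      (fun x hx => by rw [hfh x, hφ0 x hx]; simp)
    -- fderiv of φ vanishes off K
  have hφfd0 : ∀ x ∉ K, fderiv ℝ φ x = 0 := by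
    intro x hx
    have hev : φ =ᶠ[nhds x] (fun _ => (0:ℝ)) := by
      filter_upwards [(isClosed_tsupport φ).isOpen_compl.mem_nhds hx] with y hy
        using image_eq_zero_of_notMem_tsupport hy
    rw [hev.fderiv_eq]
    exact fderiv_const_apply 0
  have hgradφ0 : ∀ x ∉ K, gradient φ x = 0 := fun x hx => by
    rw [gradient, hφfd0 x hx, map_zero]
  have hcont_gφ : Continuous (fun x => gradient φ x) := by
    unfold gradient
    exact (InnerProductSpace.toDual ℝ (EuclideanSpace ℝ (Fin N))).symm.continuous.comp hcont_fφ
  have hcont_gV : Continuous (fun x => gradient V x) := by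
    unfold gradient
    exact (InnerProductSpace.toDual ℝ (EuclideanSpace ℝ (Fin N))).symm.continuous.comp hcont_fV
  -- pointwise bound on D
  have hD2 : ∀ x, D x = 2 * φ x * inner ℝ (gradient φ x) (gradient V x) := by
    intro x
    have hinner : (inner ℝ (gradient φ x) (gradient V x) : ℝ)
        = ∑ i, fderiv ℝ φ x (e i) * fderiv ℝ V x (e i) := by
      rw [PiLp.inner_apply]
      refine Finset.sum_congr rfl fun i _ => ?_
      rw [grad_apply, grad_apply]
      simp
      exact mul_comm _ _
    rw [hinner]
    simp only [hDdef]
    rw [Finset.mul_sum]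
    refine Finset.sum_congr rfl fun i _ => ?_
    rw [hfh x]
    simp only [ContinuousLinearMap.smul_apply, smul_eq_mul]
    ring
  have hDbound : ∀ x, D x ≤ 2 * |φ x| * ‖gradient φ x‖ * ‖gradient V x‖ := by
    intro x
    rw [hD2 x]
    have h1 : |(inner ℝ (gradient φ x) (gradient V x) : ℝ)| ≤ ‖gradient φ x‖ * ‖gradient V x‖ :=
      abs_real_inner_le_norm _ _
    have h2 : φ x * (inner ℝ (gradient φ x) (gradient V x) : ℝ)
        ≤ |φ x| * (‖gradient φ x‖ * ‖gradient V x‖) := by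
      calc φ x * (inner ℝ (gradient φ x) (gradient V x) : ℝ)
          ≤ |φ x * (inner ℝ (gradient φ x) (gradient V x) : ℝ)| := le_abs_self _
        _ = |φ x| * |(inner ℝ (gradient φ x) (gradient V x) : ℝ)| := abs_mul _ _
        _ ≤ |φ x| * (‖gradient φ x‖ * ‖gradient V x‖) :=
            mul_le_mul_of_nonneg_left h1 (abs_nonneg _)
    nlinarith [h2]
  -- named integrands
  set q : EuclideanSpace ℝ (Fin N) → ℝ := fun x => ‖gradient φ x‖ with hqdef
  set r : EuclideanSpace ℝ (Fin N) → ℝ := fun x => |b x| * |φ x| / 2 with hrdef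
  set sV : EuclideanSpace ℝ (Fin N) → ℝ := fun x => ‖gradient V x‖ with hsdef
  have hcont_q : Continuous q := hcont_gφ.norm
  have hcont_sV : Continuous sV := hcont_gV.norm
  have hcont_r : Continuous r := by
    refine glue_continuous hΩ (isClosed_tsupport φ) hφΩ ?_ ?_
    · exact ((hb.abs.mul hφ.continuous.abs.continuousOn).div_const 2)
    · intro x hx
      simp [hrdef, hφ0 x hx]
  have hq0 : ∀ x ∉ K, q x = 0 := fun x hx => by simp [hqdef, hgradφ0 x hx]
  have hr0 : ∀ x ∉ K, r x = 0 := fun x hx => by simp [hrdef, hφ0 x hx]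
  -- integrable pieces
  have hint_R : Integrable (fun x => b x * sV x * φ x ^ 2 - sV x ^ 2 * φ x ^ 2) := by
    refine hKint _ ?_ ?_
    · refine glue_continuous hΩ (isClosed_tsupport φ) hφΩ ?_ ?_
      · exact (((hb.mul hcont_sV.continuousOn).mul
          ((hφ.continuous.pow 2).continuousOn)).sub
          (((hcont_sV.pow 2).mul (hφ.continuous.pow 2)).continuousOn)
        )
      · intro x hx
        simp [hφ0 x hx]
    · intro x hx
      simp [hφ0 x hx]
  have hint_hlap : Integrable (fun x => h x * lap V x) :=
    hKint _ ((hφ.continuous.pow 2).mul hcont_lapV) (fun x hx => by simp [hhdef, hφ0 x hx])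
  have hint_D : Integrable D := hKint _ hcont_D hD0
  have hint_I1 : Integrable (fun x => c x * φ x ^ 2) := by
    refine hKint _ (glue_continuous hΩ (isClosed_tsupport φ) hφΩ
      (hc.mul ((hφ.continuous.pow 2).continuousOn)) (fun x hx => by simp [hφ0 x hx])) ?_
    intro x hx
    simp [hφ0 x hx]
  have hint_I2 : Integrable (fun x =>
      -(lap V x) * φ x ^ 2 + b x * sV x * φ x ^ 2 - sV x ^ 2 * φ x ^ 2) := by
    have : (fun x => -(lap V x) * φ x ^ 2 + b x * sV x * φ x ^ 2 - sV x ^ 2 * φ x ^ 2)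
        = fun x => -(h x * lap V x) + (b x * sV x * φ x ^ 2 - sV x ^ 2 * φ x ^ 2) := by
      funext x
      simp only [hhdef]
      ring
    rw [this]
    exact hint_hlap.neg.add hint_R
  have hint_I3 : Integrable (fun x =>
      D x + (b x * sV x * φ x ^ 2 - sV x ^ 2 * φ x ^ 2)) := hint_D.add hint_R
  have hint_q2 : Integrable (fun x => q x ^ 2) :=
    hKint _ (hcont_q.pow 2) (fun x hx => by rw [hq0 x hx]; simp)
  have hint_r2 : Integrable (fun x => r x ^ 2) :=
    hKint _ (hcont_r.pow 2) (fun x hx => by rw [hr0 x hx]; simp)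
  have hint_qr : Integrable (fun x => q x * r x) :=
    hKint _ (hcont_q.mul hcont_r) (fun x hx => by rw [hq0 x hx]; simp)
  have hint_P : Integrable (fun x => (q x + r x) ^ 2) := by
    have : (fun x => (q x + r x) ^ 2)
        = fun x => q x ^ 2 + 2 * (q x * r x) + r x ^ 2 := by funext x; ring
    rw [this]
    exact (hint_q2.add (hint_qr.const_mul 2)).add hint_r2
  -- set integrals to global integrals
  have hset : ∀ f : EuclideanSpace ℝ (Fin N) → ℝ, (∀ x ∉ K, f x = 0) →
      ∫ x in Ω, f x = ∫ x, f x := fun f h0 =>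
    setIntegral_eq_integral_of_forall_compl_eq_zero
      (fun x hx => h0 x (fun hk => hx (hφΩ hk)))
  -- chain of inequalities
  have c1 : ∫ x in Ω, c x * φ x ^ 2 ≤ ∫ x in Ω,
      (-(lap V x) * φ x ^ 2 + b x * sV x * φ x ^ 2 - sV x ^ 2 * φ x ^ 2) := by
    refine setIntegral_mono_on hint_I1.integrableOn hint_I2.integrableOn
      hΩ.measurableSet ?_
    intro x hx
    exact hP1 x hx
  have c2 : ∫ x in Ω, (-(lap V x) * φ x ^ 2 + b x * sV x * φ x ^ 2 - sV x ^ 2 * φ x ^ 2)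
      = ∫ x in Ω, (D x + (b x * sV x * φ x ^ 2 - sV x ^ 2 * φ x ^ 2)) := by
    rw [hset _ (fun x hx => by simp [hφ0 x hx]),
      hset _ (fun x hx => by simp [hφ0 x hx, hD0 x hx])]
    have e1 : (fun x => -(lap V x) * φ x ^ 2 + b x * sV x * φ x ^ 2 - sV x ^ 2 * φ x ^ 2)
        = fun x => -(h x * lap V x) + (b x * sV x * φ x ^ 2 - sV x ^ 2 * φ x ^ 2) := by
      funext x
      simp only [hhdef]
      ring
    have hint_nhlap : Integrable (fun x => -(h x * lap V x)) := hint_hlap.neg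
    rw [e1, integral_add hint_nhlap hint_R, integral_add hint_D hint_R,
      integral_neg, hIBP, neg_neg]
  have c3 : ∫ x in Ω, (D x + (b x * sV x * φ x ^ 2 - sV x ^ 2 * φ x ^ 2))
      ≤ ∫ x in Ω, (q x + r x) ^ 2 := by
    refine setIntegral_mono_on hint_I3.integrableOn hint_P.integrableOn
      hΩ.measurableSet ?_
    intro x _
    have hs0 : (0:ℝ) ≤ sV x := norm_nonneg _
    have hq0' : (0:ℝ) ≤ q x := norm_nonneg _
    have hb' : b x ≤ |b x| := le_abs_self _
    have hp0 : (0:ℝ) ≤ |φ x| := abs_nonneg _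
    have hsq : φ x ^ 2 = |φ x| ^ 2 := (sq_abs _).symm
    have hD' : D x ≤ 2 * |φ x| * q x * sV x := hDbound x
    have hrx : r x = |b x| * |φ x| / 2 := rfl
    have t2 : b x * sV x * |φ x| ^ 2 ≤ |b x| * sV x * |φ x| ^ 2 :=
      mul_le_mul_of_nonneg_right (mul_le_mul_of_nonneg_right hb' hs0) (sq_nonneg _)
    rw [hsq, hrx]
    nlinarith [sq_nonneg (q x + |b x| * |φ x| / 2 - |φ x| * sV x), t2, hD']
  -- Cauchy-Schwarz
  have hA0 : (0:ℝ) ≤ ∫ x in Ω, q x ^ 2 :=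
    setIntegral_nonneg hΩ.measurableSet (fun x _ => sq_nonneg _)
  have hB0 : (0:ℝ) ≤ ∫ x in Ω, r x ^ 2 :=
    setIntegral_nonneg hΩ.measurableSet (fun x _ => sq_nonneg _)
  have hCS : ∫ x in Ω, q x * r x ≤
      Real.sqrt (∫ x in Ω, q x ^ 2) * Real.sqrt (∫ x in Ω, r x ^ 2) := by
    have hpq : Real.HolderConjugate 2 2 := by constructor <;> norm_num
    have hqm : MemLp q (ENNReal.ofReal 2) (volume.restrict Ω) :=
      (hcont_q.memLp_of_hasCompactSupport (μ := volume)
        (HasCompactSupport.intro hK hq0)).restrict Ω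
    have hrm : MemLp r (ENNReal.ofReal 2) (volume.restrict Ω) :=
      (hcont_r.memLp_of_hasCompactSupport (μ := volume)
        (HasCompactSupport.intro hK hr0)).restrict Ω
    have := integral_mul_le_Lp_mul_Lq_of_nonneg hpq
      (Filter.Eventually.of_forall (fun x => norm_nonneg _))
      (Filter.Eventually.of_forall (fun x => by positivity)) hqm hrm
    simp only [Real.rpow_two] at this
    rw [Real.sqrt_eq_rpow, Real.sqrt_eq_rpow]
    exact this
  have c4 : ∫ x in Ω, (q x + r x) ^ 2 ≤
      (Real.sqrt (∫ x in Ω, q x ^ 2) + Real.sqrt (∫ x in Ω, r x ^ 2)) ^ 2 := by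
    have hexp : ∫ x in Ω, (q x + r x) ^ 2
        = (∫ x in Ω, q x ^ 2) + 2 * (∫ x in Ω, q x * r x) + ∫ x in Ω, r x ^ 2 := by
      have e1 : (fun x => (q x + r x) ^ 2)
          = fun x => q x ^ 2 + 2 * (q x * r x) + r x ^ 2 := by funext x; ring
      have hb2 : Integrable (fun x => 2 * (q x * r x)) := hint_qr.const_mul 2
      have ha2 : Integrable (fun x => q x ^ 2 + 2 * (q x * r x)) := hint_q2.add hb2
      rw [e1, integral_add ha2.integrableOn hint_r2.integrableOn,
        integral_add hint_q2.integrableOn hb2.integrableOn,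
        integral_const_mul]
    rw [hexp]
    have h1 := Real.sq_sqrt hA0
    have h2 := Real.sq_sqrt hB0
    nlinarith [hCS]
  -- final assembly
  have hBr : ∫ x in Ω, r x ^ 2 = ∫ x in Ω, b x ^ 2 / 4 * φ x ^ 2 := by
    refine integral_congr_ae (Filter.Eventually.of_forall ?_)
    intro x
    simp only [hrdef]
    rw [div_pow, mul_pow, sq_abs, sq_abs]
    ring
  have main : ∫ x in Ω, c x * φ x ^ 2 ≤
      (Real.sqrt (∫ x in Ω, q x ^ 2) + Real.sqrt (∫ x in Ω, r x ^ 2)) ^ 2 :=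
    ((c1.trans_eq c2).trans c3).trans c4
  calc Real.sqrt (∫ x in Ω, c x * φ x ^ 2)
      ≤ Real.sqrt ((Real.sqrt (∫ x in Ω, q x ^ 2) + Real.sqrt (∫ x in Ω, r x ^ 2)) ^ 2) :=
        Real.sqrt_le_sqrt main
    _ = Real.sqrt (∫ x in Ω, q x ^ 2) + Real.sqrt (∫ x in Ω, r x ^ 2) :=
        Real.sqrt_sq (add_nonneg (Real.sqrt_nonneg _) (Real.sqrt_nonneg _))
    _ = Real.sqrt (∫ x in Ω, ‖gradient φ x‖ ^ 2) + Real.sqrt (∫ x in Ω, b x ^ 2 / 4 * φ x ^ 2) := by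
        rw [hBr]
end

section
/- Let Ω ⊆ ℝ^N (N ≥ 3) be an open set, let b, c : Ω → ℝ be continuous with c ≥ 0, and suppose u ∈ C²(Ω) is a positive classical supersolution of −Δu + b(x)|∇u| = c(x)u on Ω, i.e. u > 0 and −Δu(x) + b(x)|∇u(x)| ≥ c(x)u(x) for all x ∈ Ω. Then for every test function φ ∈ C_c^∞(Ω) we have ∫_Ω (c − b²/4) φ² dx ≤ ∫_Ω |∇φ|² dx + 2 √( (∫_Ω |∇φ|² dx) · (∫_Ω (b²/4) φ² dx) ). -/
open MeasureTheory

open Set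

local notation "⟪" x ", " y "⟫" => @inner ℝ _ _ x y

lemma glue_continuous_s5 {X : Type*} [TopologicalSpace X] {f : X → ℝ} {Ω s : Set X}
    (hΩ : IsOpen Ω) (hs : IsClosed s) (hsΩ : s ⊆ Ω)
    (hf : ContinuousOn f Ω) (h0 : ∀ x ∉ s, f x = 0) : Continuous f := by
  rw [continuous_iff_continuousAt]
  intro x
  by_cases hx : x ∈ Ω
  · exact hf.continuousAt (hΩ.mem_nhds hx)
  · have hxs : x ∉ s := fun h => hx (hsΩ h)
    have hev : f =ᶠ[nhds x] (fun _ => 0) :=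
      Filter.eventually_of_mem (hs.isOpen_compl.mem_nhds hxs) (fun y hy => h0 y hy)
    exact ContinuousAt.congr continuousAt_const hev.symm


lemma fderiv_eq_inner_gradient {N : ℕ} (f : EuclideanSpace ℝ (Fin N) → ℝ)
    (x v : EuclideanSpace ℝ (Fin N)) : fderiv ℝ f x v = ⟪gradient f x, v⟫ := by
  rw [gradient, InnerProductSpace.toDual_symm_apply]

lemma inner_gradients_eq_sum {N : ℕ} (f g : EuclideanSpace ℝ (Fin N) → ℝ)
    (x : EuclideanSpace ℝ (Fin N)) :
    ⟪gradient f x, gradient g x⟫ =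
      ∑ i, fderiv ℝ f x (EuclideanSpace.single i 1) * fderiv ℝ g x (EuclideanSpace.single i 1) := by
  rw [PiLp.inner_apply]
  refine Finset.sum_congr rfl fun i _ => ?_
  have h1 : fderiv ℝ f x (EuclideanSpace.single i 1) = gradient f x i := by
    rw [fderiv_eq_inner_gradient, EuclideanSpace.inner_single_right]; simp
  have h2 : fderiv ℝ g x (EuclideanSpace.single i 1) = gradient g x i := by
    rw [fderiv_eq_inner_gradient, EuclideanSpace.inner_single_right]; simp
  rw [h1, h2]; simp [RCLike.inner_apply]; ring

lemma scalar_key (U t p G B Iφ : ℝ) (hU : 0 < U) (hG : 0 ≤ G) (hp : 0 ≤ p)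
    (hIφ : |Iφ| ≤ p * G) :
    (t*t) * (-(U^2)⁻¹ * G^2) + U⁻¹ * (t * Iφ + t * Iφ) + (t*t/U) * B * G ≤
      p^2 + |B| * |t| * p + B^2/4 * t^2 := by
  have hX : (t*t) * (-(U^2)⁻¹ * G^2) + U⁻¹ * (t * Iφ + t * Iφ) + (t*t/U) * B * G
      = (-(t*t*G^2) + (t * Iφ + t * Iφ)*U + t*t*B*G*U)/U^2 := by
    field_simp
  rw [hX, div_le_iff₀ (by positivity)]
  have htI : t * Iφ ≤ |t| * (p * G) :=
    le_trans (le_abs_self _) (by rw [abs_mul]; exact mul_le_mul_of_nonneg_left hIφ (abs_nonneg t))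
  have htIU : (t * Iφ) * U ≤ (|t| * (p * G)) * U := mul_le_mul_of_nonneg_right htI hU.le
  have hBU : B * (t*t*G*U) ≤ |B| * (t*t*G*U) :=
    mul_le_mul_of_nonneg_right (le_abs_self B)
      (mul_nonneg (mul_nonneg (mul_self_nonneg t) hG) hU.le)
  have hs : t*t = abs t * abs t := (abs_mul_abs_self t).symm
  have ht2 : t^2 = (abs t)^2 := (sq_abs t).symm
  have hB2 : B^2 = (abs B)^2 := (sq_abs B).symm
  rw [hs, ht2, hB2]
  rw [hs] at hBU
  nlinarith [sq_nonneg ((p + abs B * abs t / 2) * U - abs t * G), htIU, hBU,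
    abs_nonneg t, abs_nonneg B, hU, hG, hp]

lemma pointwise_bound {N : ℕ} {Ω : Set (EuclideanSpace ℝ (Fin N))} (hΩ : IsOpen Ω)
    {u φ b c : EuclideanSpace ℝ (Fin N) → ℝ}
    (hu : ContDiffOn ℝ 2 u Ω) (hφ : ContDiff ℝ (⊤:ℕ∞) φ)
    {x : EuclideanSpace ℝ (Fin N)} (hx : x ∈ Ω) (hU : 0 < u x)
    (hsup : c x * u x ≤ -(lap u x) + b x * ‖gradient u x‖) :
    c x * φ x ^ 2 ≤
      -(∑ i, fderiv ℝ (fun y => φ y * φ y / u y * fderiv ℝ u y (EuclideanSpace.single i 1)) x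
          (EuclideanSpace.single i 1))
      + (‖gradient φ x‖^2 + |b x| * |φ x| * ‖gradient φ x‖ + (b x)^2/4 * (φ x)^2) := by
  have hUne : u x ≠ 0 := ne_of_gt hU
  have hu2 : ContDiffAt ℝ 2 u x := hu.contDiffAt (hΩ.mem_nhds hx)
  have hud : DifferentiableAt ℝ u x := hu2.differentiableAt (by norm_num)
  have hdu1 : ContDiffAt ℝ 1 (fderiv ℝ u) x := hu2.fderiv_right (by norm_num)
  have hφd : ∀ y, DifferentiableAt ℝ φ y := fun y => (hφ.differentiable (by simp)) y
  -- derivative of the inverse of u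
  have hinv : HasFDerivAt (fun y => (u y)⁻¹) ((-(u x^2)⁻¹) • fderiv ℝ u x) x :=
    (hasDerivAt_inv hUne).comp_hasFDerivAt x hud.hasFDerivAt
  have hφφd : DifferentiableAt ℝ (fun y => φ y * φ y) x := (hφd x).mul (hφd x)
  set w : EuclideanSpace ℝ (Fin N) → ℝ := fun y => φ y * φ y / u y with hw
  have hwd : DifferentiableAt ℝ w x := by
    simp only [hw, div_eq_mul_inv]
    exact hφφd.mul hinv.differentiableAt
  have hdw : fderiv ℝ w x = (φ x * φ x) • ((-(u x^2)⁻¹) • fderiv ℝ u x)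
      + (u x)⁻¹ • ((φ x) • fderiv ℝ φ x + (φ x) • fderiv ℝ φ x) := by
    have : w = fun y => (φ y * φ y) * (u y)⁻¹ := by
      funext y; simp only [hw, div_eq_mul_inv]
    rw [this, fderiv_fun_mul hφφd hinv.differentiableAt, hinv.fderiv,
      fderiv_fun_mul (hφd x) (hφd x)]
  -- g_i and its differentiability
  have hgd : ∀ i, DifferentiableAt ℝ (fun y => fderiv ℝ u y (EuclideanSpace.single i 1)) x :=
    fun i => (hdu1.differentiableAt one_ne_zero).clm_apply (differentiableAt_const _)
  -- divergence decomposition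
  have hDdecomp : (∑ i, fderiv ℝ (fun y => w y * fderiv ℝ u y (EuclideanSpace.single i 1)) x
        (EuclideanSpace.single i 1))
      = w x * lap u x + fderiv ℝ w x (gradient u x) := by
    have h1 : ∀ i : Fin N, fderiv ℝ (fun y => w y * fderiv ℝ u y (EuclideanSpace.single i 1)) x
        (EuclideanSpace.single i 1)
        = w x * fderiv ℝ (fun y => fderiv ℝ u y (EuclideanSpace.single i 1)) x (EuclideanSpace.single i 1)
          + fderiv ℝ u x (EuclideanSpace.single i 1) * fderiv ℝ w x (EuclideanSpace.single i 1) := by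
      intro i
      rw [fderiv_fun_mul hwd (hgd i)]
      simp [mul_comm]
    have hsum2 : ∑ i, fderiv ℝ u x (EuclideanSpace.single i 1) * fderiv ℝ w x (EuclideanSpace.single i 1)
        = fderiv ℝ w x (gradient u x) := by
      rw [← inner_gradients_eq_sum, real_inner_comm, ← fderiv_eq_inner_gradient]
    rw [Finset.sum_congr rfl (fun i _ => h1 i), Finset.sum_add_distrib, ← Finset.mul_sum, hsum2]
    rfl
  have hDval : fderiv ℝ w x (gradient u x)
      = (φ x * φ x) * (-(u x^2)⁻¹ * ‖gradient u x‖^2)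
        + (u x)⁻¹ * (φ x * fderiv ℝ φ x (gradient u x) + φ x * fderiv ℝ φ x (gradient u x)) := by
    rw [hdw]
    have hIu : fderiv ℝ u x (gradient u x) = ‖gradient u x‖^2 := by
      rw [fderiv_eq_inner_gradient, real_inner_self_eq_norm_sq]
    simp [hIu]
    ring
  -- multiply supersolution inequality by w x ≥ 0
  have hw0 : 0 ≤ w x := div_nonneg (mul_self_nonneg _) hU.le
  have hkey1 : c x * φ x ^ 2 ≤ w x * (-(lap u x)) + w x * (b x * ‖gradient u x‖) := by
    have := mul_le_mul_of_nonneg_left hsup hw0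
    calc c x * φ x ^ 2 = w x * (c x * u x) := by simp only [hw]; field_simp
    _ ≤ w x * (-(lap u x) + b x * ‖gradient u x‖) := this
    _ = w x * (-(lap u x)) + w x * (b x * ‖gradient u x‖) := by ring
  -- the quadratic bound
  have hquad : fderiv ℝ w x (gradient u x) + w x * (b x * ‖gradient u x‖)
      ≤ ‖gradient φ x‖^2 + |b x| * |φ x| * ‖gradient φ x‖ + (b x)^2/4 * (φ x)^2 := by
    rw [hDval]
    have hIφ : |fderiv ℝ φ x (gradient u x)| ≤ ‖gradient φ x‖ * ‖gradient u x‖ := by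
      rw [fderiv_eq_inner_gradient]
      exact abs_real_inner_le_norm _ _
    have := scalar_key (u x) (φ x) (‖gradient φ x‖) (‖gradient u x‖) (b x)
      (fderiv ℝ φ x (gradient u x)) hU (norm_nonneg _) (norm_nonneg _) hIφ
    calc (φ x * φ x) * (-(u x^2)⁻¹ * ‖gradient u x‖^2)
        + (u x)⁻¹ * (φ x * fderiv ℝ φ x (gradient u x) + φ x * fderiv ℝ φ x (gradient u x))
        + w x * (b x * ‖gradient u x‖)
        = (φ x * φ x) * (-(u x^2)⁻¹ * ‖gradient u x‖^2)
          + (u x)⁻¹ * (φ x * fderiv ℝ φ x (gradient u x) + φ x * fderiv ℝ φ x (gradient u x))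
          + (φ x * φ x / u x) * b x * ‖gradient u x‖ := by simp only [hw]; ring
      _ ≤ _ := this
  calc c x * φ x ^ 2 ≤ w x * (-(lap u x)) + w x * (b x * ‖gradient u x‖) := hkey1
    _ = -(w x * lap u x + fderiv ℝ w x (gradient u x))
        + (fderiv ℝ w x (gradient u x) + w x * (b x * ‖gradient u x‖)) := by ring
    _ ≤ -(w x * lap u x + fderiv ℝ w x (gradient u x))
        + (‖gradient φ x‖^2 + |b x| * |φ x| * ‖gradient φ x‖ + (b x)^2/4 * (φ x)^2) := by
        linarith [hquad]
    _ = _ := by rw [← hDdecomp]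


lemma fderiv_eq_zero_off {E F : Type*} [NormedAddCommGroup E] [NormedSpace ℝ E]
    [NormedAddCommGroup F] [NormedSpace ℝ F]
    {f : E → F} {K : Set E} (hK : IsClosed K) (h0 : ∀ x ∉ K, f x = 0)
    {x : E} (hx : x ∉ K) : fderiv ℝ f x = 0 := by
  have hev : f =ᶠ[nhds x] (fun _ => 0) :=
    Filter.eventually_of_mem (hK.isOpen_compl.mem_nhds hx) (fun y hy => h0 y hy)
  rw [hev.fderiv_eq, fderiv_fun_const]
  rfl

lemma pi_divergence_zero {n : ℕ} (F : Fin (n+1) → (Fin (n+1) → ℝ) → ℝ)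
    (K : Set (Fin (n+1) → ℝ)) (hK : IsCompact K)
    (hFd : ∀ i x, DifferentiableAt ℝ (F i) x)
    (hsupp : ∀ i, ∀ x ∉ K, F i x = 0)
    (hInt : Integrable (fun x => ∑ i, fderiv ℝ (F i) x (Pi.single i 1))) :
    ∫ x, ∑ i, fderiv ℝ (F i) x (Pi.single i 1) = 0 := by
  obtain ⟨R0, hR0⟩ := hK.isBounded.subset_ball 0
  set R : ℝ := |R0| + 1 with hR
  have hRpos : 0 < R := by positivity
  have hcoord : ∀ x ∈ K, ∀ i, |x i| < R := by
    intro x hx i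
    have h1 : ‖x i‖ ≤ ‖x‖ := norm_le_pi_norm x i
    have h2 : ‖x‖ < R0 := by simpa [Metric.mem_ball, dist_zero_right] using hR0 hx
    have : R0 ≤ R := by rw [hR]; have := le_abs_self R0; linarith
    calc |x i| ≤ ‖x‖ := h1
    _ < R := lt_of_lt_of_le h2 this
  set a : Fin (n+1) → ℝ := fun _ => -R
  set b : Fin (n+1) → ℝ := fun _ => R
  have hab : a ≤ b := fun i => by simp only [a, b]; linarith
  have hKsub : K ⊆ Icc a b := by
    intro x hx
    constructor <;> intro i <;> have := hcoord x hx i <;>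
      simp only [a, b] <;> cases abs_lt.1 this <;> linarith
  have hzero : ∀ x ∉ K, (∑ i, fderiv ℝ (F i) x (Pi.single i 1)) = 0 := by
    intro x hx
    refine Finset.sum_eq_zero fun i _ => ?_
    rw [fderiv_eq_zero_off hK.isClosed (hsupp i) hx]
    rfl
  have key := integral_divergence_of_hasFDerivAt_off_countable' a b hab F
    (fun i x => fderiv ℝ (F i) x) ∅ countable_empty
    (fun i => fun x _ => ((hFd i x).continuousAt).continuousWithinAt)
    (fun x _ i => (hFd i x).hasFDerivAt)
    hInt.integrableOn
  have hfaces : ∀ i : Fin (n+1),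
      ((∫ (x : Fin n → ℝ) in Icc (a ∘ i.succAbove) (b ∘ i.succAbove), F i (i.insertNth (b i) x)) -
       ∫ (x : Fin n → ℝ) in Icc (a ∘ i.succAbove) (b ∘ i.succAbove), F i (i.insertNth (a i) x)) = 0 := by
    intro i
    have h1 : ∀ x : Fin n → ℝ, F i (i.insertNth (b i) x) = 0 := by
      intro x
      refine hsupp i _ fun hmem => ?_
      have := hcoord _ hmem i
      rw [Fin.insertNth_apply_same] at this
      simp only [b] at this
      rw [abs_of_pos hRpos] at this
      exact lt_irrefl _ this
    have h2 : ∀ x : Fin n → ℝ, F i (i.insertNth (a i) x) = 0 := by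
      intro x
      refine hsupp i _ fun hmem => ?_
      have := hcoord _ hmem i
      rw [Fin.insertNth_apply_same] at this
      simp only [a, abs_neg] at this
      rw [abs_of_pos hRpos] at this
      exact lt_irrefl _ this
    simp [h1, h2]
  rw [setIntegral_eq_integral_of_forall_compl_eq_zero
    (fun x hx => hzero x (fun h => hx (hKsub h)))] at key
  rw [key, Finset.sum_congr rfl (fun i _ => hfaces i), Finset.sum_const_zero]

lemma euclidean_divergence_zero {n : ℕ} (F : Fin (n+1) → EuclideanSpace ℝ (Fin (n+1)) → ℝ)
    (K : Set (EuclideanSpace ℝ (Fin (n+1)))) (hK : IsCompact K)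
    (hFd : ∀ i x, DifferentiableAt ℝ (F i) x)
    (hsupp : ∀ i, ∀ x ∉ K, F i x = 0)
    (hInt : Integrable (fun x => ∑ i, fderiv ℝ (F i) x (EuclideanSpace.single i 1))) :
    ∫ x, ∑ i, fderiv ℝ (F i) x (EuclideanSpace.single i 1) = 0 := by
  set eL := EuclideanSpace.equiv (Fin (n+1)) ℝ with heL
  set me := (MeasurableEquiv.toLp 2 (Fin (n+1) → ℝ)).symm with hme
  have hmp : MeasurePreserving (⇑me) volume volume :=
    EuclideanSpace.volume_preserving_symm_measurableEquiv_toLp _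
  set G : Fin (n+1) → (Fin (n+1) → ℝ) → ℝ := fun i x => F i (eL.symm x) with hG
  have hGd : ∀ i x, DifferentiableAt ℝ (G i) x := fun i x =>
    (hFd i (eL.symm x)).comp x eL.symm.differentiableAt
  have hGderiv : ∀ i x, fderiv ℝ (G i) x =
      (fderiv ℝ (F i) (eL.symm x)).comp (eL.symm : (Fin (n+1) → ℝ) →L[ℝ] _) := by
    intro i x
    exact eL.symm.comp_right_fderiv
  have hsingle : ∀ i : Fin (n+1), eL.symm (Pi.single i 1) = EuclideanSpace.single i 1 := fun i => rfl
  have hdivG : ∀ x, (∑ i, fderiv ℝ (G i) x (Pi.single i 1)) =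
      ∑ i, fderiv ℝ (F i) (eL.symm x) (EuclideanSpace.single i 1) := by
    intro x
    refine Finset.sum_congr rfl fun i _ => ?_
    rw [hGderiv]
    rfl
  have hKG : IsCompact (eL '' K) := (hK.image eL.continuous)
  have hsuppG : ∀ i, ∀ x ∉ eL '' K, G i x = 0 := by
    intro i x hx
    refine hsupp i _ fun h => hx ⟨eL.symm x, h, by simp⟩
  have hIntG : Integrable (fun x => ∑ i, fderiv ℝ (G i) x (Pi.single i 1)) := by
    have : (fun x => ∑ i, fderiv ℝ (G i) x (Pi.single i 1)) =
        (fun y => ∑ i, fderiv ℝ (F i) y (EuclideanSpace.single i 1)) ∘ ⇑me.symm := by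
      funext x; exact hdivG x
    rw [this]
    exact (hmp.symm me).integrable_comp_emb me.symm.measurableEmbedding |>.2 hInt
  have h0 := pi_divergence_zero G (eL '' K) hKG hGd hsuppG hIntG
  have heq : ∫ (y : EuclideanSpace ℝ (Fin (n+1))), ∑ i, fderiv ℝ (F i) y (EuclideanSpace.single i 1)
      = ∫ x, ∑ i, fderiv ℝ (G i) x (Pi.single i 1) := by
    rw [← (hmp.symm me).integral_comp me.symm.measurableEmbedding]
    congr 1
    funext x
    exact (hdivG x).symm
  rw [heq, h0]

theorem stmt_5 {N : ℕ} (hN : 3 ≤ N) (Ω : Set (EuclideanSpace ℝ (Fin N))) (hΩ : IsOpen Ω)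
    (b c : EuclideanSpace ℝ (Fin N) → ℝ)
    (hb : ContinuousOn b Ω) (hc : ContinuousOn c Ω) (hc0 : ∀ x ∈ Ω, 0 ≤ c x)
    (u : EuclideanSpace ℝ (Fin N) → ℝ) (hu : ContDiffOn ℝ 2 u Ω)
    (hupos : ∀ x ∈ Ω, 0 < u x)
    (hsuper : ∀ x ∈ Ω, c x * u x ≤ -(lap u x) + b x * ‖gradient u x‖)
    (φ : EuclideanSpace ℝ (Fin N) → ℝ)
    (hφ : ContDiff ℝ (⊤ : ℕ∞) φ) (hφc : HasCompactSupport φ) (hφΩ : tsupport φ ⊆ Ω) :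
    (∫ x in Ω, (c x - (b x) ^ 2 / 4) * (φ x) ^ 2) ≤
      (∫ x in Ω, ‖gradient φ x‖ ^ 2) +
        2 * Real.sqrt ((∫ x in Ω, ‖gradient φ x‖ ^ 2) *
          (∫ x in Ω, (b x) ^ 2 / 4 * (φ x) ^ 2)) := by
  obtain ⟨n, rfl⟩ : ∃ n, N = n + 1 := ⟨N - 1, by omega⟩
  set K : Set (EuclideanSpace ℝ (Fin (n+1))) := tsupport φ with hK
  have hKc : IsCompact K := hφc
  have hKcl : IsClosed K := isClosed_tsupport φ
  have hKΩ : K ⊆ Ω := hφΩ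
  have hφ0 : ∀ x ∉ K, φ x = 0 := fun x hx => image_eq_zero_of_notMem_tsupport hx
  have hφ1 : ContDiff ℝ 1 φ := hφ.of_le (by exact_mod_cast le_top)
  have hφd : Differentiable ℝ φ := hφ1.differentiable one_ne_zero
  -- the vector field
  set F : Fin (n+1) → EuclideanSpace ℝ (Fin (n+1)) → ℝ :=
    fun i x => φ x * φ x / u x * fderiv ℝ u x (EuclideanSpace.single i 1) with hF
  have hF0 : ∀ i, ∀ x ∉ K, F i x = 0 := by
    intro i x hx; simp [hF, hφ0 x hx]
  -- regularity of F on Ω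
  have hFC1 : ∀ i, ∀ x ∈ Ω, ContDiffAt ℝ 1 (F i) x := by
    intro i x hx
    have hu2 : ContDiffAt ℝ 2 u x := hu.contDiffAt (hΩ.mem_nhds hx)
    have hdu1 : ContDiffAt ℝ 1 (fderiv ℝ u) x := hu2.fderiv_right (by norm_num)
    have hUne : u x ≠ 0 := ne_of_gt (hupos x hx)
    have hwc1 : ContDiffAt ℝ 1 (fun y => φ y * φ y / u y) x :=
      ((hφ1.contDiffAt).mul hφ1.contDiffAt).div (hu2.of_le (by norm_num)) hUne
    exact hwc1.mul (hdu1.clm_apply contDiffAt_const)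
  have hFd : ∀ i, ∀ x, DifferentiableAt ℝ (F i) x := by
    intro i x
    by_cases hx : x ∈ Ω
    · exact (hFC1 i x hx).differentiableAt one_ne_zero
    · have hxK : x ∉ K := fun h => hx (hKΩ h)
      have hev : F i =ᶠ[nhds x] (fun _ => 0) :=
        Filter.eventually_of_mem (hKcl.isOpen_compl.mem_nhds hxK) (fun y hy => hF0 i y hy)
      exact (Filter.EventuallyEq.differentiableAt_iff hev).2 (differentiableAt_const 0)
  -- the divergence
  set D : EuclideanSpace ℝ (Fin (n+1)) → ℝ :=
    fun x => ∑ i, fderiv ℝ (F i) x (EuclideanSpace.single i 1) with hD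
  have hD0 : ∀ x ∉ K, D x = 0 := by
    intro x hx
    refine Finset.sum_eq_zero fun i _ => ?_
    rw [fderiv_eq_zero_off hKcl (hF0 i) hx]; rfl
  have hDcont : Continuous D := by
    refine glue_continuous_s5 hΩ hKcl hKΩ ?_ hD0
    intro x hx
    refine ContinuousAt.continuousWithinAt ?_
    have : ∀ i : Fin (n+1),
        ContinuousAt (fun y => fderiv ℝ (F i) y (EuclideanSpace.single i 1)) x := by
      intro i
      have h1 : ContinuousAt (fderiv ℝ (F i)) x :=
        ((hFC1 i x hx).fderiv_right (m := 0) (by norm_num)).continuousAt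
      exact ((ContinuousLinearMap.apply ℝ ℝ
        (EuclideanSpace.single i (1:ℝ))).continuous.continuousAt).comp h1
    exact tendsto_finset_sum _ fun i _ => this i
  have hDsupp : HasCompactSupport D := HasCompactSupport.intro hKc hD0
  have hDint : Integrable D := hDcont.integrable_of_hasCompactSupport hDsupp
  have hDzero : (∫ x, D x) = 0 := euclidean_divergence_zero F K hKc hFd hF0 hDint
  have hDΩ : (∫ x in Ω, D x) = 0 := by
    rw [setIntegral_eq_integral_of_forall_compl_eq_zero
      (fun x hx => hD0 x (fun h => hx (hKΩ h)))]
    exact hDzero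
  -- the auxiliary integrands
  set Pf : EuclideanSpace ℝ (Fin (n+1)) → ℝ := fun x => ‖gradient φ x‖^2 with hPf
  set Qf : EuclideanSpace ℝ (Fin (n+1)) → ℝ := fun x => |b x| * |φ x| * ‖gradient φ x‖ with hQf
  set Bf : EuclideanSpace ℝ (Fin (n+1)) → ℝ := fun x => (b x)^2/4 * (φ x)^2 with hBf
  set Cf : EuclideanSpace ℝ (Fin (n+1)) → ℝ := fun x => c x * (φ x)^2 with hCf
  -- continuity of the gradient of φ
  have hgradcont : Continuous (fun x => gradient φ x) := by
    have h1 : Continuous (fderiv ℝ φ) := (hφ.fderiv_right (by rw [zero_add]; exact_mod_cast le_top)).continuous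
    exact ((InnerProductSpace.toDual ℝ _).symm.continuous).comp h1
  have hgrad0 : ∀ x ∉ K, gradient φ x = 0 := by
    intro x hx
    rw [gradient, fderiv_eq_zero_off hKcl hφ0 hx]
    simp
  -- integrability of everything
  have hPcont : Continuous Pf := (hgradcont.norm).pow 2
  have hPint : Integrable Pf := hPcont.integrable_of_hasCompactSupport
    (HasCompactSupport.intro hKc (fun x hx => by simp [hPf, hgrad0 x hx]))
  have hQcont : Continuous Qf := by
    refine glue_continuous_s5 hΩ hKcl hKΩ ?_ (fun x hx => by simp [hQf, hφ0 x hx])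
    exact ((hb.abs.mul (hφ.continuous.abs.continuousOn)).mul (hgradcont.norm.continuousOn))
  have hQint : Integrable Qf := hQcont.integrable_of_hasCompactSupport
    (HasCompactSupport.intro hKc (fun x hx => by simp [hQf, hφ0 x hx]))
  have hBcont : Continuous Bf := by
    refine glue_continuous_s5 hΩ hKcl hKΩ ?_ (fun x hx => by simp [hBf, hφ0 x hx])
    exact (((hb.pow 2).div_const 4).mul ((hφ.continuous.pow 2).continuousOn))
  have hBint : Integrable Bf := hBcont.integrable_of_hasCompactSupport
    (HasCompactSupport.intro hKc (fun x hx => by simp [hBf, hφ0 x hx]))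
  have hCcont : Continuous Cf := by
    refine glue_continuous_s5 hΩ hKcl hKΩ ?_ (fun x hx => by simp [hCf, hφ0 x hx])
    exact (hc.mul ((hφ.continuous.pow 2).continuousOn))
  have hCint : Integrable Cf := hCcont.integrable_of_hasCompactSupport
    (HasCompactSupport.intro hKc (fun x hx => by simp [hCf, hφ0 x hx]))
  -- pointwise bound on Ω
  have hptwise : ∀ x ∈ Ω, Cf x ≤ -D x + (Pf x + Qf x + Bf x) := by
    intro x hx
    exact pointwise_bound hΩ hu hφ hx (hupos x hx) (hsuper x hx)
  -- set integrals equal to full integrals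
  have hPeq : (∫ x in Ω, Pf x) = ∫ x, Pf x :=
    setIntegral_eq_integral_of_forall_compl_eq_zero
      (fun x hx => by simp [hPf, hgrad0 x (fun h => hx (hKΩ h))])
  have hQeq : (∫ x in Ω, Qf x) = ∫ x, Qf x :=
    setIntegral_eq_integral_of_forall_compl_eq_zero
      (fun x hx => by simp [hQf, hφ0 x (fun h => hx (hKΩ h))])
  have hBeq : (∫ x in Ω, Bf x) = ∫ x, Bf x :=
    setIntegral_eq_integral_of_forall_compl_eq_zero
      (fun x hx => by simp [hBf, hφ0 x (fun h => hx (hKΩ h))])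
  -- main integral inequality
  have hRcont : Continuous (fun x => -D x + (Pf x + Qf x + Bf x)) :=
    (hDcont.neg).add ((hPcont.add hQcont).add hBcont)
  have hRint : Integrable (fun x => -D x + (Pf x + Qf x + Bf x)) :=
    hRcont.integrable_of_hasCompactSupport
      (HasCompactSupport.intro hKc (fun x hx => by
        simp [hD0 x hx, hPf, hQf, hBf, hgrad0 x hx, hφ0 x hx]))
  have hnegDint : Integrable (fun x => -D x) := hDcont.neg.integrable_of_hasCompactSupport
    (HasCompactSupport.intro hKc (fun x hx => by simp [hD0 x hx]))
  have hPQint : Integrable (fun x => Pf x + Qf x) :=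
    (hPcont.add hQcont).integrable_of_hasCompactSupport
      (HasCompactSupport.intro hKc (fun x hx => by simp [hPf, hQf, hgrad0 x hx, hφ0 x hx]))
  have hPQBint : Integrable (fun x => Pf x + Qf x + Bf x) :=
    ((hPcont.add hQcont).add hBcont).integrable_of_hasCompactSupport
      (HasCompactSupport.intro hKc (fun x hx => by
        simp [hPf, hQf, hBf, hgrad0 x hx, hφ0 x hx]))
  have hmono : (∫ x in Ω, Cf x) ≤ ∫ x in Ω, (-D x + (Pf x + Qf x + Bf x)) := by
    refine setIntegral_mono_on hCint.integrableOn ?_ hΩ.measurableSet hptwise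
    exact hRint.integrableOn
  have hsplit : (∫ x in Ω, (-D x + (Pf x + Qf x + Bf x)))
      = -(∫ x in Ω, D x) + ((∫ x in Ω, Pf x) + (∫ x in Ω, Qf x) + (∫ x in Ω, Bf x)) := by
    rw [integral_add hnegDint.integrableOn hPQBint.integrableOn,
      integral_add hPQint.integrableOn hBint.integrableOn,
      integral_add hPint.integrableOn hQint.integrableOn, integral_neg]
  -- Cauchy–Schwarz for ∫ Qf
  set A : ℝ := ∫ x in Ω, Pf x with hA
  set B2 : ℝ := ∫ x in Ω, Bf x with hB2
  have hA0 : 0 ≤ A := setIntegral_nonneg hΩ.measurableSet (fun x _ => by positivity)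
  have hB20 : 0 ≤ B2 := setIntegral_nonneg hΩ.measurableSet (fun x _ => by positivity)
  have hCS : (∫ x in Ω, Qf x) ≤ 2 * Real.sqrt (A * B2) := by
    set f : EuclideanSpace ℝ (Fin (n+1)) → ℝ := fun x => ‖gradient φ x‖ with hf
    set g : EuclideanSpace ℝ (Fin (n+1)) → ℝ := fun x => |b x * φ x| with hg
    have hfc : Continuous f := hgradcont.norm
    have hgc : Continuous g := by
      refine glue_continuous_s5 hΩ hKcl hKΩ ?_ (fun x hx => by simp [hg, hφ0 x hx])
      exact (hb.mul hφ.continuous.continuousOn).abs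
    have hfm : MemLp f (ENNReal.ofReal 2) volume := by
      rw [show ENNReal.ofReal 2 = 2 by norm_num [ENNReal.ofReal_ofNat]]
      exact hfc.memLp_of_hasCompactSupport
        (HasCompactSupport.intro hKc (fun x hx => by simp [hf, hgrad0 x hx]))
    have hgm : MemLp g (ENNReal.ofReal 2) volume := by
      rw [show ENNReal.ofReal 2 = 2 by norm_num [ENNReal.ofReal_ofNat]]
      exact hgc.memLp_of_hasCompactSupport
        (HasCompactSupport.intro hKc (fun x hx => by simp [hg, hφ0 x hx]))
    have hconj : Real.HolderConjugate 2 2 := Real.HolderConjugate.two_two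
    have hhold := integral_mul_le_Lp_mul_Lq_of_nonneg hconj
      (Filter.Eventually.of_forall (fun x => norm_nonneg _))
      (Filter.Eventually.of_forall (fun x => abs_nonneg _)) hfm hgm
    have e1 : (∫ x, f x ^ (2:ℝ)) = ∫ x, Pf x := by
      refine integral_congr_ae (Filter.Eventually.of_forall fun x => ?_)
      show f x ^ (2:ℝ) = Pf x
      rw [show ((2:ℝ)) = ((2:ℕ):ℝ) by norm_num, Real.rpow_natCast]
    have e2 : (∫ x, g x ^ (2:ℝ)) = 4 * ∫ x, Bf x := by
      rw [← integral_const_mul]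
      refine integral_congr_ae (Filter.Eventually.of_forall fun x => ?_)
      show g x ^ (2:ℝ) = 4 * Bf x
      rw [show ((2:ℝ)) = ((2:ℕ):ℝ) by norm_num, Real.rpow_natCast]
      simp only [hg, hBf, sq_abs]
      ring
    have e3 : (∫ x, f x * g x) = ∫ x, Qf x := by
      refine integral_congr_ae (Filter.Eventually.of_forall fun x => ?_)
      simp only [hf, hg, hQf, abs_mul]
      ring
    rw [e1, e2, e3, ← hPeq, ← hBeq] at hhold
    calc (∫ x in Ω, Qf x) = ∫ x, Qf x := hQeq
      _ ≤ A ^ ((1:ℝ)/2) * (4 * B2) ^ ((1:ℝ)/2) := hhold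
      _ = Real.sqrt A * Real.sqrt (4 * B2) := by
          rw [← Real.sqrt_eq_rpow, ← Real.sqrt_eq_rpow]
      _ = 2 * Real.sqrt (A * B2) := by
          rw [Real.sqrt_mul (by norm_num : (0:ℝ) ≤ 4),
            show Real.sqrt 4 = 2 by
              rw [show (4:ℝ) = 2^2 by norm_num, Real.sqrt_sq (by norm_num : (0:ℝ) ≤ 2)],
            Real.sqrt_mul hA0]
          ring
  -- final assembly
  have hCineq : (∫ x in Ω, Cf x) ≤ A + 2 * Real.sqrt (A * B2) + B2 := by
    calc (∫ x in Ω, Cf x) ≤ ∫ x in Ω, (-D x + (Pf x + Qf x + Bf x)) := hmono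
      _ = -(∫ x in Ω, D x) + (A + (∫ x in Ω, Qf x) + B2) := by rw [hsplit]
      _ = A + (∫ x in Ω, Qf x) + B2 := by rw [hDΩ]; ring
      _ ≤ A + 2 * Real.sqrt (A * B2) + B2 := by linarith [hCS]
  have hLHS : (∫ x in Ω, (c x - (b x) ^ 2 / 4) * (φ x) ^ 2)
      = (∫ x in Ω, Cf x) - B2 := by
    rw [hB2, ← integral_sub hCint.integrableOn hBint.integrableOn]
    refine setIntegral_congr_ae hΩ.measurableSet (Filter.Eventually.of_forall fun x _ => ?_)
    simp only [hCf, hBf]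
    ring
  rw [hLHS]
  linarith [hCineq]
end

section
/- Let N ≥ 3, R₀ > 0, Ω = {x ∈ ℝ^N : |x| > R₀}, and let b, c : Ω → ℝ be continuous with c(x) − b(x)²/4 > 0 for all sufficiently large |x|. Suppose τ := limsup_{|x|→∞} |x|·|b(x)| is finite. If liminf_{|x|→∞} |x|² c(x) > (N − 2 + τ)²/4, then the equation −Δu + b(x)|∇u| = c(x)u has no positive classical supersolution on Ω. -/
open MeasureTheory Filter

section Aux
open Set


lemma sd_test {h h1 : ℝ → ℝ} {d : ℝ}
    (hmin : ∀ᶠ t in nhds (0:ℝ), 0 ≤ h t) (h0 : h 0 = 0)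
    (hd : ∀ᶠ t in nhds (0:ℝ), HasDerivAt h (h1 t) t)
    (hd2 : HasDerivAt h1 d 0) : 0 ≤ d := by
  by_contra hneg
  push_neg at hneg
  have hlm : IsLocalMin h 0 := by
    filter_upwards [hmin] with t ht
    simpa [h0] using ht
  have h10 : h1 0 = 0 := hlm.hasDerivAt_eq_zero hd.self_of_nhds
  -- slope tendsto
  have hslope : Tendsto (slope h1 0) (nhdsWithin 0 {(0:ℝ)}ᶜ) (nhds d) :=
    hasDerivAt_iff_tendsto_slope.mp hd2
  have hev : ∀ᶠ t in nhdsWithin 0 {(0:ℝ)}ᶜ, slope h1 0 t < d/2 :=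
    hslope.eventually_lt_const (by linarith)
  rw [eventually_nhdsWithin_iff] at hev
  obtain ⟨δ₁, hδ₁, H1⟩ := Metric.eventually_nhds_iff.mp ((hmin.and hd).and hev)
  set δ := δ₁/2 with hδdef
  have hδpos : 0 < δ := by positivity
  have hmem : ∀ t ∈ Icc (0:ℝ) δ, dist t (0:ℝ) < δ₁ := by
    intro t ht
    rw [Real.dist_eq, sub_zero]
    rw [abs_of_nonneg ht.1]
    linarith [ht.2]
  have hneg1 : ∀ t ∈ Ioo (0:ℝ) δ, h1 t < 0 := by
    intro t ht
    have := ((H1 (hmem t ⟨le_of_lt ht.1, le_of_lt ht.2⟩)).2) (by simp [ne_of_gt ht.1])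
    have hs : slope h1 0 t = h1 t / t := by simp [slope, h10, div_eq_inv_mul]
    rw [hs] at this
    have : h1 t < t * (d/2) := by
      have := (div_lt_iff₀ ht.1).mp this
      linarith
    nlinarith [ht.1, hneg]
  have hanti : StrictAntiOn h (Icc (0:ℝ) δ) := by
    apply strictAntiOn_of_deriv_neg (convex_Icc _ _)
    · intro t ht
      exact (((H1 (hmem t ht)).1).2).differentiableAt.continuousAt.continuousWithinAt
    · intro t ht
      rw [interior_Icc] at ht
      rw [(((H1 (hmem t ⟨le_of_lt ht.1, le_of_lt ht.2⟩)).1).2).deriv]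
      exact hneg1 t ht
  have : h δ < h 0 := hanti ⟨le_refl _, le_of_lt hδpos⟩ ⟨le_of_lt hδpos, le_refl _⟩ hδpos
  have : 0 ≤ h δ := ((H1 (hmem δ ⟨le_of_lt hδpos, le_refl _⟩)).1).1
  linarith [h0 ▸ hanti ⟨le_refl _, le_of_lt hδpos⟩ ⟨le_of_lt hδpos, le_refl _⟩ hδpos]

set_option maxHeartbeats 1000000 in

lemma exists_w (N' τ' M' : ℝ) (hN' : 1 ≤ N') (hτ' : 0 ≤ τ')
    (hM' : (N' + τ')^2/4 < M') :
    ∃ (w w1 w2 : ℝ → ℝ) (s₂ : ℝ), 0 < s₂ ∧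
      (∀ s, HasDerivAt w (w1 s) s) ∧ (∀ s, HasDerivAt w1 (w2 s) s) ∧
      w 0 = 0 ∧ w s₂ = 0 ∧ (∀ s ∈ Set.Icc (0:ℝ) s₂, 0 ≤ w s) ∧
      (∀ s ∈ Set.Ioo (0:ℝ) s₂, 0 < w s) ∧
      (∀ s ∈ Set.Ioo (0:ℝ) s₂, 0 < w2 s + N' * w1 s - τ' * |w1 s| + M' * w s) := by
  set a : ℝ := (N' + τ')/2 with ha_def
  set γ : ℝ := (τ' - N')/2 with hγ_def
  have ha_pos : 0 < a := by rw [ha_def]; linarith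
  have hω2 : 0 < M' - a^2 := by
    rw [ha_def]
    have h9 : ((N'+τ')/2)^2 = (N'+τ')^2/4 := by ring
    linarith
  set wt : ℝ := Real.sqrt (M' - a^2) / 2 with hwt_def
  have hwt_pos : 0 < wt := by
    rw [hwt_def]; positivity
  have hwt_sq : wt^2 = (M' - a^2)/4 := by
    rw [hwt_def, div_pow, Real.sq_sqrt (le_of_lt hω2)]; norm_num
  set nt : ℝ := Real.sqrt (wt^2 + N' * τ') with hnt_def
  have hnt0 : (0:ℝ) < wt^2 + N' * τ' := by
    have h8 : 0 < wt^2 := by positivity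
    have h9 : 0 ≤ N' * τ' := mul_nonneg (by linarith) hτ'
    linarith
  have hnt_pos : 0 < nt := by
    rw [hnt_def]; exact Real.sqrt_pos.mpr hnt0
  have hnt_sq : nt^2 = wt^2 + N' * τ' := Real.sq_sqrt (le_of_lt hnt0)
  have hγa : γ^2 + N' * τ' = a^2 := by rw [hγ_def, ha_def]; ring
  set ε₀ : ℝ := M' - γ^2 - nt^2 with hε₀_def
  have hε₀_eq : ε₀ = M' - a^2 - wt^2 := by
    rw [hε₀_def, hnt_sq]; linarith [hγa]
  have hε₀_pos : 0 < ε₀ := by rw [hε₀_eq, hwt_sq]; linarith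
  -- Piece A
  set A : ℝ → ℝ := fun s => Real.exp (γ*s) * Real.sin (nt*s) with hA_def
  set p : ℝ → ℝ := fun s => γ * Real.sin (nt*s) + nt * Real.cos (nt*s) with hp_def
  set A1 : ℝ → ℝ := fun s => Real.exp (γ*s) * p s with hA1_def
  set A2 : ℝ → ℝ := fun s => Real.exp (γ*s) *
      ((γ^2 - nt^2) * Real.sin (nt*s) + 2*γ*nt*Real.cos (nt*s)) with hA2_def
  have hexp : ∀ s : ℝ, HasDerivAt (fun s => Real.exp (γ*s)) (γ * Real.exp (γ*s)) s := by
    intro s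
    have := (((hasDerivAt_id s).const_mul γ).exp)
    simpa [mul_comm] using this
  have hsin : ∀ s : ℝ, HasDerivAt (fun s => Real.sin (nt*s)) (nt * Real.cos (nt*s)) s := by
    intro s
    have := (((hasDerivAt_id s).const_mul nt).sin)
    simpa [mul_comm] using this
  have hcos : ∀ s : ℝ, HasDerivAt (fun s => Real.cos (nt*s)) (-(nt * Real.sin (nt*s))) s := by
    intro s
    have := (((hasDerivAt_id s).const_mul nt).cos)
    simpa [mul_comm] using this
  have hA : ∀ s, HasDerivAt A (A1 s) s := by
    intro s
    have := (hexp s).fun_mul (hsin s)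
    refine this.congr_deriv ?_
    simp only [hA1_def, hp_def]; ring
  have hA1 : ∀ s, HasDerivAt A1 (A2 s) s := by
    intro s
    have hp' : HasDerivAt p (γ * (nt * Real.cos (nt*s)) + nt * (-(nt * Real.sin (nt*s)))) s := by
      exact ((hsin s).const_mul γ).add ((hcos s).const_mul nt)
    have := (hexp s).fun_mul hp'
    refine this.congr_deriv ?_
    simp only [hA2_def, hp_def]; ring
  -- first zero of p
  have hp_cont : Continuous p := by
    rw [hp_def]; fun_prop
  have hp0 : p 0 = nt := by simp [hp_def]
  have hppi : p (Real.pi / nt) = -nt := by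
    have : nt * (Real.pi / nt) = Real.pi := by field_simp
    simp [hp_def, this]
  set Z : Set ℝ := {s | s ∈ Icc 0 (Real.pi/nt) ∧ p s ≤ 0} with hZ_def
  have hZne : Z.Nonempty := ⟨Real.pi/nt, ⟨⟨by positivity, le_refl _⟩, by rw [hppi]; linarith⟩⟩
  have hZclosed : IsClosed Z := by
    have h : Z = Icc 0 (Real.pi/nt) ∩ p ⁻¹' (Iic 0) := rfl
    rw [h]
    exact isClosed_Icc.inter (IsClosed.preimage hp_cont isClosed_Iic)
  have hZbdd : BddBelow Z := ⟨0, fun s hs => hs.1.1⟩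
  set s₁ : ℝ := sInf Z with hs₁_def
  have hs₁Z : s₁ ∈ Z := hZclosed.csInf_mem hZne hZbdd
  have hps₁ : p s₁ ≤ 0 := hs₁Z.2
  have hs₁_mem : s₁ ∈ Icc 0 (Real.pi/nt) := hs₁Z.1
  have hp_pos : ∀ s, 0 ≤ s → s < s₁ → 0 < p s := by
    intro s hs0 hss
    by_contra hcon
    push_neg at hcon
    have : s ∈ Z := ⟨⟨hs0, le_trans (le_of_lt hss) hs₁_mem.2⟩, hcon⟩
    exact absurd (csInf_le hZbdd this) (not_le.mpr hss)
  have hs₁_pos : 0 < s₁ := by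
    rcases lt_or_eq_of_le hs₁_mem.1 with h | h
    · exact h
    · exfalso; rw [← h, hp0] at hps₁; linarith
  have hps₁0 : p s₁ = 0 := by
    refine le_antisymm hps₁ ?_
    have htd : Tendsto p (nhdsWithin s₁ (Iio s₁)) (nhds (p s₁)) :=
      (hp_cont.continuousAt).continuousWithinAt.tendsto
    refine ge_of_tendsto htd ?_
    rw [eventually_nhdsWithin_iff]
    filter_upwards [eventually_gt_nhds hs₁_pos] with s hs hs'
    exact le_of_lt (hp_pos s (le_of_lt hs) hs')
  have hs₁_lt : s₁ < Real.pi/nt := by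
    rcases lt_or_eq_of_le hs₁_mem.2 with h | h
    · exact h
    · exfalso; rw [h, hppi] at hps₁0; linarith
  have hsin_s₁ : 0 < Real.sin (nt * s₁) := by
    apply Real.sin_pos_of_pos_of_lt_pi
    · positivity
    · calc nt * s₁ < nt * (Real.pi/nt) := by
            exact (mul_lt_mul_iff_right₀ hnt_pos).mpr hs₁_lt
        _ = Real.pi := by field_simp
  set V : ℝ := A s₁ with hV_def
  have hV_pos : 0 < V := by
    rw [hV_def, hA_def]; positivity
  have hA1s₁ : A1 s₁ = 0 := by rw [hA1_def]; simp [hps₁0]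
  -- A increasing on [0, s₁]
  have hA_mono : StrictMonoOn A (Icc 0 s₁) := by
    apply strictMonoOn_of_deriv_pos (convex_Icc _ _)
    · exact fun s _ => ((hA s).differentiableAt.continuousAt).continuousWithinAt
    · intro s hs
      rw [interior_Icc] at hs
      rw [(hA s).deriv, hA1_def]
      have := hp_pos s (le_of_lt hs.1) hs.2
      positivity
  have hA_pos : ∀ s, 0 < s → s ≤ s₁ → 0 < A s := by
    intro s hs0 hss
    have h0 : A 0 = 0 := by simp [hA_def]
    calc (0:ℝ) = A 0 := h0.symm
      _ < A s := hA_mono ⟨le_refl _, le_of_lt hs₁_pos⟩ ⟨le_of_lt hs0, hss⟩ hs0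
  -- Piece B
  set q : ℝ → ℝ := fun s => wt * Real.cos (wt*(s-s₁)) + a * Real.sin (wt*(s-s₁)) with hq_def
  set B : ℝ → ℝ := fun s => (V/wt) * Real.exp (-(a*(s-s₁))) * q s with hB_def
  set B1 : ℝ → ℝ := fun s => -((V/wt) * (a^2+wt^2)) *
      (Real.exp (-(a*(s-s₁))) * Real.sin (wt*(s-s₁))) with hB1_def
  set B2 : ℝ → ℝ := fun s => -(2*a*B1 s) - (a^2+wt^2) * B s with hB2_def
  have hin : ∀ s : ℝ, HasDerivAt (fun s => wt*(s-s₁)) wt s := by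
    intro s
    simpa using (((hasDerivAt_id s).sub_const s₁).const_mul wt)
  have hexp2 : ∀ s : ℝ, HasDerivAt (fun s => Real.exp (-(a*(s-s₁))))
      (-a * Real.exp (-(a*(s-s₁)))) s := by
    intro s
    have h1 : HasDerivAt (fun s : ℝ => -(a*(s-s₁))) (-a) s := by
      simpa using (((hasDerivAt_id s).sub_const s₁).const_mul a).fun_neg
    simpa [mul_comm] using h1.exp
  have hsin2 : ∀ s : ℝ, HasDerivAt (fun s => Real.sin (wt*(s-s₁))) (wt * Real.cos (wt*(s-s₁))) s := by
    intro s
    simpa [mul_comm] using (hin s).sin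
  have hcos2 : ∀ s : ℝ, HasDerivAt (fun s => Real.cos (wt*(s-s₁))) (-(wt * Real.sin (wt*(s-s₁)))) s := by
    intro s
    simpa [mul_comm] using (hin s).cos
  have hq' : ∀ s : ℝ, HasDerivAt q (wt * (-(wt * Real.sin (wt*(s-s₁)))) + a * (wt * Real.cos (wt*(s-s₁)))) s := by
    intro s
    exact ((hcos2 s).const_mul wt).add ((hsin2 s).const_mul a)
  have hB : ∀ s, HasDerivAt B (B1 s) s := by
    intro s
    have h1 := ((hexp2 s).const_mul (V/wt)).fun_mul (hq' s)
    refine h1.congr_deriv ?_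
    simp only [hB1_def, hq_def]; ring
  have hB1 : ∀ s, HasDerivAt B1 (B2 s) s := by
    intro s
    have h1 := ((hexp2 s).fun_mul (hsin2 s)).const_mul (-((V/wt) * (a^2+wt^2)))
    refine h1.congr_deriv ?_
    simp only [hB2_def, hB1_def, hB_def, hq_def]; ring
  -- first zero of q after s₁
  have hq_cont : Continuous q := by rw [hq_def]; fun_prop
  have hq0 : q s₁ = wt := by simp [hq_def]
  have hqpi : q (s₁ + Real.pi / wt) = -wt := by
    have h1 : wt * (s₁ + Real.pi/wt - s₁) = Real.pi := by
      have h2 : s₁ + Real.pi/wt - s₁ = Real.pi/wt := by ring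
      rw [h2]; field_simp
    show wt * Real.cos (wt*(s₁ + Real.pi/wt - s₁)) + a * Real.sin (wt*(s₁ + Real.pi/wt - s₁)) = -wt
    rw [h1]; simp
  set Z2 : Set ℝ := {s | s ∈ Icc s₁ (s₁ + Real.pi/wt) ∧ q s ≤ 0} with hZ2_def
  have hZ2ne : Z2.Nonempty :=
    ⟨s₁ + Real.pi/wt, ⟨⟨by linarith [div_pos Real.pi_pos hwt_pos], le_refl _⟩, by rw [hqpi]; linarith⟩⟩
  have hZ2closed : IsClosed Z2 := by
    have h : Z2 = Icc s₁ (s₁ + Real.pi/wt) ∩ q ⁻¹' (Iic 0) := rfl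
    rw [h]
    exact isClosed_Icc.inter (IsClosed.preimage hq_cont isClosed_Iic)
  have hZ2bdd : BddBelow Z2 := ⟨s₁, fun s hs => hs.1.1⟩
  set s₂ : ℝ := sInf Z2 with hs₂_def
  have hs₂Z : s₂ ∈ Z2 := hZ2closed.csInf_mem hZ2ne hZ2bdd
  have hqs₂ : q s₂ ≤ 0 := hs₂Z.2
  have hs₂_mem : s₂ ∈ Icc s₁ (s₁ + Real.pi/wt) := hs₂Z.1
  have hq_pos : ∀ s, s₁ ≤ s → s < s₂ → 0 < q s := by
    intro s hs0 hss
    by_contra hcon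
    push_neg at hcon
    have : s ∈ Z2 := ⟨⟨hs0, le_trans (le_of_lt hss) hs₂_mem.2⟩, hcon⟩
    exact absurd (csInf_le hZ2bdd this) (not_le.mpr hss)
  have hs₂_gt : s₁ < s₂ := by
    rcases lt_or_eq_of_le hs₂_mem.1 with h | h
    · exact h
    · exfalso; rw [← h, hq0] at hqs₂; linarith
  have hqs₂0 : q s₂ = 0 := by
    refine le_antisymm hqs₂ ?_
    have htd : Tendsto q (nhdsWithin s₂ (Iio s₂)) (nhds (q s₂)) :=
      (hq_cont.continuousAt).continuousWithinAt.tendsto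
    refine ge_of_tendsto htd ?_
    rw [eventually_nhdsWithin_iff]
    filter_upwards [eventually_gt_nhds hs₂_gt] with s hs hs'
    exact le_of_lt (hq_pos s (le_of_lt hs) hs')
  have hs₂_lt : s₂ < s₁ + Real.pi/wt := by
    rcases lt_or_eq_of_le hs₂_mem.2 with h | h
    · exact h
    · exfalso; rw [h, hqpi] at hqs₂0; linarith
  have hB_pos : ∀ s, s₁ ≤ s → s < s₂ → 0 < B s := by
    intro s h1 h2
    have := hq_pos s h1 h2
    rw [hB_def]
    have : 0 < V/wt := by positivity
    positivity
  have hB1_nonpos : ∀ s, s₁ ≤ s → s ≤ s₂ → B1 s ≤ 0 := by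
    intro s h1 h2
    simp only [hB1_def]
    have hsin_nn : 0 ≤ Real.sin (wt*(s-s₁)) := by
      apply Real.sin_nonneg_of_nonneg_of_le_pi
      · have : 0 ≤ s - s₁ := by linarith
        positivity
      · have h3 : s - s₁ ≤ Real.pi/wt := by
          have := le_trans h2 (le_of_lt hs₂_lt)
          linarith
        calc wt*(s-s₁) ≤ wt*(Real.pi/wt) := by
              exact mul_le_mul_of_nonneg_left h3 (le_of_lt hwt_pos)
          _ = Real.pi := by field_simp
    have h4 : 0 < (V/wt) * (a^2+wt^2) := by positivity
    have h5 : 0 < Real.exp (-(a*(s-s₁))) := Real.exp_pos _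
    rw [neg_mul]
    exact neg_nonpos_of_nonneg
      (mul_nonneg (le_of_lt h4) (mul_nonneg (le_of_lt h5) hsin_nn))
  have hBs₁ : B s₁ = V := by
    rw [hB_def]; simp [hq_def]; field_simp
  have hB1s₁ : B1 s₁ = 0 := by rw [hB1_def]; simp
  have hB2s₁ : A2 s₁ = B2 s₁ := by
    have hcs : nt * Real.cos (nt*s₁) = -(γ * Real.sin (nt*s₁)) := by
      have := hps₁0
      rw [hp_def] at this
      simp only at this
      linarith
    simp only [hB2_def, hA2_def]
    rw [hB1s₁, hBs₁]
    have hV' : V = Real.exp (γ*s₁) * Real.sin (nt*s₁) := by rw [hV_def, hA_def]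
    rw [hV']
    have hkey : γ^2 + nt^2 = a^2 + wt^2 := by
      rw [hnt_sq]; linarith [hγa]
    linear_combination (2*γ*Real.exp (γ*s₁)) * hcs -
      (Real.exp (γ*s₁) * Real.sin (nt*s₁)) * hkey
  -- glue
  set w : ℝ → ℝ := fun s => if s ≤ s₁ then A s else B s with hw_def
  set w1 : ℝ → ℝ := fun s => if s ≤ s₁ then A1 s else B1 s with hw1_def
  set w2 : ℝ → ℝ := fun s => if s ≤ s₁ then A2 s else B2 s with hw2_def
  have hwA : ∀ s, s ≤ s₁ → w s = A s := fun s hs => if_pos hs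
  have hwB : ∀ s, s₁ ≤ s → w s = B s := by
    intro s hs
    rcases lt_or_eq_of_le hs with h | h
    · exact if_neg (not_le.mpr h)
    · rw [← h, hwA s₁ le_rfl, hBs₁, hV_def]
  have hw1A : ∀ s, s ≤ s₁ → w1 s = A1 s := fun s hs => if_pos hs
  have hw1B : ∀ s, s₁ ≤ s → w1 s = B1 s := by
    intro s hs
    rcases lt_or_eq_of_le hs with h | h
    · exact if_neg (not_le.mpr h)
    · rw [← h, hw1A s₁ le_rfl, hA1s₁, hB1s₁]
  have hw2A : ∀ s, s ≤ s₁ → w2 s = A2 s := fun s hs => if_pos hs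
  have hw2B : ∀ s, s₁ ≤ s → w2 s = B2 s := by
    intro s hs
    rcases lt_or_eq_of_le hs with h | h
    · exact if_neg (not_le.mpr h)
    · rw [← h, hw2A s₁ le_rfl, hB2s₁]
  have hw : ∀ s, HasDerivAt w (w1 s) s := by
    intro s
    rcases lt_trichotomy s s₁ with h | h | h
    · have hev : w =ᶠ[nhds s] A := by
        filter_upwards [eventually_lt_nhds h] with y hy
        exact hwA y (le_of_lt hy)
      rw [hw1A s (le_of_lt h)]
      exact (hA s).congr_of_eventuallyEq hev
    · rw [h, hw1A s₁ le_rfl, hA1s₁]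
      have hle : HasDerivWithinAt w 0 (Iic s₁) s₁ := by
        have h2 := (hA s₁).hasDerivWithinAt (s := Iic s₁)
        rw [hA1s₁] at h2
        exact h2.congr (fun y hy => hwA y hy) (hwA s₁ le_rfl)
      have hge : HasDerivWithinAt w 0 (Ici s₁) s₁ := by
        have h2 := (hB s₁).hasDerivWithinAt (s := Ici s₁)
        rw [hB1s₁] at h2
        exact h2.congr (fun y hy => hwB y hy) (hwB s₁ le_rfl)
      have h3 := hle.union hge
      rw [Iic_union_Ici] at h3
      exact hasDerivWithinAt_univ.mp h3
    · have hev : w =ᶠ[nhds s] B := by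
        filter_upwards [eventually_gt_nhds h] with y hy
        exact hwB y (le_of_lt hy)
      rw [hw1B s (le_of_lt h)]
      exact (hB s).congr_of_eventuallyEq hev
  have hw1 : ∀ s, HasDerivAt w1 (w2 s) s := by
    intro s
    rcases lt_trichotomy s s₁ with h | h | h
    · have hev : w1 =ᶠ[nhds s] A1 := by
        filter_upwards [eventually_lt_nhds h] with y hy
        exact hw1A y (le_of_lt hy)
      rw [hw2A s (le_of_lt h)]
      exact (hA1 s).congr_of_eventuallyEq hev
    · rw [h, hw2A s₁ le_rfl]
      have hle : HasDerivWithinAt w1 (A2 s₁) (Iic s₁) s₁ := by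
        have h2 := (hA1 s₁).hasDerivWithinAt (s := Iic s₁)
        exact h2.congr (fun y hy => hw1A y hy) (hw1A s₁ le_rfl)
      have hge : HasDerivWithinAt w1 (A2 s₁) (Ici s₁) s₁ := by
        have h2 := (hB1 s₁).hasDerivWithinAt (s := Ici s₁)
        rw [← hB2s₁] at h2
        exact h2.congr (fun y hy => hw1B y hy) (hw1B s₁ le_rfl)
      have h3 := hle.union hge
      rw [Iic_union_Ici] at h3
      exact hasDerivWithinAt_univ.mp h3
    · have hev : w1 =ᶠ[nhds s] B1 := by
        filter_upwards [eventually_gt_nhds h] with y hy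
        exact hw1B y (le_of_lt hy)
      rw [hw2B s (le_of_lt h)]
      exact (hB1 s).congr_of_eventuallyEq hev
  refine ⟨w, w1, w2, s₂, lt_trans hs₁_pos hs₂_gt, hw, hw1, ?_, ?_, ?_, ?_, ?_⟩
  · rw [hwA 0 (le_of_lt hs₁_pos), hA_def]; simp
  · rw [hwB s₂ (le_of_lt hs₂_gt), hB_def]
    simp only [hqs₂0, mul_zero]
  · intro s hs
    rcases le_or_gt s s₁ with h | h
    · rw [hwA s h]
      rcases lt_or_eq_of_le hs.1 with h0 | h0
      · exact le_of_lt (hA_pos s h0 h)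
      · rw [← h0, hA_def]; simp
    · rw [hwB s (le_of_lt h)]
      rcases lt_or_eq_of_le hs.2 with h0 | h0
      · exact le_of_lt (hB_pos s (le_of_lt h) h0)
      · rw [h0, hB_def]; simp only [hqs₂0, mul_zero]; exact le_refl 0
  · intro s hs
    rcases le_or_gt s s₁ with h | h
    · rw [hwA s h]; exact hA_pos s hs.1 h
    · rw [hwB s (le_of_lt h)]; exact hB_pos s (le_of_lt h) hs.2
  · intro s hs
    rcases le_or_gt s s₁ with h | h
    · rw [hwA s h, hw1A s h, hw2A s h]
      have hA1nn : 0 ≤ A1 s := by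
        rcases lt_or_eq_of_le h with h' | h'
        · have hps := hp_pos s (le_of_lt hs.1) h'
          rw [hA1_def]
          positivity
        · rw [h', hA1s₁]
      rw [abs_of_nonneg hA1nn]
      have hApos := hA_pos s hs.1 h
      have hid : A2 s + N' * A1 s - τ' * A1 s + M' * A s = ε₀ * A s := by
        simp only [hA2_def, hA1_def, hA_def, hp_def, hε₀_def, hγ_def]
        ring
      have := mul_pos hε₀_pos hApos
      linarith [hid]
    · rw [hwB s (le_of_lt h), hw1B s (le_of_lt h), hw2B s (le_of_lt h)]
      have hB1np : B1 s ≤ 0 := hB1_nonpos s (le_of_lt h) (le_of_lt hs.2)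
      rw [abs_of_nonpos hB1np]
      have hBpos := hB_pos s (le_of_lt h) hs.2
      have hid : B2 s + N' * B1 s - τ' * (-B1 s) + M' * B s = ε₀ * B s := by
        simp only [hB2_def]
        rw [hε₀_eq, ha_def]
        ring
      have := mul_pos hε₀_pos hBpos
      linarith [hid]

set_option maxHeartbeats 1600000 in
theorem contact_contradiction {N : ℕ} (hN : 3 ≤ N) (R₀ R₂ : ℝ) (hR₂ : R₀ < R₂) (hR₂0 : 0 < R₂)
    (b c u : EuclideanSpace ℝ (Fin N) → ℝ)
    (hu : ContDiffOn ℝ 2 u {x | R₀ < ‖x‖})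
    (hsuper : ∀ x, R₀ < ‖x‖ → c x * u x ≤ -(lap u x) + b x * ‖gradient u x‖)
    (τ' M' : ℝ) (hτ'0 : 0 ≤ τ') (hM'pos : 0 < M')
    (w w1 w2 : ℝ → ℝ)
    (hw : ∀ s, HasDerivAt w (w1 s) s) (hw1 : ∀ s, HasDerivAt w1 (w2 s) s)
    (x₀ : EuclideanSpace ℝ (Fin N)) (hx₀ : R₂ < ‖x₀‖)
    (hb₀ : ‖x₀‖ * |b x₀| ≤ τ') (hc₀ : M' ≤ ‖x₀‖^2 * c x₀)
    (T : ℝ) (hT : 0 < T)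
    (s₀ : ℝ) (hs₀ : s₀ = Real.log ‖x₀‖ - Real.log R₂)
    (hws₀ : 0 < w s₀)
    (hkey : 0 < w2 s₀ + ((N:ℝ) - 2) * w1 s₀ - τ' * |w1 s₀| + M' * w s₀)
    (hmin : ∀ᶠ y in nhds x₀, 0 ≤ u y - T * w (Real.log ‖y‖ - Real.log R₂))
    (hcontact : u x₀ = T * w s₀) : False := by
  set r : ℝ := ‖x₀‖ with hr_def
  have hr0 : 0 < r := lt_trans hR₂0 hx₀
  have hr2 : (0:ℝ) < r^2 := by positivity
  set Ω : Set (EuclideanSpace ℝ (Fin N)) := {x | R₀ < ‖x‖} with hΩ_def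
  have hΩopen : IsOpen Ω := isOpen_lt continuous_const continuous_norm
  have hx₀Ω : x₀ ∈ Ω := by rw [hΩ_def]; exact lt_trans hR₂ hx₀
  have hudAt : ∀ y ∈ Ω, DifferentiableAt ℝ u y := fun y hy =>
    ((hu.differentiableOn (by norm_num)) y hy).differentiableAt (hΩopen.mem_nhds hy)
  have hfd1 : ContDiffOn ℝ 1 (fderiv ℝ u) Ω := hu.fderiv_of_isOpen hΩopen (by norm_num)
  have hFdAt : DifferentiableAt ℝ (fderiv ℝ u) x₀ :=
    ((hfd1.differentiableOn one_ne_zero) x₀ hx₀Ω).differentiableAt (hΩopen.mem_nhds hx₀Ω)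
  -- eventually near x₀, the norm is > R₂
  have hev0 : ∀ᶠ y in nhds x₀, R₂ < ‖y‖ :=
    (isOpen_lt continuous_const continuous_norm).mem_nhds hx₀
  -- the log of inner
  have hinner_self : (inner ℝ x₀ x₀ : ℝ) = r^2 := real_inner_self_eq_norm_sq x₀
  have hlog_eq : ∀ y : EuclideanSpace ℝ (Fin N), 0 < ‖y‖ →
      2⁻¹ * Real.log ((inner ℝ y y : ℝ)) = Real.log ‖y‖ := by
    intro y hy
    rw [real_inner_self_eq_norm_sq, Real.log_pow]
    push_cast
    ring
  set gfun : EuclideanSpace ℝ (Fin N) → ℝ :=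
    fun x => 2⁻¹ * Real.log ((inner ℝ x x : ℝ)) - Real.log R₂ with hgfun_def
  have hgx₀ : gfun x₀ = s₀ := by
    rw [hgfun_def]
    simp only []
    rw [hlog_eq x₀ hr0, hs₀]
  set Φg : EuclideanSpace ℝ (Fin N) → ℝ := fun x => w (gfun x) with hΦg_def
  -- derivative of gfun at x₀
  set qfun : EuclideanSpace ℝ (Fin N) → ℝ := fun x => (inner ℝ x x : ℝ) with hqfun_def
  have hq₀pos : 0 < qfun x₀ := by rw [hqfun_def]; simp only []; rw [hinner_self]; exact hr2
  have hqfd : HasFDerivAt qfun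
      ((fderivInnerCLM ℝ (x₀, x₀)).comp ((ContinuousLinearMap.id ℝ _).prod
        (ContinuousLinearMap.id ℝ _))) x₀ :=
    (hasFDerivAt_id x₀).inner ℝ (hasFDerivAt_id x₀)
  have hlogfd : HasFDerivAt (fun x => Real.log (qfun x))
      ((qfun x₀)⁻¹ • ((fderivInnerCLM ℝ (x₀, x₀)).comp ((ContinuousLinearMap.id ℝ _).prod
        (ContinuousLinearMap.id ℝ _)))) x₀ :=
    (Real.hasDerivAt_log (ne_of_gt hq₀pos)).comp_hasFDerivAt x₀ hqfd
  have hgfd : HasFDerivAt gfun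
      ((2⁻¹:ℝ) • ((qfun x₀)⁻¹ • ((fderivInnerCLM ℝ (x₀, x₀)).comp
        ((ContinuousLinearMap.id ℝ _).prod (ContinuousLinearMap.id ℝ _))))) x₀ :=
    (hlogfd.const_mul (2⁻¹:ℝ)).sub_const (Real.log R₂)
  have hΦfd : HasFDerivAt Φg ((w1 s₀) • ((2⁻¹:ℝ) • ((qfun x₀)⁻¹ •
      ((fderivInnerCLM ℝ (x₀, x₀)).comp ((ContinuousLinearMap.id ℝ _).prod
        (ContinuousLinearMap.id ℝ _)))))) x₀ := by
    have h1 := (hw (gfun x₀)).comp_hasFDerivAt x₀ hgfd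
    rw [hgx₀] at h1
    exact h1
  have hCLM_eq : ((w1 s₀) • ((2⁻¹:ℝ) • ((qfun x₀)⁻¹ •
      ((fderivInnerCLM ℝ (x₀, x₀)).comp ((ContinuousLinearMap.id ℝ _).prod
        (ContinuousLinearMap.id ℝ _)))))) = (w1 s₀ * (r^2)⁻¹) • innerSL ℝ x₀ := by
    apply ContinuousLinearMap.ext
    intro v
    simp only [ContinuousLinearMap.smul_apply, ContinuousLinearMap.comp_apply,
      ContinuousLinearMap.prod_apply, ContinuousLinearMap.id_apply,
      fderivInnerCLM_apply, innerSL_apply_apply, smul_eq_mul]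
    rw [hqfun_def]
    simp only []
    rw [hinner_self, real_inner_comm v x₀]
    ring
  rw [hCLM_eq] at hΦfd
  -- local min and gradient identity
  have hE0 : u x₀ - T * Φg x₀ = 0 := by
    rw [hΦg_def]
    simp only []
    rw [hgx₀, hcontact]
    ring
  have hElm : IsLocalMin (fun y => u y - T * Φg y) x₀ := by
    rw [IsLocalMin, IsMinFilter]
    simp only [hE0]
    filter_upwards [hmin, hev0] with y h1 h2
    have : gfun y = Real.log ‖y‖ - Real.log R₂ := by
      rw [hgfun_def]
      simp only []
      rw [hlog_eq y (lt_trans hR₂0 h2)]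
    rw [hΦg_def]
    simp only []
    rw [this]
    exact h1
  have hfdzero : fderiv ℝ (fun y => u y - T * Φg y) x₀ = 0 := hElm.fderiv_eq_zero
  have hfdu_eq : fderiv ℝ u x₀ = T • ((w1 s₀ * (r^2)⁻¹) • innerSL ℝ x₀) := by
    have h1 : DifferentiableAt ℝ u x₀ := hudAt x₀ hx₀Ω
    have h2 : DifferentiableAt ℝ Φg x₀ := hΦfd.differentiableAt
    have h3 : fderiv ℝ (fun y => u y - T * Φg y) x₀ =
        fderiv ℝ u x₀ - T • fderiv ℝ Φg x₀ := by
      rw [fderiv_fun_sub h1 (h2.const_mul T), fderiv_const_mul h2]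
    rw [h3] at hfdzero
    rw [hΦfd.fderiv] at hfdzero
    have := sub_eq_zero.mp hfdzero
    exact this
  have hgradnorm : ‖gradient u x₀‖ = T * (|w1 s₀| / r) := by
    have h1 : ‖gradient u x₀‖ = ‖fderiv ℝ u x₀‖ := by
      rw [gradient]
      exact LinearIsometryEquiv.norm_map _ _
    rw [h1, hfdu_eq, norm_smul, norm_smul, innerSL_apply_norm]
    rw [Real.norm_eq_abs, Real.norm_eq_abs, abs_of_pos hT, abs_mul]
    rw [abs_of_pos (inv_pos.mpr hr2)]
    rw [← hr_def]
    field_simp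
  -- per-coordinate second derivative bound
  have hi : ∀ i : Fin N,
      T * (w2 s₀ * (x₀ i / r^2)^2 + w1 s₀ * ((r^2 - 2*(x₀ i)^2)/r^4)) ≤
      fderiv ℝ (fun y => fderiv ℝ u y (EuclideanSpace.single i 1)) x₀
        (EuclideanSpace.single i 1) := by
    intro i
    set e : EuclideanSpace ℝ (Fin N) := EuclideanSpace.single i 1 with he_def
    set xi : ℝ := x₀ i with hxi_def
    set L : ℝ → EuclideanSpace ℝ (Fin N) := fun t => x₀ + t • e with hL_def
    have hL0 : L 0 = x₀ := by rw [hL_def]; simp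
    have hLd : ∀ t : ℝ, HasDerivAt L e t := by
      intro t
      rw [hL_def]
      simpa using (((hasDerivAt_id t).smul_const e).const_add x₀)
    have hLcont : Continuous L := by
      rw [hL_def]; continuity
    have hLt : Filter.Tendsto L (nhds 0) (nhds x₀) := by
      have := hLcont.continuousAt (x := (0:ℝ))
      rwa [ContinuousAt, hL0] at this
    set Q : ℝ → ℝ := fun t => r^2 + 2*xi*t + t^2 with hQ_def
    have hQnorm : ∀ t : ℝ, Q t = ‖L t‖^2 := by
      intro t
      rw [← real_inner_self_eq_norm_sq, hL_def]
      simp only []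
      rw [real_inner_add_add_self, real_inner_smul_right, real_inner_smul_left,
        real_inner_smul_right]
      have h1 : (inner ℝ x₀ x₀ : ℝ) = r^2 := hinner_self
      have h2 : (inner ℝ x₀ e : ℝ) = xi := by
        rw [he_def, EuclideanSpace.inner_single_right]
        simp [hxi_def]
      have h3 : (inner ℝ e e : ℝ) = 1 := by
        rw [real_inner_self_eq_norm_sq, he_def, EuclideanSpace.norm_single]
        norm_num
      rw [h1, h2, h3, hQ_def]
      ring
    have hQd : ∀ t : ℝ, HasDerivAt Q (2*xi + 2*t) t := by
      intro t
      rw [hQ_def]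
      have h1 : HasDerivAt (fun t : ℝ => r^2 + 2*xi*t + t^2) (0 + 2*xi*1 + 2*t) t := by
        apply HasDerivAt.add
        · apply HasDerivAt.add
          · exact hasDerivAt_const t _
          · simpa using ((hasDerivAt_id t).const_mul (2*xi))
        · simpa using ((hasDerivAt_id t).fun_pow 2)
      convert h1 using 1
      ring
    set gl : ℝ → ℝ := fun t => 2⁻¹ * Real.log (Q t) - Real.log R₂ with hgl_def
    set G1 : ℝ → ℝ := fun t => (xi + t)/Q t with hG1_def
    have hgl0 : gl 0 = s₀ := by
      rw [hgl_def]
      simp only []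
      rw [hQ_def]
      simp only []
      have : r^2 + 2*xi*0 + 0^2 = r^2 := by ring
      rw [this, Real.log_pow, hs₀]
      push_cast
      ring
    have hQ0 : Q 0 = r^2 := by rw [hQ_def]; ring
    have hgld : ∀ t : ℝ, 0 < Q t → HasDerivAt gl (G1 t) t := by
      intro t hQt
      have h1 : HasDerivAt (fun t => Real.log (Q t)) ((2*xi+2*t) / Q t) t :=
        (hQd t).log (ne_of_gt hQt)
      have h2 := (h1.const_mul (2⁻¹:ℝ)).sub_const (Real.log R₂)
      refine h2.congr_deriv ?_
      rw [hG1_def]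
      simp only []
      field_simp
    -- apply sd_test
    have hres := sd_test (h := fun t => u (L t) - T * w (gl t))
      (h1 := fun t => fderiv ℝ u (L t) e - T * (w1 (gl t) * G1 t))
      (d := fderiv ℝ (fun y => fderiv ℝ u y e) x₀ e -
        T * (w2 s₀ * (xi / r^2)^2 + w1 s₀ * ((r^2 - 2*xi^2)/r^4)))
      ?_ ?_ ?_ ?_
    · linarith [hres]
    · -- eventual nonnegativity
      filter_upwards [hLt.eventually hmin, hLt.eventually hev0] with t h1 h2
      have hgleq : gl t = Real.log ‖L t‖ - Real.log R₂ := by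
        rw [hgl_def]
        simp only []
        rw [hQnorm t, Real.log_pow]
        push_cast
        ring
      rw [hgleq]
      exact h1
    · -- value zero at 0
      show u (L 0) - T * w (gl 0) = 0
      rw [hL0, hgl0, hcontact]
      ring
    · -- eventual derivative
      filter_upwards [hLt.eventually hev0] with t h2
      have hQt : 0 < Q t := by rw [hQnorm t]; exact pow_pos (lt_trans hR₂0 h2) 2
      have hLtΩ : L t ∈ Ω := by rw [hΩ_def]; exact lt_trans hR₂ h2
      have hd1 : HasDerivAt (fun t => u (L t)) (fderiv ℝ u (L t) e) t :=
        HasFDerivAt.comp_hasDerivAt t ((hudAt (L t) hLtΩ).hasFDerivAt) (hLd t)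
      have hd2 : HasDerivAt (fun t => w (gl t)) (w1 (gl t) * G1 t) t :=
        (hw (gl t)).comp t (hgld t hQt)
      exact hd1.sub (hd2.const_mul T)
    · -- derivative of h1 at 0
      have hQ0pos : 0 < Q 0 := by rw [hQ0]; exact hr2
      -- first part: t ↦ fderiv u (L t) e
      have hGdiff : DifferentiableAt ℝ (fun y => fderiv ℝ u y e) x₀ :=
        hFdAt.clm_apply (differentiableAt_const e)
      have hpart1 : HasDerivAt (fun t => fderiv ℝ u (L t) e)
          (fderiv ℝ (fun y => fderiv ℝ u y e) x₀ e) 0 := by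
        have h9 : HasFDerivAt (fun y => fderiv ℝ u y e)
            (fderiv ℝ (fun y => fderiv ℝ u y e) x₀) (L 0) := by
          rw [hL0]; exact hGdiff.hasFDerivAt
        have h10 := HasFDerivAt.comp_hasDerivAt 0 h9 (hLd 0)
        exact h10
      -- second part
      have hWg : HasDerivAt (fun t => w1 (gl t)) (w2 s₀ * G1 0) 0 := by
        have := (hw1 (gl 0)).comp 0 (hgld 0 hQ0pos)
        rwa [hgl0] at this
      have hG1d : HasDerivAt G1 ((1 * Q 0 - (xi + 0) * (2*xi + 2*0))/(Q 0)^2) 0 := by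
        rw [hG1_def]
        exact (((hasDerivAt_id 0).const_add xi)).div (hQd 0) (ne_of_gt hQ0pos)
      have hpart2 : HasDerivAt (fun t => w1 (gl t) * G1 t)
          (w2 s₀ * (xi / r^2)^2 + w1 s₀ * ((r^2 - 2*xi^2)/r^4)) 0 := by
        have h3 := hWg.mul hG1d
        have hG10 : G1 0 = xi / r^2 := by rw [hG1_def]; simp only []; rw [hQ0]; ring_nf
        rw [hgl0, hG10, hQ0] at h3
        refine h3.congr_deriv ?_
        field_simp
        ring
      exact hpart1.sub (hpart2.const_mul T)
  -- summation
  have hx2 : ∑ i, (x₀ i)^2 = r^2 := by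
    have h1 := EuclideanSpace.norm_eq x₀
    rw [← hr_def] at h1
    have h2 : r^2 = ∑ i, ‖x₀ i‖^2 := by
      rw [h1, Real.sq_sqrt]
      positivity
    rw [h2]
    apply Finset.sum_congr rfl
    intro i _
    rw [Real.norm_eq_abs, sq_abs]
  have hsum : ∑ i, (w2 s₀ * (x₀ i / r^2)^2 + w1 s₀ * ((r^2 - 2*(x₀ i)^2)/r^4)) =
      (w2 s₀ + ((N:ℝ) - 2) * w1 s₀)/r^2 := by
    have h1 : ∀ i : Fin N, w2 s₀ * (x₀ i / r^2)^2 + w1 s₀ * ((r^2 - 2*(x₀ i)^2)/r^4) =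
        ((w2 s₀ - 2 * w1 s₀) * (x₀ i)^2 + w1 s₀ * r^2)/r^4 := by
      intro i
      field_simp
      ring
    rw [Finset.sum_congr rfl (fun i _ => h1 i)]
    rw [← Finset.sum_div, Finset.sum_add_distrib, ← Finset.mul_sum, hx2,
      Finset.sum_const, Finset.card_univ, Fintype.card_fin]
    field_simp
    ring
  have hlap_ge : T * ((w2 s₀ + ((N:ℝ) - 2) * w1 s₀)/r^2) ≤ lap u x₀ := by
    rw [lap, ← hsum, Finset.mul_sum]
    exact Finset.sum_le_sum (fun i _ => hi i)
  -- final contradiction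
  have hsup := hsuper x₀ hx₀Ω
  rw [hcontact, hgradnorm] at hsup
  set J : ℝ := |w1 s₀| with hJ_def
  have hJnn : 0 ≤ J := abs_nonneg _
  have hbb : b x₀ * (T * (J / r)) ≤ τ' * T * J / r^2 := by
    have h5 : b x₀ * (T * (J / r)) ≤ |b x₀| * (T * (J / r)) :=
      mul_le_mul_of_nonneg_right (le_abs_self _) (by positivity)
    have h6 : |b x₀| ≤ τ' / r := by
      rw [le_div_iff₀ hr0]
      calc |b x₀| * r = r * |b x₀| := by ring
        _ ≤ τ' := hb₀
    have h7 : |b x₀| * (T * (J / r)) ≤ (τ'/r) * (T * (J / r)) :=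
      mul_le_mul_of_nonneg_right h6 (by positivity)
    have h8 : (τ'/r) * (T * (J / r)) = τ' * T * J / r^2 := by
      field_simp
    linarith
  have hcc : M' / r^2 ≤ c x₀ := by
    rw [div_le_iff₀ hr2]
    calc M' ≤ ‖x₀‖^2 * c x₀ := hc₀
      _ = c x₀ * r^2 := by rw [← hr_def]; ring
  have hcu : M' / r^2 * (T * w s₀) ≤ c x₀ * (T * w s₀) :=
    mul_le_mul_of_nonneg_right hcc (by positivity)
  -- combine
  have hfinal : M' / r^2 * (T * w s₀) ≤
      -(T * ((w2 s₀ + ((N:ℝ) - 2) * w1 s₀)/r^2)) + τ' * T * J / r^2 := by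
    calc M' / r^2 * (T * w s₀) ≤ c x₀ * (T * w s₀) := hcu
      _ ≤ -(lap u x₀) + b x₀ * (T * (J / r)) := hsup
      _ ≤ -(T * ((w2 s₀ + ((N:ℝ) - 2) * w1 s₀)/r^2)) + τ' * T * J / r^2 := by
          have := hlap_ge
          have := hbb
          linarith
  -- multiply by r^2 / T > 0
  have hexpand : M' / r^2 * (T * w s₀) +
      (T * ((w2 s₀ + ((N:ℝ) - 2) * w1 s₀)/r^2)) - τ' * T * J / r^2 =
      (T / r^2) * (w2 s₀ + ((N:ℝ) - 2) * w1 s₀ - τ' * J + M' * w s₀) := by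
    field_simp
    ring
  have hTr : 0 < T / r^2 := by positivity
  linarith [hfinal, hexpand, mul_pos hTr hkey]

end Aux

set_option maxHeartbeats 1000000 in
theorem stmt_9 {N : ℕ} (hN : 3 ≤ N) (R₀ : ℝ) (hR₀ : 0 < R₀)
    (b c : EuclideanSpace ℝ (Fin N) → ℝ)
    (hb : ContinuousOn b {x | R₀ < ‖x‖}) (hc : ContinuousOn c {x | R₀ < ‖x‖})
    (hpos : ∃ R₂ : ℝ, ∀ x : EuclideanSpace ℝ (Fin N), R₂ < ‖x‖ → 0 < c x - (b x) ^ 2 / 4)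
    (τ : ℝ)
    (hτ : Filter.limsup
        (fun x : EuclideanSpace ℝ (Fin N) => ((‖x‖ * |b x| : ℝ) : EReal))
        (Filter.comap (fun x : EuclideanSpace ℝ (Fin N) => ‖x‖) Filter.atTop) = (τ : EReal))
    (hmain : ((((N : ℝ) - 2 + τ) ^ 2 / 4 : ℝ) : EReal) <
      Filter.liminf
        (fun x : EuclideanSpace ℝ (Fin N) => ((‖x‖ ^ 2 * c x : ℝ) : EReal))
        (Filter.comap (fun x : EuclideanSpace ℝ (Fin N) => ‖x‖) Filter.atTop)) :
    ¬ ∃ u : EuclideanSpace ℝ (Fin N) → ℝ,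
        ContDiffOn ℝ 2 u {x | R₀ < ‖x‖} ∧ (∀ x, R₀ < ‖x‖ → 0 < u x) ∧
          ∀ x, R₀ < ‖x‖ → c x * u x ≤ -(lap u x) + b x * ‖gradient u x‖ := by
  rintro ⟨u, hu, hupos, hsuper⟩
  set F := Filter.comap (fun x : EuclideanSpace ℝ (Fin N) => ‖x‖) Filter.atTop with hF_def
  have hi0 : (0:ℕ) < N := by omega
  let i0 : Fin N := ⟨0, hi0⟩
  have hvec : ∀ r : ℝ, 0 ≤ r → ∃ x : EuclideanSpace ℝ (Fin N), ‖x‖ = r := by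
    intro r hr
    exact ⟨EuclideanSpace.single i0 r, by
      rw [EuclideanSpace.norm_single]; exact abs_of_nonneg hr⟩
  have hFne : F.NeBot := by
    rw [hF_def, Filter.comap_neBot_iff]
    intro t ht
    rw [Filter.mem_atTop_sets] at ht
    obtain ⟨a0, ha0⟩ := ht
    obtain ⟨x, hx⟩ := hvec (max a0 0) (le_max_right _ _)
    exact ⟨x, by rw [hx]; exact ha0 _ (le_max_left _ _)⟩
  -- τ ≥ 0
  have hτ0 : 0 ≤ τ := by
    have h1 : (((0:ℝ)):EReal) ≤ Filter.limsup
        (fun x : EuclideanSpace ℝ (Fin N) => ((‖x‖ * |b x| : ℝ) : EReal)) F := by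
      apply Filter.le_limsup_of_frequently_le _
        (Filter.isBoundedUnder_of ⟨⊤, fun x => le_top⟩)
      apply Filter.Eventually.frequently
      filter_upwards with x
      exact EReal.coe_le_coe_iff.mpr (by positivity)
    rw [hF_def] at h1
    rw [hτ] at h1
    exact EReal.coe_le_coe_iff.mp h1
  -- choose M'
  obtain ⟨ME, hME1, hME2⟩ := exists_between hmain
  have hMEreal : ∃ M' : ℝ, ME = (M' : EReal) := by
    have hne_top : ME ≠ ⊤ := ne_of_lt (lt_of_lt_of_le hME2 le_top)
    have hne_bot : ME ≠ ⊥ := by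
      intro h; rw [h] at hME1; exact absurd hME1 (by simp)
    lift ME to ℝ using ⟨hne_top, hne_bot⟩
    exact ⟨ME, rfl⟩
  obtain ⟨M', rfl⟩ := hMEreal
  have hM'crit : ((N:ℝ) - 2 + τ)^2/4 < M' := EReal.coe_lt_coe_iff.mp hME1
  set C : ℝ := (N:ℝ) - 2 + τ with hC_def
  have hC2 : C^2/4 < M' := hM'crit
  clear_value C
  have hC1 : 1 ≤ C := by
    have : (3:ℝ) ≤ (N:ℝ) := by exact_mod_cast hN
    rw [hC_def]; linarith
  set ε : ℝ := min 1 ((4*M' - C^2)/(2*(2*C+1))) with hε_def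
  have hquad1 : 0 < 4*M' - C^2 := by linarith [hC2]
  have hquad2 : (0:ℝ) < 2*(2*C+1) := by linarith
  have hεpos : 0 < ε := by
    rw [hε_def]
    exact lt_min one_pos (div_pos hquad1 hquad2)
  have hε1 : ε ≤ 1 := min_le_left _ _
  have hε2 : ε ≤ (4*M' - C^2)/(2*(2*C+1)) := min_le_right _ _
  clear_value ε
  have hM'new : (C + ε)^2/4 < M' := by
    have h3 : ε * (2*(2*C+1)) ≤ 4*M' - C^2 := by
      rw [← le_div_iff₀ hquad2]
      exact hε2
    nlinarith [mul_le_mul_of_nonneg_left hε1 (le_of_lt hεpos), hC2]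
  set τ' : ℝ := τ + ε with hτ'_def
  have hτ'0 : 0 ≤ τ' := by rw [hτ'_def]; linarith
  clear_value τ'
  have hM'τ' : ((N:ℝ) - 2 + τ')^2/4 < M' := by
    have : (N:ℝ) - 2 + τ' = C + ε := by rw [hC_def, hτ'_def]; ring
    rw [this]; exact hM'new
  have hM'pos : 0 < M' := by
    have h9 : 0 < C^2 := by positivity
    linarith [hC2]
  -- eventual bounds
  have hev1 : ∀ᶠ x in F, ((M':ℝ):EReal) < ((‖x‖^2*c x :ℝ):EReal) :=
    Filter.eventually_lt_of_lt_liminf hME2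
      (Filter.isBoundedUnder_of ⟨⊥, fun x => bot_le⟩)
  have hev2 : ∀ᶠ x in F, ((‖x‖ * |b x| : ℝ):EReal) < ((τ':ℝ):EReal) := by
    apply Filter.eventually_lt_of_limsup_lt _
      (Filter.isBoundedUnder_of ⟨⊤, fun x => le_top⟩)
    rw [hF_def] at *
    rw [hτ]
    exact EReal.coe_lt_coe_iff.mpr (by rw [hτ'_def]; linarith)
  have hev : ∀ᶠ x in F, ‖x‖ * |b x| ≤ τ' ∧ M' ≤ ‖x‖^2 * c x := by
    filter_upwards [hev1, hev2] with x h1 h2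
    exact ⟨le_of_lt (EReal.coe_lt_coe_iff.mp h2), le_of_lt (EReal.coe_lt_coe_iff.mp h1)⟩
  rw [hF_def, Filter.eventually_comap, Filter.eventually_atTop] at hev
  obtain ⟨R₁, hR₁⟩ := hev
  -- parameters for w
  set N' : ℝ := (N:ℝ) - 2 with hN'_def
  have hN'1 : 1 ≤ N' := by
    have : (3:ℝ) ≤ (N:ℝ) := by exact_mod_cast hN
    rw [hN'_def]; linarith
  obtain ⟨w, w1, w2, s₂, hs₂pos, hw, hw1, hw00, hws₂, hwnn, hwpos, hwkey⟩ :=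
    exists_w N' τ' M' hN'1 hτ'0 hM'τ'
  -- geometric setup
  set R₂ : ℝ := max R₀ R₁ + 1 with hR₂_def
  have hR₂R₀ : R₀ < R₂ := by rw [hR₂_def]; have := le_max_left R₀ R₁; linarith
  have hR₂R₁ : R₁ < R₂ := by rw [hR₂_def]; have := le_max_right R₀ R₁; linarith
  have hR₂0 : 0 < R₂ := lt_trans hR₀ hR₂R₀
  set R₃ : ℝ := R₂ * Real.exp s₂ with hR₃_def
  have hR₃R₂ : R₂ < R₃ := by
    rw [hR₃_def]
    have h1 : 1 < Real.exp s₂ := by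
      rw [← Real.exp_zero]; exact Real.exp_lt_exp.mpr hs₂pos
    calc R₂ = R₂ * 1 := by ring
      _ < R₂ * Real.exp s₂ := by exact (mul_lt_mul_iff_right₀ hR₂0).mpr h1
  have hlogR₃ : Real.log R₃ = Real.log R₂ + s₂ := by
    rw [hR₃_def, Real.log_mul (ne_of_gt hR₂0) (ne_of_gt (Real.exp_pos _)), Real.log_exp]
  set sx : EuclideanSpace ℝ (Fin N) → ℝ :=
    fun x => Real.log (max ‖x‖ R₂) - Real.log R₂ with hsx_def
  set φ : EuclideanSpace ℝ (Fin N) → ℝ := fun x => w (sx x) with hφ_def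
  have hsx_eq : ∀ x : EuclideanSpace ℝ (Fin N), R₂ ≤ ‖x‖ →
      sx x = Real.log ‖x‖ - Real.log R₂ := by
    intro x hx
    rw [hsx_def]
    simp only []
    rw [max_eq_left hx]
  have hw_cont : Continuous w := by
    apply continuous_iff_continuousAt.mpr
    exact fun s => (hw s).differentiableAt.continuousAt
  have hφ_cont : Continuous φ := by
    apply hw_cont.comp
    apply Continuous.sub _ continuous_const
    apply continuous_iff_continuousAt.mpr
    intro x
    apply (Real.continuousAt_log _).comp
    · exact (continuous_norm.max continuous_const).continuousAt
    · have : R₂ ≤ max ‖x‖ R₂ := le_max_right _ _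
      intro h; rw [h] at this; linarith
  set K : Set (EuclideanSpace ℝ (Fin N)) := {x | R₂ ≤ ‖x‖ ∧ ‖x‖ ≤ R₃} with hK_def
  have hKcompact : IsCompact K := by
    have h1 : K = Metric.closedBall 0 R₃ ∩ {x | R₂ ≤ ‖x‖} := by
      ext x
      simp only [hK_def, Set.mem_inter_iff, mem_closedBall_zero_iff, Set.mem_setOf_eq]
      tauto
    rw [h1]
    exact (isCompact_closedBall 0 R₃).inter_right
      (isClosed_le continuous_const continuous_norm)
  have hKΩ : ∀ x ∈ K, R₀ < ‖x‖ := fun x hx => lt_of_lt_of_le hR₂R₀ hx.1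
  have hKbound : ∀ x ∈ K, ‖x‖ * |b x| ≤ τ' ∧ M' ≤ ‖x‖^2 * c x := by
    intro x hx
    exact hR₁ ‖x‖ (le_of_lt (lt_of_lt_of_le hR₂R₁ hx.1)) x rfl
  have hKs : ∀ x ∈ K, sx x ∈ Set.Icc 0 s₂ := by
    intro x hx
    rw [hsx_eq x hx.1]
    constructor
    · have := (Real.log_le_log_iff hR₂0 (lt_of_lt_of_le hR₂0 hx.1)).mpr hx.1
      linarith
    · have h2 := (Real.log_le_log_iff (lt_of_lt_of_le hR₂0 hx.1) (lt_trans hR₂0 hR₃R₂)).mpr hx.2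
      rw [hlogR₃] at h2
      linarith
  have hφnn : ∀ x ∈ K, 0 ≤ φ x := fun x hx => hwnn _ (hKs x hx)
  -- a point with φ > 0
  obtain ⟨xmid, hxmid⟩ := hvec (R₂ * Real.exp (s₂/2)) (by positivity)
  have hxmidK : xmid ∈ K := by
    constructor
    · rw [hxmid]
      have h1 : 1 ≤ Real.exp (s₂/2) := by
        rw [← Real.exp_zero]; exact Real.exp_le_exp.mpr (by linarith)
      have h2 := mul_le_mul_of_nonneg_left h1 (le_of_lt hR₂0)
      linarith
    · rw [hxmid, hR₃_def]
      have h1 := Real.exp_le_exp.mpr (by linarith : s₂/2 ≤ s₂)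
      exact mul_le_mul_of_nonneg_left h1 (le_of_lt hR₂0)
  have hsxmid : sx xmid = s₂/2 := by
    rw [hsx_eq xmid hxmidK.1, hxmid,
      Real.log_mul (ne_of_gt hR₂0) (ne_of_gt (Real.exp_pos _)), Real.log_exp]
    ring
  have hφmid : 0 < φ xmid := by
    rw [hφ_def]
    simp only []
    rw [hsxmid]
    exact hwpos _ ⟨by linarith, by linarith⟩
  have hKne : K.Nonempty := ⟨xmid, hxmidK⟩
  -- min of u, max of φ
  have hucont : ContinuousOn u K := (hu.continuousOn).mono (fun x hx => hKΩ x hx)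
  obtain ⟨xm, hxmK, hxmmin⟩ := hKcompact.exists_isMinOn hKne hucont
  set m₀ : ℝ := u xm with hm₀_def
  have hm₀pos : 0 < m₀ := hupos xm (hKΩ xm hxmK)
  obtain ⟨xP, hxPK, hxPmax⟩ := hKcompact.exists_isMaxOn hKne hφ_cont.continuousOn
  set P : ℝ := φ xP with hP_def
  have hPpos : 0 < P := lt_of_lt_of_le hφmid (hxPmax hxmidK)
  set T₁ : ℝ := u xP / P with hT₁_def
  have hT₁pos : 0 < T₁ := div_pos (hupos xP (hKΩ xP hxPK)) hPpos
  set δ : ℝ := m₀ / (2 * T₁) with hδ_def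
  have hδpos : 0 < δ := div_pos hm₀pos (by linarith)
  have hT₁P : T₁ * P = u xP := by
    rw [hT₁_def]; field_simp
  have hδP : δ < P := by
    have hm₀le : m₀ ≤ u xP := hxmmin hxPK
    have hup : 0 < u xP := hupos xP (hKΩ xP hxPK)
    rw [hδ_def, div_lt_iff₀ (by linarith)]
    have h9 : P * (2 * T₁) = 2 * (T₁ * P) := by ring
    linarith
  set S : Set (EuclideanSpace ℝ (Fin N)) := K ∩ φ ⁻¹' (Set.Ici δ) with hS_def
  have hScompact : IsCompact S :=
    hKcompact.inter_right (IsClosed.preimage hφ_cont isClosed_Ici)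
  have hSne : S.Nonempty := ⟨xP, hxPK, le_of_lt hδP⟩
  have hρcont : ContinuousOn (fun x => u x / φ x) S := by
    apply ContinuousOn.div (hucont.mono (fun x hx => hx.1))
      (hφ_cont.continuousOn.mono (fun x hx => hx.1))
    intro x hx
    have : δ ≤ φ x := hx.2
    linarith
  obtain ⟨x₀, hx₀S, hx₀min⟩ := hScompact.exists_isMinOn hSne hρcont
  set T : ℝ := u x₀ / φ x₀ with hT_def
  have hφx₀pos : 0 < φ x₀ := lt_of_lt_of_le hδpos hx₀S.2
  have hTpos : 0 < T := div_pos (hupos x₀ (hKΩ x₀ hx₀S.1)) hφx₀pos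
  have hTT₁ : T ≤ T₁ := by
    have := hx₀min ⟨hxPK, le_of_lt hδP⟩
    rw [hT_def]
    exact this
  have hTφu : ∀ x ∈ K, T * φ x ≤ u x := by
    intro x hx
    rcases le_or_gt δ (φ x) with h | h
    · have hx' : x ∈ S := ⟨hx, h⟩
      have h2 : T ≤ u x / φ x := hx₀min hx'
      have h3 : 0 < φ x := lt_of_lt_of_le hδpos h
      calc T * φ x ≤ (u x / φ x) * φ x := by
            exact mul_le_mul_of_nonneg_right h2 (le_of_lt h3)
        _ = u x := by field_simp
    · have h1 : T * φ x ≤ T₁ * φ x :=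
        mul_le_mul_of_nonneg_right hTT₁ (hφnn x hx)
      have h2 : T₁ * φ x ≤ T₁ * δ := by
        apply mul_le_mul_of_nonneg_left (le_of_lt h) (le_of_lt hT₁pos)
      have h3 : T₁ * δ = m₀ / 2 := by
        rw [hδ_def]
        field_simp
      have h4 : m₀ ≤ u x := hxmmin hx
      linarith
  have hcontact : u x₀ = T * φ x₀ := by
    rw [hT_def]
    field_simp
  -- x₀ is interior
  have hx₀lt : R₂ < ‖x₀‖ := by
    rcases lt_or_eq_of_le hx₀S.1.1 with h | h
    · exact h
    · exfalso
      have : sx x₀ = 0 := by rw [hsx_eq x₀ (le_of_eq h), ← h]; ring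
      have : φ x₀ = 0 := by rw [hφ_def]; simp only []; rw [this, hw00]
      linarith
  have hx₀lt2 : ‖x₀‖ < R₃ := by
    rcases lt_or_eq_of_le hx₀S.1.2 with h | h
    · exact h
    · exfalso
      have h2 : sx x₀ = s₂ := by rw [hsx_eq x₀ hx₀S.1.1, h, hlogR₃]; ring
      have : φ x₀ = 0 := by rw [hφ_def]; simp only []; rw [h2, hws₂]
      linarith
  set s₀ : ℝ := sx x₀ with hs₀_def
  have hs₀mem : s₀ ∈ Set.Ioo 0 s₂ := by
    constructor
    · rw [hs₀_def, hsx_eq x₀ hx₀S.1.1]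
      have := (Real.log_lt_log_iff hR₂0 (lt_trans hR₂0 hx₀lt)).mpr hx₀lt
      linarith
    · rw [hs₀_def, hsx_eq x₀ hx₀S.1.1]
      have h2 := (Real.log_lt_log_iff (lt_trans hR₂0 hx₀lt) (lt_trans hR₂0 hR₃R₂)).mpr hx₀lt2
      rw [hlogR₃] at h2
      linarith
  -- local min
  have hmin : ∀ᶠ y in nhds x₀, 0 ≤ u y - T * w (Real.log ‖y‖ - Real.log R₂) := by
    have hopen : IsOpen {y : EuclideanSpace ℝ (Fin N) | R₂ < ‖y‖ ∧ ‖y‖ < R₃} := by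
      apply IsOpen.inter
      · exact isOpen_lt continuous_const continuous_norm
      · exact isOpen_lt continuous_norm continuous_const
    filter_upwards [hopen.mem_nhds ⟨hx₀lt, hx₀lt2⟩] with y hy
    have hyK : y ∈ K := ⟨le_of_lt hy.1, le_of_lt hy.2⟩
    have := hTφu y hyK
    rw [hφ_def] at this
    simp only [] at this
    rw [hsx_eq y hyK.1] at this
    linarith
  -- contradiction
  have hs₀eq : s₀ = Real.log ‖x₀‖ - Real.log R₂ := by
    rw [hs₀_def, hsx_eq x₀ hx₀S.1.1]
  have hws₀pos : 0 < w s₀ := hwpos s₀ hs₀mem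
  have hkey := hwkey s₀ hs₀mem
  rw [hN'_def] at hkey
  have hcontact' : u x₀ = T * w s₀ := by
    rw [hcontact, hφ_def]
  exact contact_contradiction hN R₀ R₂ hR₂R₀ hR₂0 b c u hu hsuper τ' M' hτ'0 hM'pos
    w w1 w2 hw hw1 x₀ hx₀lt (hKbound x₀ hx₀S.1).1 (hKbound x₀ hx₀S.1).2
    T hTpos s₀ hs₀eq hws₀pos hkey hmin hcontact'
end

section
/- Let N ≥ 3, R₀ > 0, Ω = {x ∈ ℝ^N : |x| > R₀}, and let c : Ω → ℝ be continuous. If liminf_{|x|→∞} |x|² c(x) > (N−2)²/4, then the inequality −Δu ≥ c(x)u has no positive classical supersolution on Ω, i.e., there is no u ∈ C²(Ω) with u > 0 and −Δu(x) ≥ c(x)u(x) for all x ∈ Ω. -/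
open MeasureTheory Filter

section aux

lemma secondDerivTest {ψ ψd : ℝ → ℝ} {L : ℝ}
    (hmin : IsLocalMin ψ 0)
    (hd : ∀ᶠ t in nhds (0:ℝ), HasDerivAt ψ (ψd t) t)
    (hdd : HasDerivAt ψd L 0) : 0 ≤ L := by
  by_contra hL
  push_neg at hL
  have hψd0 : ψd 0 = 0 := hmin.hasDerivAt_eq_zero hd.self_of_nhds
  have hslope : Tendsto (fun t => ψd t / t) (nhdsWithin 0 {(0:ℝ)}ᶜ) (nhds L) := by
    have h := hasDerivAt_iff_tendsto_slope.1 hdd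
    have : (slope ψd 0) = (fun t => ψd t / t) := by
      funext t; simp [slope_def_field, hψd0]
    rwa [this] at h
  have hneg : ∀ᶠ t in nhdsWithin (0:ℝ) (Set.Ioi 0), ψd t < 0 := by
    have h1 : ∀ᶠ t in nhdsWithin (0:ℝ) {(0:ℝ)}ᶜ, ψd t / t < L / 2 :=
      hslope.eventually_lt_const (by linarith)
    have h2 : ∀ᶠ t in nhdsWithin (0:ℝ) (Set.Ioi 0), ψd t / t < L / 2 :=
      nhdsWithin_mono _ (by intro t ht; exact ne_of_gt ht) h1
    filter_upwards [h2, self_mem_nhdsWithin] with t h ht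
    have ht' : (0:ℝ) < t := ht
    nlinarith [(div_lt_iff₀ ht').1 h]
  rw [eventually_nhdsWithin_iff] at hneg
  obtain ⟨δ₁, hδ₁, hneg⟩ := Metric.eventually_nhds_iff.1 hneg
  obtain ⟨δ₂, hδ₂, hmin'⟩ := Metric.eventually_nhds_iff.1 (hmin.and hd)
  set r := min δ₁ δ₂ / 2 with hr
  have hrpos : 0 < r := by positivity
  have hrδ₁ : r < δ₁ := by
    have h1 := min_le_left δ₁ δ₂; have h2 := min_le_right δ₁ δ₂
    rw [hr]; cases' le_or_gt δ₁ δ₂ with h h <;> simp [min_def] <;> split <;> linarith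
  have hrδ₂ : r < δ₂ := by
    have h1 := min_le_left δ₁ δ₂; have h2 := min_le_right δ₁ δ₂
    rw [hr]; cases' le_or_gt δ₁ δ₂ with h h <;> simp [min_def] <;> split <;> linarith
  have hIcc : ∀ t ∈ Set.Icc (0:ℝ) r, dist t 0 < min δ₁ δ₂ := by
    intro t ht
    rw [Real.dist_eq, sub_zero, abs_of_nonneg ht.1]
    calc t ≤ r := ht.2
    _ < min δ₁ δ₂ := by rw [hr]; linarith [lt_min hδ₁ hδ₂]
  have hanti : StrictAntiOn ψ (Set.Icc (0:ℝ) r) := by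
    apply strictAntiOn_of_deriv_neg (convex_Icc _ _)
    · intro t ht
      have := (hmin' (lt_of_lt_of_le (hIcc t ht) (min_le_right _ _))).2
      exact this.continuousAt.continuousWithinAt
    · intro t ht
      rw [interior_Icc] at ht
      have hd' := (hmin' (lt_of_lt_of_le (hIcc t ⟨le_of_lt ht.1, le_of_lt ht.2⟩) (min_le_right _ _))).2
      rw [hd'.deriv]
      exact hneg (lt_of_lt_of_le (hIcc t ⟨le_of_lt ht.1, le_of_lt ht.2⟩) (min_le_left _ _)) ht.1
  have h1 : ψ r < ψ 0 := hanti (by constructor <;> [rfl; exact le_of_lt hrpos] ) (Set.mem_Icc.2 ⟨le_of_lt hrpos, le_refl r⟩) hrpos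
  have h2 : ψ 0 ≤ ψ r := (hmin' (by rw [Real.dist_eq, sub_zero, abs_of_pos hrpos]; exact hrδ₂)).1
  linarith

lemma lap_nonneg_of_isLocalMin {N : ℕ} {φ : EuclideanSpace ℝ (Fin N) → ℝ}
    {x₀ : EuclideanSpace ℝ (Fin N)} (hφ : ContDiffAt ℝ 2 φ x₀) (hmin : IsLocalMin φ x₀) :
    0 ≤ lap φ x₀ := by
  apply Finset.sum_nonneg
  intro i _
  set v := EuclideanSpace.single i (1:ℝ) with hv
  set γ : ℝ → EuclideanSpace ℝ (Fin N) := fun t => x₀ + t • v with hγ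
  have hγ0 : γ 0 = x₀ := by simp [hγ]
  have hγd : ∀ t : ℝ, HasDerivAt γ v t := by
    intro t
    simpa [hγ] using ((hasDerivAt_id t).smul_const v).const_add x₀
  have hγc : Continuous γ := by continuity
  have hΦ : ContDiffAt ℝ 1 (fderiv ℝ φ) x₀ := hφ.fderiv_right (le_refl 2)
  have hΦd : DifferentiableAt ℝ (fun y => fderiv ℝ φ y v) x₀ :=
    (hΦ.differentiableAt one_ne_zero).clm_apply (differentiableAt_const v)
  have hev : ∀ᶠ y in nhds x₀, DifferentiableAt ℝ φ y := by
    filter_upwards [hφ.eventually (by norm_num)] with y hy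
    exact hy.differentiableAt (by norm_num)
  have hd : ∀ᶠ t in nhds (0:ℝ), HasDerivAt (fun t => φ (γ t)) (fderiv ℝ φ (γ t) v) t := by
    have : Tendsto γ (nhds 0) (nhds x₀) := by
      rw [← hγ0]; exact hγc.continuousAt
    filter_upwards [this.eventually hev] with t ht
    exact ht.hasFDerivAt.comp_hasDerivAt t (hγd t)
  have hmin' : IsLocalMin (fun t => φ (γ t)) 0 := by
    have : Tendsto γ (nhds 0) (nhds x₀) := by
      rw [← hγ0]; exact hγc.continuousAt
    filter_upwards [this.eventually hmin] with t ht
    simpa [hγ0] using ht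
  have hdd : HasDerivAt (fun t => fderiv ℝ φ (γ t) v)
      (fderiv ℝ (fun y => fderiv ℝ φ y v) x₀ v) 0 := by
    have h := (hγ0 ▸ hΦd.hasFDerivAt).comp_hasDerivAt 0 (hγd 0)
    rw [hγ0] at h
    exact h
  exact secondDerivTest hmin' hd hdd

lemma radial_hasFDerivAt {N : ℕ} (F F₁ : ℝ → ℝ)
    (hF : ∀ s, 0 < s → HasDerivAt F (F₁ s) s)
    (y : EuclideanSpace ℝ (Fin N)) (hy : 0 < ‖y‖) :
    HasFDerivAt (fun z : EuclideanSpace ℝ (Fin N) => F (‖z‖^2))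
      (F₁ (‖y‖^2) • (2 • (innerSL ℝ y))) y := by
  have hQ : HasFDerivAt (fun z : EuclideanSpace ℝ (Fin N) => ‖z‖^2)
      (2 • (innerSL ℝ y)) y := by
    simpa using (hasFDerivAt_id y).norm_sq
  exact (hF _ (by positivity)).comp_hasFDerivAt y hQ

lemma radial_fderiv_apply {N : ℕ} (F F₁ : ℝ → ℝ)
    (hF : ∀ s, 0 < s → HasDerivAt F (F₁ s) s)
    (y : EuclideanSpace ℝ (Fin N)) (hy : 0 < ‖y‖) (i : Fin N) :
    fderiv ℝ (fun z : EuclideanSpace ℝ (Fin N) => F (‖z‖^2)) y (EuclideanSpace.single i 1)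
      = F₁ (‖y‖^2) * (2 * y i) := by
  rw [(radial_hasFDerivAt F F₁ hF y hy).fderiv]
  simp [real_inner_comm, EuclideanSpace.inner_single_left, EuclideanSpace.inner_single_right]
  try ring

lemma radial_snd_hasFDerivAt {N : ℕ} (F F₁ F₂ : ℝ → ℝ)
    (hF : ∀ s, 0 < s → HasDerivAt F (F₁ s) s)
    (hF₁ : ∀ s, 0 < s → HasDerivAt F₁ (F₂ s) s)
    (x : EuclideanSpace ℝ (Fin N)) (hx : 0 < ‖x‖) (i : Fin N) :
    (fun y => fderiv ℝ (fun z : EuclideanSpace ℝ (Fin N) => F (‖z‖^2)) y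
        (EuclideanSpace.single i 1))
      =ᶠ[nhds x] (fun y => F₁ (‖y‖^2) * (2 * y i)) ∧
    HasFDerivAt (fun y : EuclideanSpace ℝ (Fin N) => F₁ (‖y‖^2) * (2 * y i))
      (F₁ (‖x‖^2) • ((2:ℝ) • (EuclideanSpace.proj i (𝕜 := ℝ)))
        + (2 * x i) • (F₂ (‖x‖^2) • (2 • (innerSL ℝ x)))) x := by
  constructor
  · have hopen : IsOpen {y : EuclideanSpace ℝ (Fin N) | 0 < ‖y‖} :=
      isOpen_lt continuous_const continuous_norm
    filter_upwards [hopen.mem_nhds hx] with y hy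
    exact radial_fderiv_apply F F₁ hF y hy i
  · have h1 : HasFDerivAt (fun y : EuclideanSpace ℝ (Fin N) => F₁ (‖y‖^2))
        (F₂ (‖x‖^2) • (2 • (innerSL ℝ x))) x := radial_hasFDerivAt F₁ F₂ hF₁ x hx
    have h2 : HasFDerivAt (fun y : EuclideanSpace ℝ (Fin N) => 2 * y i)
        ((2:ℝ) • (EuclideanSpace.proj i (𝕜 := ℝ))) x :=
      ((EuclideanSpace.proj i (𝕜 := ℝ)).hasFDerivAt).const_mul 2
    exact h1.mul h2

lemma radial_snd_diff {N : ℕ} (F F₁ F₂ : ℝ → ℝ)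
    (hF : ∀ s, 0 < s → HasDerivAt F (F₁ s) s)
    (hF₁ : ∀ s, 0 < s → HasDerivAt F₁ (F₂ s) s)
    (x : EuclideanSpace ℝ (Fin N)) (hx : 0 < ‖x‖) (i : Fin N) :
    DifferentiableAt ℝ (fun y => fderiv ℝ (fun z : EuclideanSpace ℝ (Fin N) => F (‖z‖^2)) y
        (EuclideanSpace.single i 1)) x := by
  obtain ⟨hev, hder⟩ := radial_snd_hasFDerivAt F F₁ F₂ hF hF₁ x hx i
  exact (Filter.EventuallyEq.differentiableAt_iff hev).2 hder.differentiableAt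

lemma radial_lap {N : ℕ} (F F₁ F₂ : ℝ → ℝ)
    (hF : ∀ s, 0 < s → HasDerivAt F (F₁ s) s)
    (hF₁ : ∀ s, 0 < s → HasDerivAt F₁ (F₂ s) s)
    (x : EuclideanSpace ℝ (Fin N)) (hx : 0 < ‖x‖) :
    lap (fun z : EuclideanSpace ℝ (Fin N) => F (‖z‖^2)) x
      = 4 * ‖x‖^2 * F₂ (‖x‖^2) + 2 * N * F₁ (‖x‖^2) := by
  have hsum : ∑ i, (x i)^2 = ‖x‖^2 := by
    rw [EuclideanSpace.norm_eq, Real.sq_sqrt (by positivity)]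
    simp [sq_abs]
  have key : ∀ i : Fin N,
      fderiv ℝ (fun y => fderiv ℝ (fun z : EuclideanSpace ℝ (Fin N) => F (‖z‖^2)) y
        (EuclideanSpace.single i 1)) x (EuclideanSpace.single i 1)
      = F₂ (‖x‖^2) * (2 * x i) * (2 * x i) + F₁ (‖x‖^2) * 2 := by
    intro i
    obtain ⟨hev, hder⟩ := radial_snd_hasFDerivAt F F₁ F₂ hF hF₁ x hx i
    rw [hev.fderiv_eq, hder.fderiv]
    simp [real_inner_comm, EuclideanSpace.inner_single_left, EuclideanSpace.inner_single_right]
    ring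
  unfold lap
  rw [Finset.sum_congr rfl (fun i _ => key i)]
  rw [Finset.sum_add_distrib]
  simp only [Finset.sum_const, Finset.card_univ, Fintype.card_fin, nsmul_eq_mul]
  have hterm : ∑ i, F₂ (‖x‖^2) * (2 * x i) * (2 * x i) = 4 * ‖x‖^2 * F₂ (‖x‖^2) := by
    have e1 : ∀ i : Fin N, F₂ (‖x‖^2) * (2 * x i) * (2 * x i) = (4 * F₂ (‖x‖^2)) * (x i)^2 := by
      intro i; ring
    rw [Finset.sum_congr rfl (fun i _ => e1 i), ← Finset.mul_sum, hsum]
    ring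
  rw [hterm]
  ring

lemma lap_sub {N : ℕ} {f g : EuclideanSpace ℝ (Fin N) → ℝ} {x : EuclideanSpace ℝ (Fin N)} (t : ℝ)
    (hf : ∀ᶠ y in nhds x, DifferentiableAt ℝ f y)
    (hg : ∀ᶠ y in nhds x, DifferentiableAt ℝ g y)
    (hf2 : ∀ i : Fin N, DifferentiableAt ℝ
      (fun y => fderiv ℝ f y (EuclideanSpace.single i 1)) x)
    (hg2 : ∀ i : Fin N, DifferentiableAt ℝ
      (fun y => fderiv ℝ g y (EuclideanSpace.single i 1)) x) :
    lap (fun y => f y - t * g y) x = lap f x - t * lap g x := by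
  unfold lap
  rw [Finset.mul_sum, ← Finset.sum_sub_distrib]
  apply Finset.sum_congr rfl
  intro i _
  set v := EuclideanSpace.single i (1:ℝ)
  have hev : (fun y => fderiv ℝ (fun y => f y - t * g y) y v)
      =ᶠ[nhds x] (fun y => fderiv ℝ f y v - t * fderiv ℝ g y v) := by
    filter_upwards [hf, hg] with y hfy hgy
    rw [fderiv_fun_sub hfy (hgy.const_mul t), fderiv_const_mul hgy t]
    simp
  rw [hev.fderiv_eq, fderiv_fun_sub (hf2 i) ((hg2 i).const_mul t), fderiv_const_mul (hg2 i) t]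
  simp [v]

end aux

section onedim
variable (a b t₀ : ℝ)

noncomputable def gg (t : ℝ) : ℝ := Real.exp (a*t) * Real.cos (b*(t - t₀))
noncomputable def gg₁ (t : ℝ) : ℝ :=
  Real.exp (a*t) * (a * Real.cos (b*(t - t₀)) - b * Real.sin (b*(t - t₀)))
noncomputable def gg₂ (t : ℝ) : ℝ :=
  Real.exp (a*t) * ((a^2 - b^2) * Real.cos (b*(t - t₀)) - 2*a*b * Real.sin (b*(t - t₀)))

lemma gg_deriv (t : ℝ) : HasDerivAt (gg a b t₀) (gg₁ a b t₀ t) t := by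
  have h1 : HasDerivAt (fun y : ℝ => Real.exp (a*y)) (Real.exp (a*t) * a) t := by
    simpa using ((hasDerivAt_id t).const_mul a).exp
  have h2 : HasDerivAt (fun y : ℝ => Real.cos (b*(y - t₀)))
      (-Real.sin (b*(t - t₀)) * b) t := by
    simpa using (((hasDerivAt_id t).sub_const t₀).const_mul b).cos
  have := h1.mul h2
  unfold gg gg₁
  exact this.congr_deriv (by ring)

lemma gg₁_deriv (t : ℝ) : HasDerivAt (gg₁ a b t₀) (gg₂ a b t₀ t) t := by
  have h1 : HasDerivAt (fun y : ℝ => Real.exp (a*y)) (Real.exp (a*t) * a) t := by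
    simpa using ((hasDerivAt_id t).const_mul a).exp
  have hcos : HasDerivAt (fun y : ℝ => Real.cos (b*(y - t₀)))
      (-Real.sin (b*(t - t₀)) * b) t := by
    simpa using (((hasDerivAt_id t).sub_const t₀).const_mul b).cos
  have hsin : HasDerivAt (fun y : ℝ => Real.sin (b*(y - t₀)))
      (Real.cos (b*(t - t₀)) * b) t := by
    simpa using (((hasDerivAt_id t).sub_const t₀).const_mul b).sin
  have h2 : HasDerivAt (fun y : ℝ => a * Real.cos (b*(y - t₀)) - b * Real.sin (b*(y - t₀)))
      (a * (-Real.sin (b*(t - t₀)) * b) - b * (Real.cos (b*(t - t₀)) * b)) t :=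
    (hcos.const_mul a).sub (hsin.const_mul b)
  have := h1.mul h2
  unfold gg₁ gg₂
  exact this.congr_deriv (by ring)

noncomputable def FF (s : ℝ) : ℝ := gg a b t₀ (Real.log s)
noncomputable def FF₁ (s : ℝ) : ℝ := gg₁ a b t₀ (Real.log s) / s
noncomputable def FF₂ (s : ℝ) : ℝ := (gg₂ a b t₀ (Real.log s) - gg₁ a b t₀ (Real.log s)) / s^2

lemma FF_deriv {s : ℝ} (hs : 0 < s) : HasDerivAt (FF a b t₀) (FF₁ a b t₀ s) s := by
  have := (gg_deriv a b t₀ (Real.log s)).comp s (Real.hasDerivAt_log (ne_of_gt hs))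
  unfold FF FF₁
  exact this.congr_deriv (by rw [div_eq_mul_inv])

lemma FF₁_deriv {s : ℝ} (hs : 0 < s) : HasDerivAt (FF₁ a b t₀) (FF₂ a b t₀ s) s := by
  have h1 : HasDerivAt (fun s => gg₁ a b t₀ (Real.log s)) (gg₂ a b t₀ (Real.log s) * s⁻¹) s :=
    (gg₁_deriv a b t₀ (Real.log s)).comp s (Real.hasDerivAt_log (ne_of_gt hs))
  have := h1.div (hasDerivAt_id s) (ne_of_gt hs)
  unfold FF₁ FF₂
  exact this.congr_deriv (by simp only [id]; field_simp)

lemma FF_identity {N : ℕ} (ha : a = -(((N:ℝ) - 2)/4)) {s : ℝ} (hs : 0 < s) :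
    4 * s * FF₂ a b t₀ s + 2 * (N:ℝ) * FF₁ a b t₀ s
      = -((((N:ℝ)-2)^2/4 + 4*b^2)) * FF a b t₀ s / s := by
  unfold FF FF₁ FF₂ gg gg₁ gg₂
  have hsne : s ≠ 0 := ne_of_gt hs
  field_simp
  subst ha
  ring

end onedim

set_option maxHeartbeats 1000000 in
theorem stmt_12 {N : ℕ} (hN : 3 ≤ N) (R₀ : ℝ) (hR₀ : 0 < R₀)
    (c : EuclideanSpace ℝ (Fin N) → ℝ) (hc : ContinuousOn c {x | R₀ < ‖x‖})
    (hmain : ((((N : ℝ) - 2) ^ 2 / 4 : ℝ) : EReal) <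
      Filter.liminf
        (fun x : EuclideanSpace ℝ (Fin N) => ((‖x‖ ^ 2 * c x : ℝ) : EReal))
        (Filter.comap (fun x : EuclideanSpace ℝ (Fin N) => ‖x‖) Filter.atTop)) :
    ¬ ∃ u : EuclideanSpace ℝ (Fin N) → ℝ,
        ContDiffOn ℝ 2 u {x | R₀ < ‖x‖} ∧ (∀ x, R₀ < ‖x‖ → 0 < u x) ∧
          ∀ x, R₀ < ‖x‖ → c x * u x ≤ -(lap u x) := by
  rintro ⟨u, hu, hupos, husup⟩
  set lam : ℝ := ((N:ℝ)-2)^2/4 with hlam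
  -- Step 1: extract ε and radius from the liminf hypothesis
  obtain ⟨y, hy1E, hy2⟩ := EReal.lt_iff_exists_real_btwn.1 hmain
  have hy1 : lam < y := by exact_mod_cast hy1E
  have hev : ∀ᶠ x in comap (fun x : EuclideanSpace ℝ (Fin N) => ‖x‖) atTop,
      ((y:ℝ):EReal) < ((‖x‖^2 * c x : ℝ) : EReal) := eventually_lt_of_lt_liminf hy2
  rw [Filter.eventually_comap] at hev
  obtain ⟨R', hR'⟩ := Filter.eventually_atTop.1 hev
  set R₁ : ℝ := max R' R₀ with hR₁
  have hR₁0 : 0 < R₁ := lt_of_lt_of_le hR₀ (le_max_right _ _)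
  have hcR : ∀ x : EuclideanSpace ℝ (Fin N), R₁ + 1 ≤ ‖x‖ → y < ‖x‖^2 * c x := by
    intro x hx
    have h := hR' ‖x‖ (le_trans (le_max_left R' R₀) (by linarith)) x rfl
    exact_mod_cast h
  -- Step 2: constants
  set ε : ℝ := y - lam with hεdef
  have hε : 0 < ε := by simp [hεdef]; linarith
  set b : ℝ := Real.sqrt ε / 4 with hbdef
  have hb : 0 < b := by
    have := Real.sqrt_pos.2 hε
    positivity
  have hb2 : b^2 = ε/16 := by
    rw [hbdef, div_pow, Real.sq_sqrt hε.le]; norm_num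
  set μ : ℝ := lam + 4*b^2 with hμdef
  have hμy : μ < y := by rw [hμdef, hb2]; simp [hεdef]; linarith
  set a : ℝ := -(((N:ℝ) - 2)/4) with hadef
  set T : ℝ := Real.pi/(2*b) with hTdef
  have hT : 0 < T := by
    have := Real.pi_pos
    positivity
  set t₀ : ℝ := T + 2*Real.log (R₁+1) with ht₀def
  set s₁ : ℝ := Real.exp (t₀ - T) with hs₁def
  set s₂ : ℝ := Real.exp (t₀ + T) with hs₂def
  have hs₁pos : 0 < s₁ := Real.exp_pos _
  have hs₁eq : s₁ = (R₁+1)^2 := by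
    rw [hs₁def, ht₀def, show T + 2*Real.log (R₁+1) - T = Real.log (R₁+1) + Real.log (R₁+1) by ring,
      Real.exp_add, Real.exp_log (by linarith)]
    ring
  -- the comparison function w
  set w : EuclideanSpace ℝ (Fin N) → ℝ := fun z => FF a b t₀ (‖z‖^2) with hwdef
  have hFd : ∀ s : ℝ, 0 < s → HasDerivAt (FF a b t₀) (FF₁ a b t₀ s) s :=
    fun s hs => FF_deriv a b t₀ hs
  have hF₁d : ∀ s : ℝ, 0 < s → HasDerivAt (FF₁ a b t₀) (FF₂ a b t₀ s) s :=
    fun s hs => FF₁_deriv a b t₀ hs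
  -- the compact annulus
  set K : Set (EuclideanSpace ℝ (Fin N)) := {x | s₁ ≤ ‖x‖^2 ∧ ‖x‖^2 ≤ s₂} with hKdef
  have hKnorm : ∀ x ∈ K, R₁ + 1 ≤ ‖x‖ := by
    intro x hx
    have h1 : (R₁+1)^2 ≤ ‖x‖^2 := hs₁eq ▸ hx.1
    nlinarith [norm_nonneg x, hR₁0]
  have hKΩ : ∀ x ∈ K, R₀ < ‖x‖ := by
    intro x hx
    have := hKnorm x hx
    have : R₀ ≤ R₁ := le_max_right R' R₀
    linarith [hKnorm x hx]
  have hKpos : ∀ x ∈ K, 0 < ‖x‖ := fun x hx => lt_trans hR₀ (hKΩ x hx)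
  have hKcompact : IsCompact K := by
    have hsub : K ⊆ Metric.closedBall 0 (Real.sqrt s₂) := by
      intro x hx
      rw [Metric.mem_closedBall, dist_zero_right]
      nlinarith [hx.2, Real.sq_sqrt (le_of_lt (Real.exp_pos (t₀+T)) : (0:ℝ) ≤ s₂),
        Real.sqrt_nonneg s₂, norm_nonneg x]
    have hcl : IsClosed K := by
      have : K = (fun x : EuclideanSpace ℝ (Fin N) => ‖x‖^2) ⁻¹' (Set.Icc s₁ s₂) := by
        ext x; simp [hKdef, Set.mem_Icc]
      rw [this]
      exact isClosed_Icc.preimage (continuous_norm.pow 2)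
    exact (isCompact_closedBall 0 _).of_isClosed_subset hcl hsub
  -- sign facts for w
  have hbT : b * T = Real.pi / 2 := by
    rw [hTdef]; field_simp
  have hlog_mem : ∀ x : EuclideanSpace ℝ (Fin N), s₁ ≤ ‖x‖^2 → ‖x‖^2 ≤ s₂ →
      t₀ - T ≤ Real.log (‖x‖^2) ∧ Real.log (‖x‖^2) ≤ t₀ + T := by
    intro x h1 h2
    constructor
    · calc t₀ - T = Real.log s₁ := (Real.log_exp _).symm
      _ ≤ Real.log (‖x‖^2) := Real.log_le_log hs₁pos h1
    · calc Real.log (‖x‖^2) ≤ Real.log s₂ := Real.log_le_log (by linarith) h2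
      _ = t₀ + T := Real.log_exp _
  have hwnonneg : ∀ x ∈ K, 0 ≤ w x := by
    intro x hx
    obtain ⟨h1, h2⟩ := hlog_mem x hx.1 hx.2
    have hcos : 0 ≤ Real.cos (b*(Real.log (‖x‖^2) - t₀)) := by
      apply Real.cos_nonneg_of_mem_Icc
      constructor
      · rw [← hbT]
        have := mul_le_mul_of_nonneg_left
          (show -T ≤ Real.log (‖x‖^2) - t₀ by linarith) hb.le
        linarith
      · rw [← hbT]
        have := mul_le_mul_of_nonneg_left
          (show Real.log (‖x‖^2) - t₀ ≤ T by linarith) hb.le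
        linarith
    rw [hwdef]
    unfold FF gg
    exact mul_nonneg (Real.exp_pos _).le hcos
  have hwpos : ∀ x : EuclideanSpace ℝ (Fin N), s₁ < ‖x‖^2 → ‖x‖^2 < s₂ → 0 < w x := by
    intro x h1 h2
    have hl1 : t₀ - T < Real.log (‖x‖^2) := by
      calc t₀ - T = Real.log s₁ := (Real.log_exp _).symm
      _ < Real.log (‖x‖^2) := Real.log_lt_log hs₁pos h1
    have hl2 : Real.log (‖x‖^2) < t₀ + T := by
      calc Real.log (‖x‖^2) < Real.log s₂ := Real.log_lt_log (lt_trans hs₁pos h1) h2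
      _ = t₀ + T := Real.log_exp _
    have hcos : 0 < Real.cos (b*(Real.log (‖x‖^2) - t₀)) := by
      apply Real.cos_pos_of_mem_Ioo
      constructor
      · rw [← hbT]
        have := mul_lt_mul_of_pos_left
          (show -T < Real.log (‖x‖^2) - t₀ by linarith) hb
        linarith
      · rw [← hbT]
        have := mul_lt_mul_of_pos_left
          (show Real.log (‖x‖^2) - t₀ < T by linarith) hb
        linarith
    rw [hwdef]
    unfold FF gg
    exact mul_pos (Real.exp_pos _) hcos
  have hwzero : ∀ x : EuclideanSpace ℝ (Fin N), (‖x‖^2 = s₁ ∨ ‖x‖^2 = s₂) → w x = 0 := by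
    intro x hx
    rw [hwdef]
    unfold FF gg
    show Real.exp (a * Real.log (‖x‖^2)) * Real.cos (b*(Real.log (‖x‖^2) - t₀)) = 0
    rcases hx with h | h
    · rw [h, hs₁def, Real.log_exp, show b*(t₀ - T - t₀) = -(b*T) by ring, hbT,
        Real.cos_neg, Real.cos_pi_div_two, mul_zero]
    · rw [h, hs₂def, Real.log_exp, show b*(t₀ + T - t₀) = b*T by ring, hbT,
        Real.cos_pi_div_two, mul_zero]
  have hwpos_iff : ∀ x ∈ K, 0 < w x → s₁ < ‖x‖^2 ∧ ‖x‖^2 < s₂ := by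
    intro x hx hw
    constructor
    · rcases lt_or_eq_of_le hx.1 with h | h
      · exact h
      · exfalso; rw [hwzero x (Or.inl h.symm)] at hw; exact lt_irrefl 0 hw
    · rcases lt_or_eq_of_le hx.2 with h | h
      · exact h
      · exfalso; rw [hwzero x (Or.inr h)] at hw; exact lt_irrefl 0 hw
  -- smoothness of w
  have hw_cda : ∀ x : EuclideanSpace ℝ (Fin N), 0 < ‖x‖ → ContDiffAt ℝ 2 w x := by
    intro x hx
    have hgg : ContDiff ℝ 2 (gg a b t₀) := by
      unfold gg
      exact (Real.contDiff_exp.comp (contDiff_const.mul contDiff_id)).mul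
        (Real.contDiff_cos.comp (contDiff_const.mul (contDiff_id.sub contDiff_const)))
    have hnsq : ContDiffAt ℝ 2 (fun z : EuclideanSpace ℝ (Fin N) => ‖z‖^2) x :=
      (contDiff_norm_sq ℝ).contDiffAt
    have hlog : ContDiffAt ℝ 2 Real.log (‖x‖^2) :=
      Real.contDiffAt_log.2 (by positivity)
    have := (hgg.contDiffAt.comp _ hlog).comp x hnsq
    exact this
  have hΩopen : IsOpen {x : EuclideanSpace ℝ (Fin N) | R₀ < ‖x‖} :=
    isOpen_lt continuous_const continuous_norm
  have hw_cont : ContinuousOn w K := fun x hx =>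
    ((hw_cda x (hKpos x hx)).continuousAt).continuousWithinAt
  have hu_cont : ContinuousOn u K := hu.continuousOn.mono (fun x hx => hKΩ x hx)
  -- the base point p
  have hN0 : 0 < N := by omega
  set p : EuclideanSpace ℝ (Fin N) :=
    Real.exp (t₀/2) • EuclideanSpace.single (⟨0, hN0⟩ : Fin N) (1:ℝ) with hpdef
  have hpnorm : ‖p‖^2 = Real.exp t₀ := by
    rw [hpdef, norm_smul, EuclideanSpace.norm_single]
    simp only [norm_one, mul_one, Real.norm_eq_abs, abs_of_pos (Real.exp_pos _)]
    rw [sq, ← Real.exp_add]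
    norm_num
  have hps₁ : s₁ < ‖p‖^2 := by
    rw [hpnorm, hs₁def]; exact Real.exp_lt_exp.2 (by linarith)
  have hps₂ : ‖p‖^2 < s₂ := by
    rw [hpnorm, hs₂def]; exact Real.exp_lt_exp.2 (by linarith)
  have hpK : p ∈ K := ⟨hps₁.le, hps₂.le⟩
  -- maximize w/u on K
  set f : EuclideanSpace ℝ (Fin N) → ℝ := fun x => w x / u x with hfdef
  have hf_cont : ContinuousOn f K :=
    hw_cont.div hu_cont (fun x hx => ne_of_gt (hupos x (hKΩ x hx)))
  obtain ⟨x₀, hx₀K, hx₀max⟩ := hKcompact.exists_isMaxOn ⟨p, hpK⟩ hf_cont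
  have hup : 0 < u p := hupos p (hKΩ p hpK)
  have hwp : 0 < w p := hwpos p hps₁ hps₂
  have hfp : 0 < f p := div_pos hwp hup
  have hfx₀ : 0 < f x₀ := lt_of_lt_of_le hfp (hx₀max hpK)
  have hux₀ : 0 < u x₀ := hupos x₀ (hKΩ x₀ hx₀K)
  have hwx₀ : 0 < w x₀ := by
    by_contra hcon
    push_neg at hcon
    have : f x₀ ≤ 0 := div_nonpos_of_nonpos_of_nonneg hcon hux₀.le
    linarith
  obtain ⟨hx₀1, hx₀2⟩ := hwpos_iff x₀ hx₀K hwx₀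
  set ts : ℝ := u x₀ / w x₀ with htsdef
  have hts : 0 < ts := div_pos hux₀ hwx₀
  have hle : ∀ x ∈ K, ts * w x ≤ u x := by
    intro x hx
    have h := hx₀max hx
    have hux : 0 < u x := hupos x (hKΩ x hx)
    have h' : w x * u x₀ ≤ w x₀ * u x := by
      rw [hfdef] at h
      exact (div_le_div_iff₀ hux hux₀).1 h
    rw [htsdef, div_mul_eq_mul_div, div_le_iff₀ hwx₀]
    linarith
  -- the touching function
  set φ : EuclideanSpace ℝ (Fin N) → ℝ := fun z => u z - ts * w z with hφdef
  have hφx₀ : φ x₀ = 0 := by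
    rw [hφdef, htsdef]
    field_simp
    ring
  have hAopen : IsOpen {z : EuclideanSpace ℝ (Fin N) | s₁ < ‖z‖^2 ∧ ‖z‖^2 < s₂} :=
    (isOpen_lt continuous_const (continuous_norm.pow 2)).inter
      (isOpen_lt (continuous_norm.pow 2) continuous_const)
  have hφmin : IsLocalMin φ x₀ := by
    rw [IsLocalMin, IsMinFilter, hφx₀]
    filter_upwards [hAopen.mem_nhds ⟨hx₀1, hx₀2⟩] with z hz
    have hzK : z ∈ K := ⟨hz.1.le, hz.2.le⟩
    have := hle z hzK
    simp only [hφdef]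
    linarith
  have hx₀Ω : R₀ < ‖x₀‖ := hKΩ x₀ hx₀K
  have hx₀pos : 0 < ‖x₀‖ := hKpos x₀ hx₀K
  have hu_cda : ContDiffAt ℝ 2 u x₀ := hu.contDiffAt (hΩopen.mem_nhds hx₀Ω)
  have hφ_cda : ContDiffAt ℝ 2 φ x₀ :=
    hu_cda.sub (contDiffAt_const.mul (hw_cda x₀ hx₀pos))
  have h0 : 0 ≤ lap φ x₀ := lap_nonneg_of_isLocalMin hφ_cda hφmin
  -- differentiability data
  have hfu_ev : ∀ᶠ z in nhds x₀, DifferentiableAt ℝ u z := by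
    filter_upwards [hΩopen.mem_nhds hx₀Ω] with z hz
    exact (hu.contDiffAt (hΩopen.mem_nhds hz)).differentiableAt (by norm_num)
  have hNopen : IsOpen {z : EuclideanSpace ℝ (Fin N) | 0 < ‖z‖} :=
    isOpen_lt continuous_const continuous_norm
  have hfw_ev : ∀ᶠ z in nhds x₀, DifferentiableAt ℝ w z := by
    filter_upwards [hNopen.mem_nhds hx₀pos] with z hz
    exact (radial_hasFDerivAt (FF a b t₀) (FF₁ a b t₀) hFd z hz).differentiableAt
  have hu2 : ∀ i : Fin N, DifferentiableAt ℝ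
      (fun z => fderiv ℝ u z (EuclideanSpace.single i 1)) x₀ := by
    intro i
    have hΦ : ContDiffAt ℝ 1 (fderiv ℝ u) x₀ := hu_cda.fderiv_right (le_refl 2)
    exact (hΦ.differentiableAt one_ne_zero).clm_apply (differentiableAt_const _)
  have hw2 : ∀ i : Fin N, DifferentiableAt ℝ
      (fun z => fderiv ℝ w z (EuclideanSpace.single i 1)) x₀ :=
    fun i => radial_snd_diff (FF a b t₀) (FF₁ a b t₀) (FF₂ a b t₀) hFd hF₁d x₀ hx₀pos i
  have hlapsub : lap φ x₀ = lap u x₀ - ts * lap w x₀ :=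
    lap_sub ts hfu_ev hfw_ev hu2 hw2
  -- laplacian of w at x₀
  have hq : (0:ℝ) < ‖x₀‖^2 := by positivity
  have hlapw : lap w x₀ = -μ * w x₀ / ‖x₀‖^2 := by
    rw [hwdef]
    rw [radial_lap (FF a b t₀) (FF₁ a b t₀) (FF₂ a b t₀) hFd hF₁d x₀ hx₀pos]
    rw [FF_identity a b t₀ hadef hq]
  -- final contradiction
  have h1 : lap u x₀ ≤ -(c x₀ * u x₀) := by linarith [husup x₀ hx₀Ω]
  have h2 : u x₀ = ts * w x₀ := by
    rw [htsdef]; field_simp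
  have h3 : y < ‖x₀‖^2 * c x₀ := hcR x₀ (hKnorm x₀ hx₀K)
  have hkey : 0 ≤ -(c x₀ * (ts * w x₀)) + ts * (μ * w x₀ / ‖x₀‖^2) := by
    have e1 : ts * lap w x₀ = -(ts * (μ * w x₀ / ‖x₀‖^2)) := by
      rw [hlapw]; ring
    rw [hlapsub, e1] at h0
    rw [← h2]
    linarith
  have hmul : (-(c x₀ * (ts * w x₀)) + ts * (μ * w x₀ / ‖x₀‖^2)) * ‖x₀‖^2
      = ts * w x₀ * (μ - ‖x₀‖^2 * c x₀) := by
    field_simp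
    ring
  have hfinal : 0 ≤ ts * w x₀ * (μ - ‖x₀‖^2 * c x₀) := by
    rw [← hmul]
    exact mul_nonneg hkey hq.le
  exact absurd hfinal (not_le.2 (mul_neg_of_pos_of_neg (mul_pos hts hwx₀) (by linarith)))
end
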